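/- arXiv:0911.3604 — 7 statements merged into one kernel-verified Lean document; each statement's English description precedes it below -/
import Mathlib

section
/- The number of ways to factor an n-cycle in the symmetric group S_n into a product of two involutions is exactly n. That is, if π is an n-cycle, the number of pairs (σ, τ) of involutions with π = τ ∘ σ equals n. -/
open Equiv

lemma aux_semiconj {G : Type*} [Group G] {σ τ π : G} (hσ : σ * σ = 1) (hτ : τ * τ = 1)
    (hfact : π = τ * σ) : SemiconjBy σ π π⁻¹ := by
  have hσ' : σ⁻¹ = σ := inv_eq_of_mul_eq_one_left hσ
  have hτ' : τ⁻¹ = τ := inv_eq_of_mul_eq_one_left hτ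
  subst hfact
  show σ * (τ * σ) = (τ * σ)⁻¹ * σ
  rw [mul_inv_rev, hσ', hτ', mul_assoc]

/-- The number of factorizations of an `n`-cycle into two involutions is `n`. -/
theorem cycle_factorizations_into_involutions (n : ℕ) (hn : 1 ≤ n)
    (π : Equiv.Perm (Fin n)) (hπ : π.IsCycleOn (Set.univ : Set (Fin n))) :
    Nat.card {p : Equiv.Perm (Fin n) × Equiv.Perm (Fin n) //
      p.1 * p.1 = 1 ∧ p.2 * p.2 = 1 ∧ π = p.2 * p.1} = n := by
  haveI : NeZero n := ⟨by omega⟩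
  have hπ' : π.IsCycleOn (↑(Finset.univ : Finset (Fin n))) := by
    rw [Finset.coe_univ]; exact hπ
  have hcard : (Finset.univ : Finset (Fin n)).card = n := by simp
  set a : Fin n := ⟨0, hn⟩ with ha
  -- π ^ n = 1
  have hπn : π ^ n = 1 :=
    Equiv.ext fun x => (hπ'.pow_apply_eq (Finset.mem_univ x)).2 (by rw [hcard])
  have hmod : ∀ m : ℕ, π ^ (m % n) = π ^ m := by
    intro m
    conv_rhs => rw [← Nat.div_add_mod m n]
    rw [pow_add, pow_mul, hπn, one_pow, one_mul]
  -- construct the reversal involution ρ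
  obtain ⟨ρ, hρρ, hρsc, hρa⟩ :
      ∃ ρ : Perm (Fin n), ρ * ρ = 1 ∧ SemiconjBy ρ π π⁻¹ ∧ ρ a = a := by
    have hFinj : Function.Injective (fun k : Fin n => (π ^ (k : ℕ)) a) := by
      intro k l h
      have := (hπ'.pow_apply_eq_pow_apply (Finset.mem_univ a)).1 h
      rw [hcard] at this
      exact Fin.ext (Nat.ModEq.eq_of_lt_of_lt this k.isLt l.isLt)
    have hFbij : Function.Bijective (fun k : Fin n => (π ^ (k : ℕ)) a) :=
      Finite.injective_iff_bijective.1 hFinj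
    let Fp : Perm (Fin n) := Equiv.ofBijective _ hFbij
    have hFpapp : ∀ k : Fin n, Fp k = (π ^ (k : ℕ)) a := fun k => rfl
    have hFadd : ∀ k : Fin n, Fp (k + 1) = π (Fp k) := by
      intro k
      rw [hFpapp, hFpapp]
      have h1 : ((k + 1 : Fin n) : ℕ) = ((k : ℕ) + 1) % n := by
        rw [Fin.val_add, Fin.val_one']
        conv_rhs => rw [Nat.add_mod]
        rw [Nat.mod_eq_of_lt k.isLt]
      rw [h1, hmod, pow_succ', Perm.mul_apply]
    let N : Perm (Fin n) := Equiv.neg (Fin n)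
    refine ⟨Fp * N * Fp⁻¹, ?_, ?_, ?_⟩
    · refine Equiv.ext fun x => ?_
      obtain ⟨k, rfl⟩ := hFbij.surjective x
      simp [Perm.mul_apply, N, Equiv.neg_apply]
    · refine Equiv.ext fun x => ?_
      obtain ⟨k, rfl⟩ := hFbij.surjective x
      simp only [Perm.mul_apply]
      have e1 : π ((fun k : Fin n => (π ^ (k : ℕ)) a) k) = Fp (k + 1) := (hFadd k).symm
      rw [e1]
      have e2 : ∀ l : Fin n, (Fp * N * Fp⁻¹ : Perm (Fin n)) (Fp l) = Fp (-l) := by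
        intro l; simp [Perm.mul_apply, N, Equiv.neg_apply]
      have e2' : Fp⁻¹ (Fp (k+1)) = k + 1 := Equiv.symm_apply_apply _ _
      rw [e2', show N (k + 1) = -(k+1) from rfl]
      have e3 : π⁻¹ (Fp (-k)) = Fp (-k - 1) := by
        have : π (Fp (-k - 1)) = Fp (-k) := by rw [← hFadd, sub_add_cancel]
        rw [← this, Perm.inv_def, Equiv.symm_apply_apply]
      have e4 : Fp⁻¹ ((fun k : Fin n => (π ^ (k : ℕ)) a) k) = k := Equiv.symm_apply_apply _ _
      rw [e4, show N k = -k from rfl, e3]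
      show Fp (-(k + 1)) = Fp (-k - 1)
      congr 1
      exact neg_add' _ _
    · have h0 : Fp 0 = a := by rw [hFpapp]; simp
      conv_lhs => rw [← h0]
      simp only [Perm.mul_apply, Perm.inv_def, Equiv.symm_apply_apply]
      rw [show N (0 : Fin n) = 0 by simp [N], h0]
  -- key involution fact
  have hscpow : ∀ m : ℕ, ρ * π ^ m = (π ^ m)⁻¹ * ρ := by
    intro m
    have := hρsc.pow_right m
    rwa [inv_pow] at this
  have key : ∀ m : ℕ, (π ^ m * ρ) * (π ^ m * ρ) = 1 := by
    intro m
    rw [mul_assoc (π ^ m) ρ, ← mul_assoc ρ (π ^ m) ρ, hscpow m,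
      mul_assoc ((π ^ m)⁻¹) ρ ρ, hρρ, mul_one, mul_inv_cancel]
  -- the bijection with Fin n
  have Φinj : Function.Injective
      (fun p : {p : Equiv.Perm (Fin n) × Equiv.Perm (Fin n) //
        p.1 * p.1 = 1 ∧ p.2 * p.2 = 1 ∧ π = p.2 * p.1} => p.1.1 a) := by
    rintro ⟨⟨σ₁, τ₁⟩, h1, h2, h3⟩ ⟨⟨σ₂, τ₂⟩, g1, g2, g3⟩ h
    simp only at h
    have hσ : σ₁ = σ₂ := by
      ext x
      obtain ⟨k, -, rfl⟩ := hπ'.exists_pow_eq (Finset.mem_univ a) (Finset.mem_univ x)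
      have hp : σ₁ * π ^ k = (π⁻¹) ^ k * σ₁ := (aux_semiconj h1 h2 h3).pow_right k
      have hq : σ₂ * π ^ k = (π⁻¹) ^ k * σ₂ := (aux_semiconj g1 g2 g3).pow_right k
      have hp' : σ₁ ((π ^ k) a) = ((π⁻¹) ^ k) (σ₁ a) := by
        have := congrArg (fun σ : Perm (Fin n) => σ a) hp
        simpa [Perm.mul_apply] using this
      have hq' : σ₂ ((π ^ k) a) = ((π⁻¹) ^ k) (σ₂ a) := by
        have := congrArg (fun σ : Perm (Fin n) => σ a) hq
        simpa [Perm.mul_apply] using this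
      rw [hp', hq', h]
    have hτ : τ₁ = τ₂ := by
      have e1 : τ₁ = π * σ₁⁻¹ := by rw [h3, mul_inv_cancel_right]
      have e2 : τ₂ = π * σ₂⁻¹ := by rw [g3, mul_inv_cancel_right]
      rw [e1, e2, hσ]
    simp [hσ, hτ]
  have Φsurj : Function.Surjective
      (fun p : {p : Equiv.Perm (Fin n) × Equiv.Perm (Fin n) //
        p.1 * p.1 = 1 ∧ p.2 * p.2 = 1 ∧ π = p.2 * p.1} => p.1.1 a) := by
    intro b
    obtain ⟨j, -, hj⟩ := hπ'.exists_pow_eq (Finset.mem_univ a) (Finset.mem_univ b)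
    refine ⟨⟨(π ^ j * ρ, π ^ (j + 1) * ρ), key j, key (j + 1), ?_⟩, ?_⟩
    · rw [mul_assoc (π ^ (j + 1)) ρ, ← mul_assoc ρ (π ^ j) ρ, hscpow j,
        mul_assoc ((π ^ j)⁻¹) ρ ρ, hρρ, mul_one, pow_succ', mul_assoc,
        mul_inv_cancel, mul_one]
    · show (π ^ j * ρ) a = b
      rw [Perm.mul_apply, hρa, hj]
  rw [Nat.card_congr (Equiv.ofBijective _ ⟨Φinj, Φsurj⟩)]
  simp
end

section
/- Let π be a permutation of a set of size 2n consisting of exactly two disjoint n-cycles. The number of factorizations π = τ ∘ σ into involutions σ, τ such that the union of the matchings of σ and τ forms a single connected graph (a 2n-cycle) is exactly n. -/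
open Equiv

/-- The superposition graph of two involutions: `x` and `y` are adjacent if one of the
involutions matches them. -/
def superGraph {α : Type*} (σ τ : Equiv.Perm α) : SimpleGraph α :=
  SimpleGraph.fromRel (fun x y => σ x = y ∨ τ x = y)

namespace TwoCycleAux

open Equiv.Perm

variable {α : Type*} [Fintype α] [DecidableEq α]

lemma eq_of_sameCycle_fixed {π : Equiv.Perm α} {x y : α} (hx : π x = x)
    (h : π.SameCycle x y) : y = x := by
  obtain ⟨i, hi⟩ := h
  rw [Equiv.Perm.zpow_apply_eq_self_of_apply_eq_self hx] at hi
  exact hi.symm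

lemma zpow_fixed_iff_dvd (π : Equiv.Perm α) {x : α} (hx : π x ≠ x) (m : ℤ) :
    (π ^ m) x = x ↔ (((π.cycleOf x).support.card : ℤ)) ∣ m := by
  have hcyc : (π.cycleOf x).IsCycle := Equiv.Perm.isCycle_cycleOf π hx
  have hcx : (π.cycleOf x) x ≠ x := by
    rwa [Equiv.Perm.SameCycle.rfl.cycleOf_apply]
  have h1 : (π ^ m) x = ((π.cycleOf x) ^ m) x := (π.cycleOf_zpow_apply_self x m).symm
  have hcard : ((π.cycleOf x).support.card : ℤ) = (orderOf (π.cycleOf x) : ℤ) := by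
    rw [hcyc.orderOf]
  rw [h1, hcard]
  set c := π.cycleOf x
  have hord : 0 < orderOf c := orderOf_pos c
  have h2 : c ^ m = c ^ ((m % (orderOf c : ℤ)).toNat) := by
    rw [← zpow_natCast, Int.toNat_of_nonneg
      (Int.emod_nonneg _ (by exact_mod_cast hord.ne')), zpow_mod_orderOf]
  constructor
  · intro h
    rw [orderOf_dvd_iff_zpow_eq_one, h2]
    rw [h2] at h
    exact (hcyc.pow_eq_one_iff' hcx).2 h
  · intro h
    rw [orderOf_dvd_iff_zpow_eq_one] at h
    rw [h, Equiv.Perm.one_apply]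

lemma sameCycle_setOf_eq (π : Equiv.Perm α) {x : α} (hx : π x ≠ x) :
    {y | π.SameCycle x y} = ↑(π.cycleOf x).support := by
  ext y
  rw [Set.mem_setOf_eq, Finset.mem_coe, Equiv.Perm.mem_support_cycleOf_iff]
  simp [Equiv.Perm.mem_support, hx]

lemma walk_closed {V : Type*} {G : SimpleGraph V} {P : V → Prop}
    (hP : ∀ x y, P x → G.Adj x y → P y) :
    ∀ {x y : V} (_ : G.Walk x y), P x → P y := by
  intro x y w
  induction w with
  | nil => exact id
  | cons h p ih => exact fun hx => ih (hP _ _ hx h)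

lemma reach_zpow {V : Type*} {G : SimpleGraph V} (π : Equiv.Perm V)
    (hstep : ∀ x, G.Reachable x (π x)) (x : V) (i : ℤ) : G.Reachable x ((π ^ i) x) := by
  induction i using Int.induction_on with
  | zero => simpa using SimpleGraph.Reachable.refl x
  | succ k ih =>
      have h2 : (π ^ ((k : ℤ) + 1)) x = π ((π ^ (k : ℤ)) x) := by
        rw [add_comm, zpow_add, zpow_one, Equiv.Perm.mul_apply]
      rw [h2]
      exact ih.trans (hstep _)
  | pred k ih =>
      have h2 : π ((π ^ (-(k : ℤ) - 1)) x) = (π ^ (-(k : ℤ))) x := by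
        rw [← Equiv.Perm.mul_apply, ← zpow_one_add]
        norm_num
      have h3 := hstep ((π ^ (-(k : ℤ) - 1)) x)
      rw [h2] at h3
      exact ih.trans h3.symm

end TwoCycleAux

open TwoCycleAux in
/-- If `π` is a permutation of a `2n`-element set consisting of exactly two disjoint
`n`-cycles, then the number of factorizations `π = τ ∘ σ` into involutions `σ, τ` whose
superposition graph is a single connected `2n`-cycle is exactly `n`. -/
theorem two_cycle_factorizations_with_connected_superposition (n : ℕ) (hn : 1 ≤ n)
    (π : Equiv.Perm (Fin (2 * n))) (a b : Fin (2 * n))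
    (hab : ¬ π.SameCycle a b)
    (hcover : ∀ z, π.SameCycle a z ∨ π.SameCycle b z)
    (ha : Set.ncard {z | π.SameCycle a z} = n)
    (hb : Set.ncard {z | π.SameCycle b z} = n) :
    Nat.card {p : Equiv.Perm (Fin (2 * n)) × Equiv.Perm (Fin (2 * n)) //
      p.1 * p.1 = 1 ∧ p.2 * p.2 = 1 ∧ π = p.2 * p.1 ∧
      (superGraph p.1 p.2).Connected} = n := by
  classical
  have hdisj : ∀ x, π.SameCycle a x → π.SameCycle b x → False :=
    fun x h1 h2 => hab (h1.trans h2.symm)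
  -- the key lemma: powers fix `a` iff they fix any point of the cycle of `b`
  have hkey : ∀ z, π.SameCycle b z → ∀ m : ℤ, ((π ^ m) a = a ↔ (π ^ m) z = z) := by
    intro z hz m
    by_cases hpa : π a = a
    · have hA : {y | π.SameCycle a y} = {a} := by
        ext y
        simp only [Set.mem_setOf_eq, Set.mem_singleton_iff]
        exact ⟨fun h => eq_of_sameCycle_fixed hpa h,
          fun h => h ▸ Equiv.Perm.SameCycle.refl _ _⟩
      have hn1 : (1 : ℕ) = n := by rw [← ha, hA, Set.ncard_singleton]
      have hBcard : Set.ncard {y | π.SameCycle b y} = 1 := by rw [hb, ← hn1]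
      obtain ⟨c, hc⟩ := Set.ncard_eq_one.mp hBcard
      have hbB : b ∈ {y | π.SameCycle b y} := Equiv.Perm.SameCycle.refl _ _
      rw [hc] at hbB
      have hpbB : π b ∈ {y | π.SameCycle b y} := ⟨1, by simp⟩
      rw [hc] at hpbB
      have hpb : π b = b := by rw [hpbB, ← hbB]
      have hz' : z = b := eq_of_sameCycle_fixed hpb hz
      simp [Equiv.Perm.zpow_apply_eq_self_of_apply_eq_self hpa,
        Equiv.Perm.zpow_apply_eq_self_of_apply_eq_self hpb, hz']
    · have hpb : π b ≠ b := by
        intro hpb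
        have hB : {y | π.SameCycle b y} = {b} := by
          ext y
          simp only [Set.mem_setOf_eq, Set.mem_singleton_iff]
          exact ⟨fun h => eq_of_sameCycle_fixed hpb h,
            fun h => h ▸ Equiv.Perm.SameCycle.refl _ _⟩
        have hn1 : n = 1 := by rw [← hb, hB, Set.ncard_singleton]
        have hsub : {a, π a} ⊆ {y | π.SameCycle a y} := by
          intro y hy
          rcases hy with rfl | hy
          · exact Equiv.Perm.SameCycle.refl _ _
          · rw [Set.mem_singleton_iff] at hy
            exact hy ▸ ⟨1, by simp⟩
        have h2 : 2 ≤ Set.ncard {y | π.SameCycle a y} := by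
          have h3 := Set.ncard_le_ncard hsub (Set.toFinite _)
          rwa [Set.ncard_pair (Ne.symm hpa)] at h3
        rw [ha, hn1] at h2
        omega
      have hpz : π z ≠ z := by
        intro hpzz
        have : b = z := eq_of_sameCycle_fixed hpzz hz.symm
        rw [this] at hpb
        exact hpb hpzz
      have hcardA : (π.cycleOf a).support.card = n := by
        rw [← Set.ncard_coe_finset, ← sameCycle_setOf_eq π hpa, ha]
      have hBz : {y | π.SameCycle b y} = {y | π.SameCycle z y} := by
        ext y
        exact ⟨fun h => hz.symm.trans h, fun h => hz.trans h⟩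
      have hcardZ : (π.cycleOf z).support.card = n := by
        rw [← Set.ncard_coe_finset, ← sameCycle_setOf_eq π hpz, ← hBz, hb]
      rw [zpow_fixed_iff_dvd π hpa, zpow_fixed_iff_dvd π hpz, hcardA, hcardZ]
  -- two-exponent version of the key lemma
  have hkey' : ∀ z, π.SameCycle b z → ∀ i j : ℤ,
      ((π ^ i) a = (π ^ j) a ↔ (π ^ i) z = (π ^ j) z) := by
    intro z hz i j
    have e1 : ∀ (w : Fin (2 * n)), ((π ^ i) w = (π ^ j) w ↔ (π ^ (i - j)) w = w) := by
      intro w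
      constructor
      · intro h
        have : (π ^ (i - j)) ((π ^ j) w) = (π ^ j) w := by
          rw [← Equiv.Perm.mul_apply, ← zpow_add, sub_add_cancel, h]
        have h2 : (π ^ (i - j)) ((π ^ j) w) = (π ^ j) ((π ^ (i - j)) w) := by
          rw [← Equiv.Perm.mul_apply, ← Equiv.Perm.mul_apply, ← zpow_add, ← zpow_add,
            add_comm]
        rw [h2] at this
        exact (π ^ j).injective this
      · intro h
        have : (π ^ j) ((π ^ (i - j)) w) = (π ^ j) w := by rw [h]
        rwa [← Equiv.Perm.mul_apply, ← zpow_add, add_sub_cancel] at this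
    rw [e1 a, e1 z]
    exact hkey z hz (i - j)
  -- shifting exponents
  have hshift : ∀ (k i j : ℤ) (w : Fin (2 * n)),
      (π ^ i) w = (π ^ j) w → (π ^ (k + i)) w = (π ^ (k + j)) w := by
    intro k i j w h
    rw [zpow_add, zpow_add, Equiv.Perm.mul_apply, Equiv.Perm.mul_apply, h]
  -- basic consequences of being a factorization into involutions
  have hfact : ∀ σ τ : Equiv.Perm (Fin (2 * n)), σ * σ = 1 → τ * τ = 1 → π = τ * σ →
      (τ = π * σ ∧ ∀ (i : ℤ) (x : Fin (2 * n)), σ ((π ^ i) x) = (π ^ (-i)) (σ x)) := by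
    intro σ τ hσ hτ hfac
    have hτeq : τ = π * σ := by rw [hfac, mul_assoc, hσ, mul_one]
    have hσinv : σ⁻¹ = σ := inv_eq_of_mul_eq_one_right hσ
    have hconj : σ * π * σ = π⁻¹ := by
      have h1 : (π * σ) * (π * σ) = 1 := by rw [← hτeq]; exact hτ
      have h2 : π * (σ * π * σ) = 1 := by
        rw [show π * (σ * π * σ) = (π * σ) * (π * σ) by group]
        exact h1
      exact (inv_eq_of_mul_eq_one_right h2).symm
    have hconj' : ∀ i : ℤ, σ * π ^ i * σ = π ^ (-i) := by
      intro i
      have h3 : σ * π ^ i * σ⁻¹ = (σ * π * σ⁻¹) ^ i := conj_zpow.symm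
      rw [hσinv, hconj] at h3
      rw [h3, inv_zpow, zpow_neg]
    refine ⟨hτeq, fun i x => ?_⟩
    have h3 : σ * π ^ i = π ^ (-i) * σ := by
      have h4 := hconj' i
      calc σ * π ^ i = σ * π ^ i * σ * σ := by rw [mul_assoc (σ * π ^ i), hσ, mul_one]
      _ = π ^ (-i) * σ := by rw [h4]
    have h5 := DFunLike.congr_fun h3 x
    simpa [Equiv.Perm.mul_apply] using h5
  -- disconnectedness when σ preserves the cycle of a
  have hdisc : ∀ σ τ : Equiv.Perm (Fin (2 * n)), σ * σ = 1 → τ * τ = 1 → π = τ * σ →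
      π.SameCycle a (σ a) → ¬ (superGraph σ τ).Connected := by
    intro σ τ hσ hτ hfac hsa hconn
    obtain ⟨hτeq, hcomm⟩ := hfact σ τ hσ hτ hfac
    have hσσ : ∀ x, σ (σ x) = x := fun x => by
      rw [← Equiv.Perm.mul_apply, hσ, Equiv.Perm.one_apply]
    have hττ : ∀ x, τ (τ x) = x := fun x => by
      rw [← Equiv.Perm.mul_apply, hτ, Equiv.Perm.one_apply]
    have hA : ∀ x, π.SameCycle a x → π.SameCycle a (σ x) := by
      intro x hx
      obtain ⟨i, hi⟩ := hx
      have h1 : σ x = (π ^ (-i)) (σ a) := by rw [← hi, hcomm]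
      rw [h1]
      exact hsa.trans ⟨-i, rfl⟩
    have hA' : ∀ x, π.SameCycle a x → π.SameCycle a (τ x) := by
      intro x hx
      have h1 : τ x = π (σ x) := by rw [hτeq, Equiv.Perm.mul_apply]
      rw [h1]
      exact (hA x hx).trans ⟨1, by simp⟩
    have hclosed : ∀ x y, π.SameCycle a x → (superGraph σ τ).Adj x y → π.SameCycle a y := by
      intro x y hx hxy
      rw [superGraph, SimpleGraph.fromRel_adj] at hxy
      obtain ⟨hne, h | h⟩ := hxy
      · rcases h with h | h
        · rw [← h]; exact hA x hx
        · rw [← h]; exact hA' x hx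
      · rcases h with h | h
        · have h2 : σ x = y := by rw [← h, hσσ]
          rw [← h2]; exact hA x hx
        · have h2 : τ x = y := by rw [← h, hττ]
          rw [← h2]; exact hA' x hx
    obtain ⟨w⟩ := hconn.preconnected a b
    exact hab (walk_closed hclosed w (Equiv.Perm.SameCycle.refl _ _))
  -- connectedness when σ maps a into the cycle of b
  have hconnl : ∀ σ : Equiv.Perm (Fin (2 * n)), σ * σ = 1 →
      (∀ (i : ℤ) (x : Fin (2 * n)), σ ((π ^ i) x) = (π ^ (-i)) (σ x)) →
      π.SameCycle b (σ a) → (superGraph σ (π * σ)).Connected := by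
    intro σ hσ hcomm hba
    have hσσ : ∀ x, σ (σ x) = x := fun x => by
      rw [← Equiv.Perm.mul_apply, hσ, Equiv.Perm.one_apply]
    have hswapA : ∀ x, π.SameCycle a x → π.SameCycle b (σ x) := by
      intro x hx
      obtain ⟨i, hi⟩ := hx
      have h1 : σ x = (π ^ (-i)) (σ a) := by rw [← hi, hcomm]
      rw [h1]
      exact hba.trans ⟨-i, rfl⟩
    have hswapB : ∀ x, π.SameCycle b x → π.SameCycle a (σ x) := by
      intro x hx
      obtain ⟨i, hi⟩ := hba.symm.trans hx
      have h1 : σ x = (π ^ (-i)) (σ (σ a)) := by rw [← hi, hcomm]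
      rw [h1, hσσ]
      exact ⟨-i, rfl⟩
    have hne : ∀ x, σ x ≠ x := by
      intro x hx
      rcases hcover x with h | h
      · have h1 := hswapA x h
        rw [hx] at h1
        exact hdisj x h h1
      · have h1 := hswapB x h
        rw [hx] at h1
        exact hdisj x h1 h
    have hneπ : ∀ x, σ x ≠ π x := by
      intro x hx
      rcases hcover x with h | h
      · have h1 := hswapA x h
        rw [hx] at h1
        exact hdisj (π x) (h.trans ⟨1, by simp⟩) h1
      · have h1 := hswapB x h
        rw [hx] at h1
        exact hdisj (π x) h1 (h.trans ⟨1, by simp⟩)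
    have hstep : ∀ x, (superGraph σ (π * σ)).Reachable x (π x) := by
      intro x
      have e1 : (superGraph σ (π * σ)).Adj x (σ x) := by
        rw [superGraph, SimpleGraph.fromRel_adj]
        exact ⟨Ne.symm (hne x), Or.inl (Or.inl rfl)⟩
      have e2 : (superGraph σ (π * σ)).Adj (σ x) (π x) := by
        rw [superGraph, SimpleGraph.fromRel_adj]
        refine ⟨hneπ x, Or.inl (Or.inr ?_)⟩
        rw [Equiv.Perm.mul_apply, hσσ]
      exact e1.reachable.trans e2.reachable
    have hreach : ∀ x, (superGraph σ (π * σ)).Reachable a x := by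
      intro x
      rcases hcover x with h | h
      · obtain ⟨i, hi⟩ := h
        rw [← hi]
        exact reach_zpow π hstep a i
      · obtain ⟨i, hi⟩ := hba.symm.trans h
        have e1 : (superGraph σ (π * σ)).Adj a (σ a) := by
          rw [superGraph, SimpleGraph.fromRel_adj]
          exact ⟨Ne.symm (hne a), Or.inl (Or.inl rfl)⟩
        rw [← hi]
        exact e1.reachable.trans (reach_zpow π hstep (σ a) i)
    rw [SimpleGraph.connected_iff]
    exact ⟨fun x y => (hreach x).symm.trans (hreach y), ⟨a⟩⟩
  -- σ is determined by σ a
  have hdet : ∀ σ σ' : Equiv.Perm (Fin (2 * n)),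
      (∀ (i : ℤ) (x : Fin (2 * n)), σ ((π ^ i) x) = (π ^ (-i)) (σ x)) →
      (∀ (i : ℤ) (x : Fin (2 * n)), σ' ((π ^ i) x) = (π ^ (-i)) (σ' x)) →
      σ * σ = 1 → σ' * σ' = 1 → π.SameCycle b (σ a) → σ a = σ' a → σ = σ' := by
    intro σ σ' hc hc' hσ hσ' hba heq
    have hσσ : ∀ x, σ (σ x) = x := fun x => by
      rw [← Equiv.Perm.mul_apply, hσ, Equiv.Perm.one_apply]
    have hσσ' : ∀ x, σ' (σ' x) = x := fun x => by
      rw [← Equiv.Perm.mul_apply, hσ', Equiv.Perm.one_apply]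
    ext x
    rcases hcover x with h | h
    · obtain ⟨i, hi⟩ := h
      rw [← hi, hc, hc', heq]
    · obtain ⟨i, hi⟩ := hba.symm.trans h
      rw [← hi, hc, hc']
      congr 1
      rw [hσσ, heq, hσσ']
  -- the bijection with the cycle of b
  set S := {p : Equiv.Perm (Fin (2 * n)) × Equiv.Perm (Fin (2 * n)) //
      p.1 * p.1 = 1 ∧ p.2 * p.2 = 1 ∧ π = p.2 * p.1 ∧
      (superGraph p.1 p.2).Connected} with hS
  have hmem : ∀ p : S, π.SameCycle b (p.val.1 a) := by
    intro p
    rcases hcover (p.val.1 a) with h | h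
    · exact absurd p.prop.2.2.2 (hdisc _ _ p.prop.1 p.prop.2.1 p.prop.2.2.1 h)
    · exact h
  set F : S → {z : Fin (2 * n) // π.SameCycle b z} :=
    fun p => ⟨p.val.1 a, hmem p⟩ with hF
  have hFinj : Function.Injective F := by
    intro p q h
    have heq : p.val.1 a = q.val.1 a := congrArg Subtype.val h
    obtain ⟨hτp, hcp⟩ := hfact _ _ p.prop.1 p.prop.2.1 p.prop.2.2.1
    obtain ⟨hτq, hcq⟩ := hfact _ _ q.prop.1 q.prop.2.1 q.prop.2.2.1
    have hσeq : p.val.1 = q.val.1 := hdet _ _ hcp hcq p.prop.1 q.prop.1 (hmem p) heq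
    have hτeq : p.val.2 = q.val.2 := by rw [hτp, hτq, hσeq]
    exact Subtype.ext (Prod.ext hσeq hτeq)
  have hFsurj : Function.Surjective F := by
    rintro ⟨z, hz⟩
    have hzx : ∀ x, ¬ π.SameCycle a x → π.SameCycle z x :=
      fun x hx => hz.symm.trans ((hcover x).resolve_left hx)
    set g : Fin (2 * n) → Fin (2 * n) := fun x =>
      if h : π.SameCycle a x then (π ^ (-(h.choose))) z
      else (π ^ (-((hzx x h).choose))) a with hg
    have hgA : ∀ x (h : π.SameCycle a x), g x = (π ^ (-(h.choose))) z :=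
      fun x h => dif_pos h
    have hgB : ∀ x (h : ¬ π.SameCycle a x), g x = (π ^ (-((hzx x h).choose))) a :=
      fun x h => dif_neg h
    have hzA : ∀ x, π.SameCycle a x → ¬ π.SameCycle a (g x) := by
      intro x h hcon
      have h1 : π.SameCycle b (g x) := by
        rw [hgA x h]
        exact hz.trans ⟨-(h.choose), rfl⟩
      exact hdisj _ hcon h1
    have hzB : ∀ x (h : ¬ π.SameCycle a x), π.SameCycle a (g x) := by
      intro x h
      rw [hgB x h]
      exact ⟨-((hzx x h).choose), rfl⟩
    -- g is involutive
    have hinv : Function.Involutive g := by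
      intro x
      by_cases h : π.SameCycle a x
      · have hnA := hzA x h
        rw [hgB _ hnA]
        set j := (hzx (g x) hnA).choose with hj
        have hjspec : (π ^ j) z = g x := (hzx (g x) hnA).choose_spec
        set i := h.choose with hi
        have hispec : (π ^ i) a = x := h.choose_spec
        have hgx : g x = (π ^ (-i)) z := hgA x h
        have E : (π ^ j) z = (π ^ (-i)) z := by rw [hjspec, hgx]
        have E2 := hshift (i - j) j (-i) z E
        rw [show i - j + j = i by ring, show i - j + -i = -j by ring] at E2
        rw [← hispec]
        exact (hkey' z hz (-j) i).mpr E2.symm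
      · have hA := hzB x h
        rw [hgA _ hA]
        set j := hA.choose with hj
        have hjspec : (π ^ j) a = g x := hA.choose_spec
        set i := (hzx x h).choose with hi
        have hispec : (π ^ i) z = x := (hzx x h).choose_spec
        have hgx : g x = (π ^ (-i)) a := hgB x h
        have E : (π ^ j) a = (π ^ (-i)) a := by rw [hjspec, hgx]
        have E2 := hshift (i - j) j (-i) a E
        rw [show i - j + j = i by ring, show i - j + -i = -j by ring] at E2
        rw [← hispec]
        exact (hkey' z hz (-j) i).mp E2.symm
    set σ : Equiv.Perm (Fin (2 * n)) := Function.Involutive.toPerm g hinv with hσdef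
    have hσapp : ∀ x, σ x = g x := fun x => rfl
    have hσ2 : σ * σ = 1 := by
      refine Equiv.ext fun x => ?_
      rw [Equiv.Perm.mul_apply, Equiv.Perm.one_apply, hσapp, hσapp]
      exact hinv x
    have hσa : σ a = z := by
      have h : π.SameCycle a a := Equiv.Perm.SameCycle.refl π a
      rw [hσapp, hgA a h]
      have hispec : (π ^ h.choose) a = a := h.choose_spec
      have h1 : (π ^ h.choose) z = z := (hkey z hz h.choose).mp hispec
      calc (π ^ (-(h.choose))) z = (π ^ (-(h.choose))) ((π ^ h.choose) z) := by rw [h1]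
      _ = z := by rw [← Equiv.Perm.mul_apply, ← zpow_add]; simp
    -- the pointwise conjugation identity
    have hpoint : ∀ x, g (π x) = π⁻¹ (g x) := by
      intro x
      have hπstep : ∀ (i : ℤ) (w : Fin (2 * n)), (π ^ (i + 1)) w = π ((π ^ i) w) := by
        intro i w
        rw [add_comm, zpow_add, zpow_one, Equiv.Perm.mul_apply]
      have hπinv : ∀ (i : ℤ) (w : Fin (2 * n)),
          π⁻¹ ((π ^ (-i)) w) = (π ^ (-i - 1)) w := by
        intro i w
        rw [show (-i - 1 : ℤ) = -1 + -i by ring, zpow_add, Equiv.Perm.mul_apply,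
          zpow_neg_one]
      by_cases h : π.SameCycle a x
      · have hπx : π.SameCycle a (π x) := h.trans ⟨1, by simp⟩
        rw [hgA _ hπx, hgA _ h, hπinv]
        set j := hπx.choose with hj
        have hjspec : (π ^ j) a = π x := hπx.choose_spec
        set i := h.choose with hi
        have hispec : (π ^ i) a = x := h.choose_spec
        have E : (π ^ j) a = (π ^ (i + 1)) a := by
          rw [hjspec, hπstep, hispec]
        have E' := (hkey' z hz j (i + 1)).mp E
        have E2 := hshift (-j - i - 1) j (i + 1) z E'
        rw [show -j - i - 1 + j = -i - 1 by ring,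
          show -j - i - 1 + (i + 1) = -j by ring] at E2
        exact E2.symm
      · have hπx : ¬ π.SameCycle a (π x) := by
          intro hc
          exact h (hc.trans ⟨-1, by simp⟩)
        rw [hgB _ hπx, hgB _ h, hπinv]
        set j := (hzx _ hπx).choose with hj
        have hjspec : (π ^ j) z = π x := (hzx _ hπx).choose_spec
        set i := (hzx x h).choose with hi
        have hispec : (π ^ i) z = x := (hzx x h).choose_spec
        have E : (π ^ j) z = (π ^ (i + 1)) z := by
          rw [hjspec, hπstep, hispec]
        have E' := (hkey' z hz j (i + 1)).mpr E
        have E2 := hshift (-j - i - 1) j (i + 1) a E'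
        rw [show -j - i - 1 + j = -i - 1 by ring,
          show -j - i - 1 + (i + 1) = -j by ring] at E2
        exact E2.symm
    have hconj : σ * π * σ = π⁻¹ := by
      refine Equiv.ext fun x => ?_
      rw [Equiv.Perm.mul_apply, Equiv.Perm.mul_apply, hσapp, hσapp]
      rw [hpoint (g x)]
      exact congrArg _ (hinv x)
    have hτ2 : (π * σ) * (π * σ) = 1 := by
      rw [show (π * σ) * (π * σ) = π * (σ * π * σ) by group, hconj, mul_inv_cancel]
    have hfac : π = (π * σ) * σ := by rw [mul_assoc, hσ2, mul_one]
    obtain ⟨_, hcomm⟩ := hfact σ (π * σ) hσ2 hτ2 hfac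
    have hba : π.SameCycle b (σ a) := by rw [hσa]; exact hz
    refine ⟨⟨(σ, π * σ), hσ2, hτ2, hfac, hconnl σ hσ2 hcomm hba⟩, ?_⟩
    exact Subtype.ext hσa
  have hcard := Nat.card_eq_of_bijective F ⟨hFinj, hFsurj⟩
  rw [hcard]
  have : Nat.card {z : Fin (2 * n) // π.SameCycle b z}
      = Set.ncard {z | π.SameCycle b z} := Nat.card_coe_set_eq _
  rw [this, hb]
end

section
/- Let c_1, …, c_n be nonnegative even integers with Σ k·c_k = n, and let π be a permutation of [n] with c_k cycles of length k for each k. Then the number of factorizations π = τ ∘ σ where σ and τ are both fixed-point-free involutions equals Π_{k=1}^n (c_k − 1)!! · k^{c_k/2}, with the convention (−1)!! = 1. -/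
open Equiv

namespace FPFaux

open Equiv Function

variable {n : ℕ} {π : Equiv.Perm (Fin n)}

noncomputable def per (π : Equiv.Perm (Fin n)) (x : Fin n) : ℕ :=
  Function.minimalPeriod ⇑π x

lemma mem_periodicPts (x : Fin n) : x ∈ periodicPts ⇑π := by
  refine ⟨orderOf π, orderOf_pos π, ?_⟩
  simp [IsPeriodicPt, IsFixedPt, ← Equiv.Perm.coe_pow, pow_orderOf_eq_one]

lemma per_pos (x : Fin n) : 0 < per π x :=
  minimalPeriod_pos_of_mem_periodicPts (mem_periodicPts x)

lemma pow_apply_eq_self_iff (x : Fin n) (m : ℕ) :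
    (π ^ m) x = x ↔ per π x ∣ m := by
  rw [per, ← isPeriodicPt_iff_minimalPeriod_dvd]
  simp [IsPeriodicPt, IsFixedPt, ← Equiv.Perm.coe_pow]

lemma per_dvd_orderOf (x : Fin n) : per π x ∣ orderOf π := by
  rw [← pow_apply_eq_self_iff, pow_orderOf_eq_one]; rfl

lemma zpow_reduce (i : ℤ) (π : Equiv.Perm (Fin n)) :
    ∃ m : ℕ, π ^ i = π ^ (m : ℕ) ∧ (orderOf π : ℤ) ∣ i - m := by
  have ho : (0:ℤ) < (orderOf π : ℤ) := Int.natCast_pos.mpr (orderOf_pos π)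
  refine ⟨(i % (orderOf π : ℤ)).toNat, ?_, ?_⟩
  · rw [← zpow_natCast, Int.toNat_of_nonneg (Int.emod_nonneg _ ho.ne'),
      zpow_mod_orderOf]
  · rw [Int.toNat_of_nonneg (Int.emod_nonneg _ ho.ne')]
    exact Int.dvd_self_sub_of_emod_eq rfl

lemma zpow_apply_eq_self_iff (x : Fin n) (i : ℤ) :
    (π ^ i) x = x ↔ (per π x : ℤ) ∣ i := by
  obtain ⟨m, hm, hd⟩ := zpow_reduce i π
  rw [hm, pow_apply_eq_self_iff]
  have h2 : (per π x : ℤ) ∣ i - m :=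
    dvd_trans (Int.natCast_dvd_natCast.2 (per_dvd_orderOf x)) hd
  rw [← Int.natCast_dvd_natCast]
  constructor
  · intro h
    have := dvd_add h2 h
    simpa using this
  · intro h
    have := dvd_sub h h2
    simpa using this

lemma zpow_apply_eq_iff (x : Fin n) (i j : ℤ) :
    (π ^ i) x = (π ^ j) x ↔ (per π x : ℤ) ∣ i - j := by
  rw [← zpow_apply_eq_self_iff x (i - j)]
  have hsplit : π ^ (i - j) = π ^ (-j) * π ^ i := by
    rw [← zpow_add]; ring_nf
  constructor
  · intro h
    calc (π ^ (i - j)) x = (π ^ (-j)) ((π ^ i) x) := by rw [hsplit]; rfl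
      _ = (π ^ (-j)) ((π ^ j) x) := by rw [h]
      _ = (π ^ (-j + j)) x := by rw [zpow_add]; rfl
      _ = x := by simp
  · intro h
    have h2 : (π ^ j) ((π ^ (i - j)) x) = (π ^ j) x := by rw [h]
    calc (π ^ i) x = (π ^ (j + (i - j))) x := by ring_nf
      _ = (π ^ j) ((π ^ (i - j)) x) := by rw [zpow_add]; rfl
      _ = (π ^ j) x := h2

lemma per_zpow_apply (x : Fin n) (i : ℤ) : per π ((π ^ i) x) = per π x := by
  have key : ∀ m : ℕ, (π ^ m) ((π ^ i) x) = (π ^ i) x ↔ (π ^ m) x = x := by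
    intro m
    have hc : (π ^ m) ((π ^ i) x) = (π ^ i) ((π ^ m) x) := by
      simp [← Equiv.Perm.mul_apply, ← zpow_natCast, ← zpow_add, add_comm]
    rw [hc]
    exact ⟨fun h => (π ^ i).injective h, fun h => by rw [h]⟩
  refine Nat.dvd_antisymm ?_ ?_
  · rw [← pow_apply_eq_self_iff, key, pow_apply_eq_self_iff]
  · rw [← pow_apply_eq_self_iff x, ← key, pow_apply_eq_self_iff]

lemma sameCycle_iff_pow (x y : Fin n) :
    π.SameCycle x y ↔ ∃ m : ℕ, (π ^ m) x = y := by
  constructor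
  · rintro ⟨i, hi⟩
    obtain ⟨m, hm, -⟩ := zpow_reduce i π
    exact ⟨m, by rw [← hm]; exact hi⟩
  · rintro ⟨m, hm⟩
    exact ⟨m, by simpa using hm⟩

lemma per_of_sameCycle {x y : Fin n} (h : π.SameCycle x y) : per π y = per π x := by
  obtain ⟨i, hi⟩ := h
  rw [← hi, per_zpow_apply]


section Cyc
variable {n : ℕ} {π : Equiv.Perm (Fin n)}

def cyc (π : Equiv.Perm (Fin n)) (x : Fin n) : Finset (Fin n) :=
  Finset.univ.filter (π.SameCycle x ·)

lemma mem_cyc {x y : Fin n} : y ∈ cyc π x ↔ π.SameCycle x y := by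
  simp [cyc]

lemma self_mem_cyc (x : Fin n) : x ∈ cyc π x := mem_cyc.2 (Equiv.Perm.SameCycle.refl _ _)

lemma pow_apply_eq_iff (x : Fin n) (i j : ℕ) :
    (π ^ i) x = (π ^ j) x ↔ (per π x : ℤ) ∣ (i : ℤ) - j := by
  have := zpow_apply_eq_iff (π := π) x i j
  simpa [zpow_natCast] using this

lemma card_cyc (x : Fin n) : (cyc π x).card = per π x := by
  have himg : cyc π x = (Finset.range (per π x)).image (fun m => (π ^ m) x) := by
    ext y
    simp only [mem_cyc, Finset.mem_image, Finset.mem_range]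
    constructor
    · intro h
      obtain ⟨m, hm⟩ := (sameCycle_iff_pow x y).1 h
      refine ⟨m % per π x, Nat.mod_lt _ (per_pos x), ?_⟩
      rw [← hm, pow_apply_eq_iff]
      have h1 : per π x ∣ m - m % per π x := Nat.dvd_sub_mod m
      have hle := Nat.mod_le m (per π x)
      have h2 : ((m % per π x : ℕ) : ℤ) - (m : ℤ) = -(((m - m % per π x : ℕ) : ℤ)) := by
        push_cast [hle]; ring
      rw [h2]
      exact dvd_neg.mpr (Int.natCast_dvd_natCast.2 h1)
    · rintro ⟨m, -, hm⟩
      exact (sameCycle_iff_pow x y).2 ⟨m, hm⟩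
  rw [himg, Finset.card_image_of_injOn, Finset.card_range]
  intro i hi j hj hij
  simp only [Finset.mem_coe, Finset.mem_range] at hi hj
  have hd := (pow_apply_eq_iff x i j).1 hij
  have := Int.eq_zero_of_dvd_of_natAbs_lt_natAbs hd (by omega)
  omega

end Cyc


section Invariance
variable {n : ℕ} {π : Equiv.Perm (Fin n)} {T : Finset (Fin n)}

lemma image_eq (hT : ∀ x ∈ T, π x ∈ T) : T.image π = T := by
  apply Finset.eq_of_subset_of_card_le
  · intro y hy
    obtain ⟨x, hx, rfl⟩ := Finset.mem_image.1 hy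
    exact hT x hx
  · rw [Finset.card_image_of_injective _ π.injective]

lemma inv_mem_of_mem (hT : ∀ x ∈ T, π x ∈ T) {x : Fin n} (hx : x ∈ T) : π⁻¹ x ∈ T := by
  rw [← image_eq hT] at hx
  obtain ⟨z, hz, hzx⟩ := Finset.mem_image.1 hx
  rw [← hzx]; simpa using hz

lemma not_mem_apply (hT : ∀ x ∈ T, π x ∈ T) {x : Fin n} (hx : x ∉ T) : π x ∉ T := by
  intro h
  exact hx (by simpa using inv_mem_of_mem hT h)

lemma pow_mem (hT : ∀ x ∈ T, π x ∈ T) {x : Fin n} (hx : x ∈ T) (m : ℕ) : (π ^ m) x ∈ T := by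
  induction m with
  | zero => simpa using hx
  | succ k ih => rw [pow_succ']; exact hT _ ih

lemma cyc_subset (hT : ∀ x ∈ T, π x ∈ T) {x : Fin n} (hx : x ∈ T) : cyc π x ⊆ T := by
  intro y hy
  obtain ⟨m, hm⟩ := (sameCycle_iff_pow x y).1 (mem_cyc.1 hy)
  rw [← hm]; exact pow_mem hT hx m

lemma cyc_invariant {a : Fin n} : ∀ x ∈ cyc π a, π x ∈ cyc π a := by
  intro x hx
  rw [mem_cyc] at hx ⊢
  exact hx.apply_right

lemma per_eq_of_mem_cyc {a x : Fin n} (hx : x ∈ cyc π a) : per π x = per π a :=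
  per_of_sameCycle (mem_cyc.1 hx)

lemma cyc_disjoint {a b : Fin n} (hab : ¬ π.SameCycle a b) : Disjoint (cyc π a) (cyc π b) := by
  rw [Finset.disjoint_left]
  intro x hxa hxb
  exact hab ((mem_cyc.1 hxa).trans (mem_cyc.1 hxb).symm)

lemma cyc_eq_of_sameCycle {a b : Fin n} (hab : π.SameCycle a b) : cyc π a = cyc π b := by
  ext y; simp only [mem_cyc]
  exact ⟨fun h => hab.symm.trans h, fun h => hab.trans h⟩

end Invariance


section Sset
variable {n : ℕ} {π : Equiv.Perm (Fin n)} {T : Finset (Fin n)} {σ : Equiv.Perm (Fin n)}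

def Sprop (π : Equiv.Perm (Fin n)) (T : Finset (Fin n)) (σ : Equiv.Perm (Fin n)) : Prop :=
  (∀ x ∉ T, σ x = x) ∧ σ * σ = 1 ∧ (∀ x ∈ T, σ (π (σ x)) = π⁻¹ x) ∧
  ∀ x ∈ T, σ x ≠ x ∧ σ x ≠ π⁻¹ x

instance : DecidablePred (Sprop π T) := fun σ => by unfold Sprop; infer_instance

lemma Sprop.invol (hσ : Sprop π T σ) (x : Fin n) : σ (σ x) = x := by
  have := hσ.2.1
  calc σ (σ x) = (σ * σ) x := rfl
    _ = x := by rw [this]; rfl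

lemma Sprop.maps_to (hσ : Sprop π T σ) {x : Fin n} (hx : x ∈ T) : σ x ∈ T := by
  by_contra h
  have h1 := hσ.1 _ h
  rw [hσ.invol x] at h1
  exact h (h1 ▸ hx)

lemma Sprop.conj' (hσ : Sprop π T σ) {y : Fin n} (hy : y ∈ T) :
    σ (π y) = π⁻¹ (σ y) := by
  have h := hσ.2.2.1 (σ y) (hσ.maps_to hy)
  rwa [hσ.invol y] at h

lemma Sprop.conj_pow (hσ : Sprop π T σ) (hT : ∀ x ∈ T, π x ∈ T) {y : Fin n} (hy : y ∈ T)
    (m : ℕ) : σ ((π ^ m) y) = (π ^ (-(m:ℤ))) (σ y) := by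
  induction m with
  | zero => simp
  | succ k ih =>
    have hk : (π ^ k) y ∈ T := pow_mem hT hy k
    have : σ ((π ^ (k+1)) y) = σ (π ((π ^ k) y)) := by rw [pow_succ']; rfl
    rw [this, hσ.conj' hk, ih]
    have : π⁻¹ * π ^ (-(k:ℤ)) = π ^ (-((k:ℕ)+1:ℤ)) := by
      rw [← zpow_neg_one, ← zpow_add]; ring_nf
    calc π⁻¹ ((π ^ (-(k:ℤ))) (σ y)) = (π⁻¹ * π ^ (-(k:ℤ))) (σ y) := rfl
      _ = (π ^ (-((k:ℕ)+1:ℤ))) (σ y) := by rw [this]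
      _ = (π ^ (-((k+1:ℕ):ℤ))) (σ y) := by norm_cast

lemma Sprop.conj_zpow (hσ : Sprop π T σ) (hT : ∀ x ∈ T, π x ∈ T) {y : Fin n} (hy : y ∈ T)
    (i : ℤ) : σ ((π ^ i) y) = (π ^ (-i)) (σ y) := by
  obtain ⟨m, hm, hd⟩ := zpow_reduce i π
  have hneg : π ^ (-i) = π ^ (-(m:ℤ)) := by
    rw [← inv_inj]
    simp only [← zpow_neg]
    simpa using hm
  rw [hm, hneg]
  exact hσ.conj_pow hT hy m

lemma zpow_mem (hT : ∀ x ∈ T, π x ∈ T) {x : Fin n} (hx : x ∈ T) (i : ℤ) : (π ^ i) x ∈ T := by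
  obtain ⟨m, hm, -⟩ := zpow_reduce i π
  rw [hm]; exact pow_mem hT hx m

lemma Sprop.per_apply (hσ : Sprop π T σ) (hT : ∀ x ∈ T, π x ∈ T) {x : Fin n} (hx : x ∈ T) :
    per π (σ x) = per π x := by
  have key : ∀ m : ℕ, ((π ^ m) (σ x) = σ x ↔ (π ^ m) x = x) := by
    intro m
    have h1 : σ ((π ^ (-(m:ℤ))) x) = (π ^ (m:ℤ)) (σ x) := by
      rw [hσ.conj_zpow hT hx]; norm_num
    rw [show ((π ^ m) (σ x) = σ x) ↔ ((π ^ (m:ℤ)) (σ x) = σ x) by rw [zpow_natCast]]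
    rw [← h1]
    constructor
    · intro h
      have h2 := σ.injective h
      rw [zpow_apply_eq_self_iff, dvd_neg] at h2
      rw [pow_apply_eq_self_iff]
      exact_mod_cast h2
    · intro h
      have : (π ^ (-(m:ℤ))) x = x := by
        rw [zpow_apply_eq_self_iff, dvd_neg, ← zpow_apply_eq_self_iff x (m:ℤ)]
        simpa using h
      rw [this]
  refine Nat.dvd_antisymm ?_ ?_
  · rw [← pow_apply_eq_self_iff, key, pow_apply_eq_self_iff]
  · rw [← pow_apply_eq_self_iff x, ← key, pow_apply_eq_self_iff]

lemma Sprop.not_sameCycle (hσ : Sprop π T σ) (hT : ∀ x ∈ T, π x ∈ T) {a : Fin n} (ha : a ∈ T) :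
    ¬ π.SameCycle a (σ a) := by
  rintro ⟨m, hm⟩
  have key : ∀ j : ℤ, σ ((π ^ j) a) = (π ^ (m - j)) a := by
    intro j
    rw [hσ.conj_zpow hT ha, ← hm]
    calc (π ^ (-j)) ((π ^ m) a) = ((π ^ (-j)) * (π ^ m)) a := rfl
      _ = (π ^ (m - j)) a := by rw [← zpow_add]; ring_nf
  rcases Int.even_or_odd m with ⟨j, hj⟩ | ⟨j, hj⟩
  · have hx : (π ^ j) a ∈ T := zpow_mem hT ha j
    have h1 := (hσ.2.2.2 _ hx).1
    apply h1
    rw [key j, hj]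
    congr 1
    ring
  · have hx : (π ^ (j+1)) a ∈ T := zpow_mem hT ha (j+1)
    have h1 := (hσ.2.2.2 _ hx).2
    apply h1
    rw [key (j+1), hj]
    have : (2*j + 1 - (j+1)) = j := by ring
    rw [this]
    have : π⁻¹ ((π ^ (j+1)) a) = (π ^ j) a := by
      calc π⁻¹ ((π ^ (j+1)) a) = (π⁻¹ * π ^ (j+1)) a := rfl
        _ = (π ^ j) a := by rw [← zpow_neg_one, ← zpow_add]; ring_nf
    rw [this]

end Sset


section Pairing
variable {n : ℕ} {π : Equiv.Perm (Fin n)} {a b : Fin n}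

noncomputable def pairFun (π : Equiv.Perm (Fin n)) (a b : Fin n) : Fin n → Fin n := fun x =>
  if h : π.SameCycle a x then (π ^ (-(Classical.choose h))) b
  else if h : π.SameCycle b x then (π ^ (-(Classical.choose h))) a
  else x

lemma pairFun_apply_a (hab : ¬ π.SameCycle a b) (hper : per π b = per π a) (i : ℤ) :
    pairFun π a b ((π ^ i) a) = (π ^ (-i)) b := by
  have h : π.SameCycle a ((π ^ i) a) := ⟨i, rfl⟩
  rw [pairFun, dif_pos h]
  have hch : (π ^ (Classical.choose h)) a = (π ^ i) a := Classical.choose_spec h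
  rw [zpow_apply_eq_iff] at hch
  rw [zpow_apply_eq_iff, hper]
  have : -(Classical.choose h) - -i = -((Classical.choose h) - i) := by ring
  rw [this, dvd_neg]
  exact hch

lemma pairFun_apply_b (hab : ¬ π.SameCycle a b) (hper : per π b = per π a) (i : ℤ) :
    pairFun π a b ((π ^ i) b) = (π ^ (-i)) a := by
  have hnot : ¬ π.SameCycle a ((π ^ i) b) := fun h => hab (h.of_zpow_right)
  have h : π.SameCycle b ((π ^ i) b) := ⟨i, rfl⟩
  rw [pairFun, dif_neg hnot, dif_pos h]
  have hch : (π ^ (Classical.choose h)) b = (π ^ i) b := Classical.choose_spec h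
  rw [zpow_apply_eq_iff] at hch
  rw [zpow_apply_eq_iff, ← hper]
  have : -(Classical.choose h) - -i = -((Classical.choose h) - i) := by ring
  rw [this, dvd_neg]
  exact hch

lemma pairFun_apply_of_not_mem (hxa : x ∉ cyc π a) (hxb : x ∉ cyc π b) :
    pairFun π a b x = x := by
  rw [pairFun, dif_neg (fun h => hxa (mem_cyc.2 h)), dif_neg (fun h => hxb (mem_cyc.2 h))]

lemma pairFun_involutive (hab : ¬ π.SameCycle a b) (hper : per π b = per π a) :
    Function.Involutive (pairFun π a b) := by
  intro x
  by_cases hxa : x ∈ cyc π a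
  · obtain ⟨i, hi⟩ := mem_cyc.1 hxa
    rw [← hi, pairFun_apply_a hab hper, pairFun_apply_b hab hper, neg_neg]
  · by_cases hxb : x ∈ cyc π b
    · obtain ⟨i, hi⟩ := mem_cyc.1 hxb
      rw [← hi, pairFun_apply_b hab hper, pairFun_apply_a hab hper, neg_neg]
    · rw [pairFun_apply_of_not_mem hxa hxb, pairFun_apply_of_not_mem hxa hxb]

lemma pairFun_mem_cyc_b (hab : ¬ π.SameCycle a b) (hper : per π b = per π a)
    (hxa : x ∈ cyc π a) : pairFun π a b x ∈ cyc π b := by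
  obtain ⟨i, hi⟩ := mem_cyc.1 hxa
  rw [← hi, pairFun_apply_a hab hper]
  exact mem_cyc.2 ⟨-i, rfl⟩

lemma pairFun_mem_cyc_a (hab : ¬ π.SameCycle a b) (hper : per π b = per π a)
    (hxb : x ∈ cyc π b) : pairFun π a b x ∈ cyc π a := by
  obtain ⟨i, hi⟩ := mem_cyc.1 hxb
  rw [← hi, pairFun_apply_b hab hper]
  exact mem_cyc.2 ⟨-i, rfl⟩

end Pairing


section Step
variable {n : ℕ} {π : Equiv.Perm (Fin n)} {T : Finset (Fin n)} {a b : Fin n}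
  {σ σ' τ : Equiv.Perm (Fin n)}

lemma apply_zpow (i : ℤ) (y : Fin n) : π ((π ^ i) y) = (π ^ (i+1)) y := by
  calc π ((π ^ i) y) = (π * π ^ i) y := rfl
    _ = (π ^ (i+1)) y := by rw [← zpow_one_add]; ring_nf

lemma inv_apply_zpow (i : ℤ) (y : Fin n) : π⁻¹ ((π ^ i) y) = (π ^ (i-1)) y := by
  calc π⁻¹ ((π ^ i) y) = (π⁻¹ * π ^ i) y := rfl
    _ = (π ^ (i-1)) y := by rw [← zpow_neg_one, ← zpow_add]; ring_nf

section TauFacts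
variable (hab : ¬ π.SameCycle a b) (hper : per π b = per π a)
  (hτ : ∀ x, τ x = pairFun π a b x)
include hab hper hτ

lemma tau_conj {x : Fin n} (hx : x ∈ cyc π a ∪ cyc π b) : τ (π (τ x)) = π⁻¹ x := by
  rcases Finset.mem_union.1 hx with h | h
  · obtain ⟨i, hi⟩ := mem_cyc.1 h
    have h1 : τ ((π ^ i) a) = (π ^ (-i)) b := by rw [hτ]; exact pairFun_apply_a hab hper i
    have h2 : τ ((π ^ (-i+1)) b) = (π ^ (-(-i+1))) a := by
      rw [hτ]; exact pairFun_apply_b hab hper _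
    rw [← hi, h1, apply_zpow, h2, inv_apply_zpow]
    congr 1
    ring
  · obtain ⟨i, hi⟩ := mem_cyc.1 h
    have h1 : τ ((π ^ i) b) = (π ^ (-i)) a := by rw [hτ]; exact pairFun_apply_b hab hper i
    have h2 : τ ((π ^ (-i+1)) a) = (π ^ (-(-i+1))) b := by
      rw [hτ]; exact pairFun_apply_a hab hper _
    rw [← hi, h1, apply_zpow, h2, inv_apply_zpow]
    congr 1
    ring

lemma tau_mem {x : Fin n} (hx : x ∈ cyc π a ∪ cyc π b) : τ x ∈ cyc π a ∪ cyc π b := by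
  rw [hτ]
  rcases Finset.mem_union.1 hx with h | h
  · exact Finset.mem_union.2 (Or.inr (pairFun_mem_cyc_b hab hper h))
  · exact Finset.mem_union.2 (Or.inl (pairFun_mem_cyc_a hab hper h))

lemma tau_ne {x : Fin n} (hx : x ∈ cyc π a ∪ cyc π b) : τ x ≠ x ∧ τ x ≠ π⁻¹ x := by
  have hdisj := cyc_disjoint hab
  rcases Finset.mem_union.1 hx with h | h
  · have hmem : τ x ∈ cyc π b := by rw [hτ]; exact pairFun_mem_cyc_b hab hper h
    constructor
    · intro he; rw [he] at hmem
      exact (Finset.disjoint_left.1 hdisj) h hmem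
    · intro he
      have : π⁻¹ x ∈ cyc π a := mem_cyc.2 (Equiv.Perm.sameCycle_symm_apply_right.2 (mem_cyc.1 h))
      rw [he] at hmem
      exact (Finset.disjoint_left.1 hdisj) this hmem
  · have hmem : τ x ∈ cyc π a := by rw [hτ]; exact pairFun_mem_cyc_a hab hper h
    constructor
    · intro he; rw [he] at hmem
      exact (Finset.disjoint_left.1 hdisj) hmem h
    · intro he
      have : π⁻¹ x ∈ cyc π b := mem_cyc.2 (Equiv.Perm.sameCycle_symm_apply_right.2 (mem_cyc.1 h))
      rw [he] at hmem
      exact (Finset.disjoint_left.1 hdisj) hmem this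

lemma tau_fix {x : Fin n} (hx : x ∉ cyc π a ∪ cyc π b) : τ x = x := by
  rw [hτ]
  exact pairFun_apply_of_not_mem (fun h => hx (Finset.mem_union.2 (Or.inl h)))
    (fun h => hx (Finset.mem_union.2 (Or.inr h)))

end TauFacts

lemma union_cyc_invariant {x : Fin n} (hx : x ∈ cyc π a ∪ cyc π b) :
    π x ∈ cyc π a ∪ cyc π b := by
  rcases Finset.mem_union.1 hx with h | h
  · exact Finset.mem_union.2 (Or.inl (cyc_invariant x h))
  · exact Finset.mem_union.2 (Or.inr (cyc_invariant x h))

lemma sigma_eq_pairFun (hT : ∀ x ∈ T, π x ∈ T) (ha : a ∈ T)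
    (hab : ¬ π.SameCycle a b) (hper : per π b = per π a)
    (hσ : Sprop π T σ) (hba : σ a = b) {x : Fin n} (hx : x ∈ cyc π a ∪ cyc π b) :
    σ x = pairFun π a b x := by
  rcases Finset.mem_union.1 hx with h | h
  · obtain ⟨i, hi⟩ := mem_cyc.1 h
    rw [← hi, pairFun_apply_a hab hper, hσ.conj_zpow hT ha, hba]
  · obtain ⟨i, hi⟩ := mem_cyc.1 h
    have hbT : b ∈ T := by rw [← hba]; exact hσ.maps_to ha
    have hsb : σ b = a := by rw [← hba, hσ.invol]
    rw [← hi, pairFun_apply_b hab hper, hσ.conj_zpow hT hbT, hsb]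

end Step


section StepMain
variable {n : ℕ} {π : Equiv.Perm (Fin n)} {T : Finset (Fin n)} {a b : Fin n}
  {σ σ' τ : Equiv.Perm (Fin n)}

lemma not_mem_D_apply {x : Fin n} (hx : x ∉ cyc π a ∪ cyc π b) :
    π x ∉ cyc π a ∪ cyc π b := by
  exact not_mem_apply (fun y hy => union_cyc_invariant hy) hx

lemma step_forward (hT : ∀ x ∈ T, π x ∈ T) (ha : a ∈ T)
    (hab : ¬ π.SameCycle a b) (hper : per π b = per π a)
    (hτ : ∀ x, τ x = pairFun π a b x)
    (hσ : Sprop π T σ) (hba : σ a = b) :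
    Sprop π (T \ (cyc π a ∪ cyc π b)) (σ * τ) := by
  set D := cyc π a ∪ cyc π b with hD
  have hsd : ∀ x ∈ D, σ x = τ x := by
    intro x hx
    rw [hτ]
    exact sigma_eq_pairFun hT ha hab hper hσ hba hx
  -- σ*τ fixes D pointwise
  have hfixD : ∀ x ∈ D, (σ * τ) x = x := by
    intro x hx
    have : (σ * τ) x = σ (τ x) := rfl
    rw [this, ← hsd x hx, hσ.invol]
  -- σ maps D-complement to D-complement
  have hσD : ∀ x, x ∉ D → σ x ∉ D := by
    intro x hx hmem
    have h1 : σ (σ x) = τ (σ x) := hsd _ hmem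
    rw [hσ.invol] at h1
    have h2 : τ (σ x) ∈ D := tau_mem hab hper hτ hmem
    rw [← h1] at h2
    exact hx h2
  have happ : ∀ x, x ∉ D → (σ * τ) x = σ x := by
    intro x hx
    have : (σ * τ) x = σ (τ x) := rfl
    rw [this, tau_fix hab hper hτ hx]
  refine ⟨?_, ?_, ?_, ?_⟩
  · intro x hx
    by_cases hxD : x ∈ D
    · exact hfixD x hxD
    · rw [happ x hxD]
      apply hσ.1
      intro hxT
      exact hx (Finset.mem_sdiff.2 ⟨hxT, hxD⟩)
  · apply Equiv.ext
    intro x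
    show (σ * τ) ((σ * τ) x) = x
    by_cases hxD : x ∈ D
    · rw [hfixD x hxD, hfixD x hxD]
    · rw [happ x hxD, happ _ (hσD x hxD), hσ.invol]
  · intro x hx
    obtain ⟨hxT, hxD⟩ := Finset.mem_sdiff.1 hx
    have h1 : (σ * τ) x = σ x := happ x hxD
    have h2 : σ x ∉ D := hσD x hxD
    have h3 : π (σ x) ∉ D := not_mem_D_apply h2
    rw [h1, happ _ h3]
    exact hσ.2.2.1 x hxT
  · intro x hx
    obtain ⟨hxT, hxD⟩ := Finset.mem_sdiff.1 hx
    rw [happ x hxD]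
    exact hσ.2.2.2 x hxT

lemma step_backward (hT : ∀ x ∈ T, π x ∈ T) (ha : a ∈ T) (hb : b ∈ T)
    (hab : ¬ π.SameCycle a b) (hper : per π b = per π a)
    (hτ : ∀ x, τ x = pairFun π a b x)
    (hσ' : Sprop π (T \ (cyc π a ∪ cyc π b)) σ') :
    Sprop π T (σ' * τ) ∧ (σ' * τ) a = b := by
  set D := cyc π a ∪ cyc π b with hD
  set T' := T \ D with hT'
  have hDT : D ⊆ T := by
    intro x hx
    rcases Finset.mem_union.1 hx with h | h
    · exact cyc_subset hT ha h
    · exact cyc_subset hT hb h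
  have hfix' : ∀ x ∈ D, σ' x = x := by
    intro x hx
    apply hσ'.1
    intro hmem
    exact (Finset.mem_sdiff.1 hmem).2 hx
  have happ : ∀ x ∈ D, (σ' * τ) x = τ x := by
    intro x hx
    show σ' (τ x) = τ x
    exact hfix' _ (tau_mem hab hper hτ hx)
  have happ2 : ∀ x, x ∉ D → (σ' * τ) x = σ' x := by
    intro x hx
    show σ' (τ x) = σ' x
    rw [tau_fix hab hper hτ hx]
  have hσ'D : ∀ x, x ∉ D → σ' x ∉ D := by
    intro x hx
    by_cases hxT : x ∈ T'
    · have := hσ'.maps_to hxT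
      exact fun hmem => (Finset.mem_sdiff.1 this).2 hmem
    · rw [hσ'.1 x hxT]; exact hx
  have hτD : ∀ x ∈ D, τ x ∈ D := fun x hx => tau_mem hab hper hτ hx
  refine ⟨⟨?_, ?_, ?_, ?_⟩, ?_⟩
  · intro x hx
    have hxD : x ∉ D := fun h => hx (hDT h)
    rw [happ2 x hxD]
    apply hσ'.1
    intro hmem
    exact hx (Finset.mem_sdiff.1 hmem).1
  · apply Equiv.ext
    intro x
    show (σ' * τ) ((σ' * τ) x) = x
    by_cases hxD : x ∈ D
    · rw [happ x hxD, happ _ (hτD x hxD), hτ, hτ]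
      exact pairFun_involutive hab hper x
    · rw [happ2 x hxD, happ2 _ (hσ'D x hxD), hσ'.invol]
  · intro x hx
    by_cases hxD : x ∈ D
    · rw [happ x hxD]
      have h1 : π (τ x) ∈ D := union_cyc_invariant (hτD x hxD)
      rw [happ _ h1]
      exact tau_conj hab hper hτ hxD
    · rw [happ2 x hxD]
      have h2 : σ' x ∉ D := hσ'D x hxD
      have h3 : π (σ' x) ∉ D := not_mem_D_apply h2
      rw [happ2 _ h3]
      exact hσ'.2.2.1 x (Finset.mem_sdiff.2 ⟨hx, hxD⟩)
  · intro x hx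
    by_cases hxD : x ∈ D
    · rw [happ x hxD]
      exact tau_ne hab hper hτ hxD
    · rw [happ2 x hxD]
      exact hσ'.2.2.2 x (Finset.mem_sdiff.2 ⟨hx, hxD⟩)
  · have haD : a ∈ D := Finset.mem_union.2 (Or.inl (self_mem_cyc a))
    rw [happ a haD, hτ]
    have := pairFun_apply_a (π := π) hab hper 0
    simpa using this

end StepMain


lemma doubleFactorial_succ_eq (m : ℕ) :
    Nat.doubleFactorial (m + 1) = (m + 1) * Nat.doubleFactorial (m - 1) := by
  cases m with
  | zero => simp [Nat.doubleFactorial]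
  | succ l => exact Nat.doubleFactorial_add_two l

theorem card_S {n : ℕ} (π : Equiv.Perm (Fin n)) (N : ℕ) :
    ∀ (T : Finset (Fin n)), T.card = N → (∀ x ∈ T, π x ∈ T) →
    ∀ (c : ℕ → ℕ), (∀ k, Even (c k)) →
    (∀ k ∈ Finset.Icc 1 n, (T.filter fun x => per π x = k).card = k * c k) →
    (Finset.univ.filter (Sprop π T)).card
      = ∏ k ∈ Finset.Icc 1 n, Nat.doubleFactorial (c k - 1) * k ^ (c k / 2) := by
  induction N using Nat.strong_induction_on with
  | _ N IH =>
  intro T hcard hT c hev hc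
  rcases Finset.eq_empty_or_nonempty T with rfl | ⟨a, ha⟩
  · have hone : Finset.univ.filter (Sprop π (∅ : Finset (Fin n))) = {1} := by
      ext σ
      simp only [Finset.mem_filter, Finset.mem_univ, true_and, Finset.mem_singleton]
      constructor
      · intro h
        apply Equiv.ext; intro x
        exact h.1 x (by simp)
      · rintro rfl
        exact ⟨fun x _ => rfl, by simp, fun x hx => absurd hx (by simp),
          fun x hx => absurd hx (by simp)⟩
    rw [hone, Finset.card_singleton]
    symm
    apply Finset.prod_eq_one
    intro k hk
    have h0 := hc k hk
    simp only [Finset.filter_empty, Finset.card_empty] at h0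
    have hk1 : 1 ≤ k := (Finset.mem_Icc.1 hk).1
    have hck : c k = 0 := by
      rcases Nat.mul_eq_zero.1 h0.symm with h | h
      · omega
      · exact h
    rw [hck]
    simp [Nat.doubleFactorial]
  · set K := per π a with hK
    have hK1 : 1 ≤ K := per_pos a
    have hcyccard : (cyc π a).card = K := card_cyc a
    have hcyca : cyc π a ⊆ T.filter (fun x => per π x = K) := by
      intro x hx
      exact Finset.mem_filter.2 ⟨cyc_subset hT ha hx, per_eq_of_mem_cyc hx⟩
    have hKn : K ≤ n := by
      calc K = (cyc π a).card := hcyccard.symm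
        _ ≤ Fintype.card (Fin n) := Finset.card_le_univ _
        _ = n := Fintype.card_fin n
    have hKIcc : K ∈ Finset.Icc 1 n := Finset.mem_Icc.2 ⟨hK1, hKn⟩
    have hfK := hc K hKIcc
    have hcK2 : 2 ≤ c K := by
      have h2 : K ≤ K * c K := by
        calc K = (cyc π a).card := hcyccard.symm
          _ ≤ (T.filter (fun x => per π x = K)).card := Finset.card_le_card hcyca
          _ = K * c K := hfK
      rcases hev K with ⟨r, hr⟩
      by_contra hlt
      push_neg at hlt
      interval_cases h : c K <;> omega
    obtain ⟨m, hm⟩ : ∃ m, c K = m + 2 := ⟨c K - 2, by omega⟩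
    have hmeven : Even m := by
      rcases hev K with ⟨r, hr⟩
      exact ⟨r - 1, by omega⟩
    set B := (T.filter fun x => per π x = K) \ cyc π a with hB
    have hBcard : B.card = K * c K - K := by
      rw [hB, Finset.card_sdiff_of_subset hcyca, hfK, hcyccard]
    have hfiber : (Finset.univ.filter (Sprop π T)).card
        = ∑ b ∈ B, ((Finset.univ.filter (Sprop π T)).filter (fun σ => σ a = b)).card := by
      apply Finset.card_eq_sum_card_fiberwise
      intro σ hσ
      have hs : Sprop π T σ := (Finset.mem_filter.1 hσ).2
      refine Finset.mem_sdiff.2 ⟨Finset.mem_filter.2 ⟨hs.maps_to ha, ?_⟩, ?_⟩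
      · rw [hs.per_apply hT ha]
      · intro hmem
        exact hs.not_sameCycle hT ha (mem_cyc.1 hmem)
    set c' : ℕ → ℕ := Function.update c K (c K - 2) with hc'
    have key : ∀ b ∈ B, ((Finset.univ.filter (Sprop π T)).filter (fun σ => σ a = b)).card
        = ∏ k ∈ Finset.Icc 1 n, Nat.doubleFactorial (c' k - 1) * k ^ (c' k / 2) := by
      intro b hbB
      obtain ⟨hbf, hbc⟩ := Finset.mem_sdiff.1 hbB
      obtain ⟨hbT, hbK⟩ := Finset.mem_filter.1 hbf
      have hab : ¬ π.SameCycle a b := fun h => hbc (mem_cyc.2 h)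
      have hper : per π b = per π a := hbK.trans hK
      set D := cyc π a ∪ cyc π b with hD
      set τ := Function.Involutive.toPerm _ (pairFun_involutive hab hper) with hτdef
      have hτ : ∀ x, τ x = pairFun π a b x := fun x => rfl
      have hττ : τ * τ = 1 := by
        apply Equiv.ext; intro x
        show τ (τ x) = x
        rw [hτ, hτ]
        exact pairFun_involutive hab hper x
      have hbij : ((Finset.univ.filter (Sprop π T)).filter (fun σ => σ a = b)).card
          = (Finset.univ.filter (Sprop π (T \ D))).card := by
        apply Finset.card_bij' (fun σ _ => σ * τ) (fun σ' _ => σ' * τ)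
        · intro σ hσ
          obtain ⟨h1, h2⟩ := Finset.mem_filter.1 hσ
          have hs : Sprop π T σ := (Finset.mem_filter.1 h1).2
          exact Finset.mem_filter.2 ⟨Finset.mem_univ _, step_forward hT ha hab hper hτ hs h2⟩
        · intro σ' hσ'
          have hs' := (Finset.mem_filter.1 hσ').2
          obtain ⟨hS, hab'⟩ := step_backward hT ha hbT hab hper hτ hs'
          exact Finset.mem_filter.2 ⟨Finset.mem_filter.2 ⟨Finset.mem_univ _, hS⟩, hab'⟩
        · intro σ hσ
          rw [mul_assoc, hττ, mul_one]
        · intro σ' hσ'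
          rw [mul_assoc, hττ, mul_one]
      rw [hbij]
      -- apply the induction hypothesis to T \ D
      have hdisj : Disjoint (cyc π a) (cyc π b) := cyc_disjoint hab
      have hDcard : D.card = 2 * K := by
        rw [hD, Finset.card_union_of_disjoint hdisj, hcyccard, card_cyc, hper, ← hK]
        ring
      have hDsub : D ⊆ T.filter (fun x => per π x = K) := by
        intro x hx
        rcases Finset.mem_union.1 hx with h | h
        · exact hcyca h
        · refine Finset.mem_filter.2 ⟨cyc_subset hT hbT h, ?_⟩
          rw [per_eq_of_mem_cyc h, hper, hK]
      have hDT : D ⊆ T := fun x hx => (Finset.mem_filter.1 (hDsub hx)).1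
      have hDinv : ∀ x ∈ D, π x ∈ D := fun x hx => union_cyc_invariant hx
      have hT'inv : ∀ x ∈ T \ D, π x ∈ T \ D := by
        intro x hx
        obtain ⟨hxT, hxD⟩ := Finset.mem_sdiff.1 hx
        exact Finset.mem_sdiff.2 ⟨hT x hxT, not_mem_apply hDinv hxD⟩
      have hT'card : (T \ D).card = N - 2 * K := by
        rw [Finset.card_sdiff_of_subset hDT, hDcard, hcard]
      have hlt : N - 2 * K < N := by
        have hN : 1 ≤ N := by
          rw [← hcard]
          exact Finset.card_pos.2 ⟨a, ha⟩
        omega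
      have hfiltereq : ∀ p : Fin n → Prop, ∀ _ : DecidablePred p,
          (T \ D).filter p = (T.filter p) \ D := by
        intro p hp
        ext x
        simp only [Finset.mem_filter, Finset.mem_sdiff]
        tauto
      have hc' : ∀ k ∈ Finset.Icc 1 n,
          ((T \ D).filter fun x => per π x = k).card = k * c' k := by
        intro k hkmem
        rw [hfiltereq _ _]
        by_cases hkK : k = K
        · rw [hkK, Finset.card_sdiff_of_subset hDsub, hfK, hDcard,
            show c' K = c K - 2 from Function.update_self _ _ _, hm]
          have hexp : K * (m + 2) = K * m + 2 * K := by ring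
          have hexp2 : m + 2 - 2 = m := by omega
          rw [hexp2]
          omega
        · have hdisjk : Disjoint (T.filter fun x => per π x = k) D := by
            rw [Finset.disjoint_left]
            intro x hx hxD
            have h1 := (Finset.mem_filter.1 hx).2
            have h2 := (Finset.mem_filter.1 (hDsub hxD)).2
            exact hkK (h1 ▸ h2 ▸ rfl)
          rw [Finset.sdiff_eq_self_of_disjoint hdisjk, hc k hkmem]
          congr 1
          exact (Function.update_of_ne hkK _ _).symm
      have hev' : ∀ k, Even (c' k) := by
        intro k
        by_cases hkK : k = K
        · rw [hkK, show c' K = c K - 2 from Function.update_self _ _ _, hm]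
          simpa using hmeven
        · rw [show c' k = c k from Function.update_of_ne hkK _ _]
          exact hev k
      exact IH (N - 2 * K) hlt (T \ D) hT'card hT'inv c' hev' hc'
    rw [hfiber, Finset.sum_congr rfl key, Finset.sum_const, smul_eq_mul, hBcard]
    -- final algebra
    rw [← Finset.mul_prod_erase _ _ hKIcc, ← Finset.mul_prod_erase _ _ hKIcc]
    have hprodeq : ∏ k ∈ (Finset.Icc 1 n).erase K,
        Nat.doubleFactorial (c' k - 1) * k ^ (c' k / 2)
        = ∏ k ∈ (Finset.Icc 1 n).erase K, Nat.doubleFactorial (c k - 1) * k ^ (c k / 2) := by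
      apply Finset.prod_congr rfl
      intro k hk
      have hne : k ≠ K := (Finset.mem_erase.1 hk).1
      rw [show c' k = c k from Function.update_of_ne hne _ _]
    rw [hprodeq, ← mul_assoc]
    congr 1
    -- (K * c K - K) * (doubleFactorial (c' K - 1) * K ^ (c' K / 2))
    --   = doubleFactorial (c K - 1) * K ^ (c K / 2)
    have h1 : c' K = m := by
      rw [show c' K = c K - 2 from Function.update_self _ _ _, hm]
      omega
    have h2 : K * c K - K = K * (m + 1) := by
      rw [hm]
      have : K * (m + 2) = K * (m+1) + K := by ring
      omega
    rw [h1, h2, hm]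
    have h3 : m + 2 - 1 = m + 1 := by omega
    have h4 : (m + 2) / 2 = m / 2 + 1 := by omega
    rw [h3, h4, doubleFactorial_succ_eq]
    rw [pow_succ]
    ring


section Bridge
variable {n : ℕ} {π : Equiv.Perm (Fin n)}

lemma per_eq_card_support_cycleOf {x : Fin n} (hx : π x ≠ x) :
    per π x = (π.cycleOf x).support.card := by
  classical
  have hcyc : (π.cycleOf x).IsCycle := Equiv.Perm.isCycle_cycleOf π hx
  rw [← hcyc.orderOf]
  have key : ∀ j : ℕ, ((π ^ j) x = x ↔ (π.cycleOf x) ^ j = 1) := by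
    intro j
    rw [← Equiv.Perm.cycleOf_pow_apply_self π x j]
    have hfix : (π.cycleOf x) x ≠ x := by rwa [Equiv.Perm.cycleOf_apply_self]
    exact (hcyc.pow_eq_one_iff' hfix).symm
  refine Nat.dvd_antisymm ?_ ?_
  · rw [← pow_apply_eq_self_iff, key, pow_orderOf_eq_one]
  · rw [orderOf_dvd_iff_pow_eq_one, ← key, pow_apply_eq_self_iff]

lemma count_per_eq (k : ℕ) (hk2 : 2 ≤ k) :
    (Finset.univ.filter fun x : Fin n => per π x = k).card
      = k * Multiset.count k π.cycleType := by
  classical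
  have hset : Finset.univ.filter (fun x : Fin n => per π x = k)
      = (π.cycleFactorsFinset.filter fun γ => γ.support.card = k).biUnion
          (fun γ => γ.support) := by
    ext x
    simp only [Finset.mem_filter, Finset.mem_univ, true_and, Finset.mem_biUnion]
    constructor
    · intro hx
      have hfix : π x ≠ x := by
        intro h
        have : per π x = 1 := Function.minimalPeriod_eq_one_iff_isFixedPt.2 h
        omega
      have hxs : x ∈ π.support := Equiv.Perm.mem_support.2 hfix
      refine ⟨π.cycleOf x, ⟨?_, ?_⟩, ?_⟩
      · exact Equiv.Perm.cycleOf_mem_cycleFactorsFinset_iff.2 hxs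
      · rw [← per_eq_card_support_cycleOf hfix, hx]
      · rw [Equiv.Perm.mem_support_cycleOf_iff]
        exact ⟨Equiv.Perm.SameCycle.refl _ _, hxs⟩
    · rintro ⟨γ, hγ, hxγ⟩
      obtain ⟨hγf, hγk⟩ := hγ
      have hcx : γ = π.cycleOf x := Equiv.Perm.cycle_is_cycleOf hxγ hγf
      have hfix : π x ≠ x := by
        have := Equiv.Perm.support_cycleOf_le π x
        rw [← hcx] at this
        have hxs := this hxγ
        exact Equiv.Perm.mem_support.1 hxs
      rw [per_eq_card_support_cycleOf hfix, ← hcx, hγk]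
  rw [hset, Finset.card_biUnion]
  · rw [Finset.sum_congr rfl (fun γ hγ => (Finset.mem_filter.1 hγ).2), Finset.sum_const,
      smul_eq_mul, mul_comm]
    congr 1
    rw [Equiv.Perm.cycleType_def, Multiset.count_map, Finset.card, Finset.filter_val]
    congr 1
    apply Multiset.filter_congr
    intro x _
    simp [Function.comp, eq_comm]
  · intro γ1 h1 γ2 h2 hne
    have hd := Equiv.Perm.cycleFactorsFinset_pairwise_disjoint π
      (Finset.mem_coe.2 (Finset.mem_filter.1 h1).1)
      (Finset.mem_coe.2 (Finset.mem_filter.1 h2).1) hne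
    exact Equiv.Perm.Disjoint.disjoint_support hd

end Bridge

end FPFaux


/-- The number of cycles of length `k` of a permutation of `Fin n`,
counting fixed points as cycles of length 1. -/
def cycleCount {n : ℕ} (π : Equiv.Perm (Fin n)) (k : ℕ) : ℕ :=
  if k = 1 then (Finset.univ.filter fun x => π x = x).card
  else Multiset.count k π.cycleType

/-- If `π` is a permutation of `[n]` with `c k` cycles of length `k`, where all the `c k` are
even and `Σ k·c_k = n`, then the number of factorizations of `π` into two fixed-point-free
involutions is `∏_{k=1}^n (c_k − 1)!! · k^{c_k/2}` (with `(−1)!! = 1`). -/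
theorem factorizations_into_fixed_point_free_involutions (n : ℕ) (c : ℕ → ℕ)
    (heven : ∀ k, Even (c k))
    (hsum : ∑ k ∈ Finset.Icc 1 n, k * c k = n)
    (π : Equiv.Perm (Fin n)) (hπ : ∀ k ∈ Finset.Icc 1 n, cycleCount π k = c k) :
    Nat.card {p : Equiv.Perm (Fin n) × Equiv.Perm (Fin n) //
      (p.1 * p.1 = 1 ∧ ∀ i, p.1 i ≠ i) ∧ (p.2 * p.2 = 1 ∧ ∀ i, p.2 i ≠ i) ∧
      π = p.2 * p.1} =
    ∏ k ∈ Finset.Icc 1 n, Nat.doubleFactorial (c k - 1) * k ^ (c k / 2) := by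
  have hforward : ∀ p : Perm (Fin n) × Perm (Fin n),
      ((p.1 * p.1 = 1 ∧ ∀ i, p.1 i ≠ i) ∧ (p.2 * p.2 = 1 ∧ ∀ i, p.2 i ≠ i) ∧ π = p.2 * p.1) →
      FPFaux.Sprop π Finset.univ p.1 := by
    rintro ⟨σ, τ⟩ ⟨⟨hσ2, hσf⟩, ⟨hτ2, hτf⟩, hfac⟩
    simp only at hσ2 hσf hτ2 hτf hfac ⊢
    have hσinv : σ⁻¹ = σ := inv_eq_of_mul_eq_one_left hσ2
    have hτinv : τ⁻¹ = τ := inv_eq_of_mul_eq_one_left hτ2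
    have hπinv : π⁻¹ = σ * τ := by rw [hfac, mul_inv_rev, hσinv, hτinv]
    refine ⟨fun x hx => absurd (Finset.mem_univ x) hx, hσ2, ?_, ?_⟩
    · intro x _
      have hσπσ : σ * π * σ = σ * τ := by
        rw [hfac, mul_assoc, mul_assoc, hσ2, mul_one]
      calc σ (π (σ x)) = (σ * π * σ) x := rfl
        _ = (σ * τ) x := by rw [hσπσ]
        _ = π⁻¹ x := by rw [hπinv]
    · intro x _
      refine ⟨hσf x, ?_⟩
      intro he
      have hτeq : τ = π * σ := by rw [hfac, mul_assoc, hσ2, mul_one]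
      apply hτf x
      rw [hτeq]
      show π (σ x) = x
      rw [he]
      simp
  have hbackward : ∀ σ : Perm (Fin n), FPFaux.Sprop π Finset.univ σ →
      ((σ * σ = 1 ∧ ∀ i, σ i ≠ i) ∧ ((π * σ) * (π * σ) = 1 ∧ ∀ i, (π * σ) i ≠ i) ∧
        π = (π * σ) * σ) := by
    intro σ hσ
    refine ⟨⟨hσ.2.1, fun i => (hσ.2.2.2 i (Finset.mem_univ i)).1⟩, ⟨?_, ?_⟩, ?_⟩
    · apply Equiv.ext; intro x
      show π (σ (π (σ x))) = x
      rw [hσ.2.2.1 x (Finset.mem_univ x)]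
      simp
    · intro i he
      apply (hσ.2.2.2 i (Finset.mem_univ i)).2
      have h1 : π (σ i) = i := he
      rw [eq_comm, Equiv.Perm.inv_eq_iff_eq]
      exact h1.symm
    · rw [mul_assoc, hσ.2.1, mul_one]
  have hcardeq : Nat.card {p : Equiv.Perm (Fin n) × Equiv.Perm (Fin n) //
      (p.1 * p.1 = 1 ∧ ∀ i, p.1 i ≠ i) ∧ (p.2 * p.2 = 1 ∧ ∀ i, p.2 i ≠ i) ∧
      π = p.2 * p.1}
      = (Finset.univ.filter (FPFaux.Sprop π Finset.univ)).card := by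
    have he : {p : Equiv.Perm (Fin n) × Equiv.Perm (Fin n) //
        (p.1 * p.1 = 1 ∧ ∀ i, p.1 i ≠ i) ∧ (p.2 * p.2 = 1 ∧ ∀ i, p.2 i ≠ i) ∧
        π = p.2 * p.1} ≃ {σ : Perm (Fin n) // FPFaux.Sprop π Finset.univ σ} := by
      refine ⟨fun p => ⟨p.1.1, hforward p.1 p.2⟩,
        fun σ => ⟨(σ.1, π * σ.1), hbackward σ.1 σ.2⟩, ?_, ?_⟩
      · rintro ⟨⟨σ, τ⟩, hp⟩
        have hτeq : π * σ = τ := by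
          obtain ⟨⟨hσ2, -⟩, -, hfac⟩ := hp
          simp only at hσ2 hfac
          rw [hfac, mul_assoc, hσ2, mul_one]
        simp only [Subtype.mk.injEq, Prod.mk.injEq]
        exact ⟨trivial, hτeq⟩
      · intro σ
        rfl
    rw [Nat.card_congr he, Nat.card_eq_fintype_card, Fintype.card_subtype]
  rw [hcardeq]
  have hcount : ∀ k ∈ Finset.Icc 1 n,
      (Finset.univ.filter fun x : Fin n => FPFaux.per π x = k).card = k * c k := by
    intro k hk
    by_cases hk1 : k = 1
    · subst hk1
      have hfe : (Finset.univ.filter fun x : Fin n => FPFaux.per π x = 1)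
          = Finset.univ.filter fun x : Fin n => π x = x := by
        apply Finset.filter_congr
        intro x _
        exact Function.minimalPeriod_eq_one_iff_isFixedPt
      rw [hfe, one_mul]
      have := hπ 1 hk
      rwa [cycleCount, if_pos rfl] at this
    · have hk2 : 2 ≤ k := by
        have := (Finset.mem_Icc.1 hk).1
        omega
      rw [FPFaux.count_per_eq k hk2]
      congr 1
      have := hπ k hk
      rwa [cycleCount, if_neg hk1] at this
  have huniv : (Finset.univ : Finset (Fin n)).card = Fintype.card (Fin n) :=
    Finset.card_univ
  exact FPFaux.card_S π (Finset.univ.card) Finset.univ rfl (fun x _ => Finset.mem_univ _)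
    c heven hcount
end

section
/- If a permutation π of [n] has an odd number of cycles of some length k, then π admits no factorization π = τ ∘ σ with σ and τ both fixed-point-free involutions. -/
open Equiv

/-- A finset stable under a fixed-point-free involution has even cardinality. -/
lemma even_card_of_fpf_invol {α : Type*} [DecidableEq α] (f : α → α) :
    ∀ s : Finset α, (∀ x ∈ s, f x ∈ s) → (∀ x ∈ s, f (f x) = x) → (∀ x ∈ s, f x ≠ x) →
      Even s.card := by
  intro s
  induction s using Finset.strongInduction with
  | _ s ih =>
    intro hmem hinv hne
    rcases s.eq_empty_or_nonempty with rfl | ⟨x, hx⟩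
    · simp
    · have hfx : f x ∈ s := hmem x hx
      have hpair : ({x, f x} : Finset α) ⊆ s := by
        intro y hy
        simp only [Finset.mem_insert, Finset.mem_singleton] at hy
        rcases hy with rfl | rfl
        · exact hx
        · exact hfx
      have hcard2 : ({x, f x} : Finset α).card = 2 := by
        rw [Finset.card_insert_of_notMem (by simp [Ne.symm (hne x hx)]),
          Finset.card_singleton]
      have hss : s \ {x, f x} ⊂ s := Finset.sdiff_ssubset hpair ⟨x, by simp⟩
      have heven : Even (s \ {x, f x}).card := by
        refine ih _ hss ?_ ?_ ?_
        · intro y hy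
          rw [Finset.mem_sdiff] at hy ⊢
          obtain ⟨hys, hyn⟩ := hy
          simp only [Finset.mem_insert, Finset.mem_singleton] at hyn ⊢
          push_neg at hyn ⊢
          refine ⟨hmem y hys, ?_, ?_⟩
          · intro h
            exact hyn.2 (by rw [← hinv y hys, h])
          · intro h
            apply hyn.1
            have h2 : f (f y) = f (f x) := by rw [h]
            rwa [hinv y hys, hinv x hx] at h2
        · intro y hy
          exact hinv y (Finset.mem_sdiff.mp hy).1
        · intro y hy
          exact hne y (Finset.mem_sdiff.mp hy).1
      have hcard : s.card = (s \ {x, f x}).card + 2 := by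
        have hle : 2 ≤ s.card := hcard2 ▸ Finset.card_le_card hpair
        rw [Finset.card_sdiff_of_subset hpair, hcard2]
        omega
      rw [hcard]
      exact heven.add even_two

/-- If a permutation `π` of `[n]` has an odd number of cycles of some length `k`, then `π`
admits no factorization into two fixed-point-free involutions. -/
theorem no_fpf_factorization_of_odd_cycle_count (n : ℕ) (π : Equiv.Perm (Fin n)) (k : ℕ)
    (hodd : Odd (cycleCount π k)) :
    ¬ ∃ σ τ : Equiv.Perm (Fin n),
      (σ * σ = 1 ∧ ∀ i, σ i ≠ i) ∧ (τ * τ = 1 ∧ ∀ i, τ i ≠ i) ∧ π = τ * σ := by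
  rintro ⟨σ, τ, ⟨hσ2, hσf⟩, ⟨hτ2, hτf⟩, hπ⟩
  have hσi : σ⁻¹ = σ := by
    rw [inv_eq_iff_mul_eq_one]; exact hσ2
  have hτi : τ⁻¹ = τ := by
    rw [inv_eq_iff_mul_eq_one]; exact hτ2
  -- key conjugation relation
  have key : σ * π * σ⁻¹ = π⁻¹ := by
    subst hπ
    rw [hσi, mul_inv_rev, hσi, hτi]
    calc σ * (τ * σ) * σ = σ * τ * (σ * σ) := by group
    _ = σ * τ := by rw [hσ2, mul_one]
  have hσσ : ∀ x, σ (σ x) = x := by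
    intro x
    have : (σ * σ) x = (1 : Equiv.Perm (Fin n)) x := by rw [hσ2]
    simpa using this
  have hpt : ∀ x, π (σ x) = σ (π⁻¹ x) := by
    intro x
    have h1 : (σ * π * σ⁻¹) x = π⁻¹ x := by rw [key]
    rw [hσi] at h1
    simp only [Equiv.Perm.mul_apply] at h1
    rw [← h1, hσσ]
  rcases eq_or_ne k 1 with rfl | hk1
  · -- fixed points case
    rw [cycleCount, if_pos rfl] at hodd
    have heven : Even (Finset.univ.filter fun x => π x = x).card := by
      apply even_card_of_fpf_invol σ
      · intro x hx
        simp only [Finset.mem_filter, Finset.mem_univ, true_and] at hx ⊢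
        rw [hpt]
        have hinvx : π⁻¹ x = x := by
          rw [Equiv.Perm.inv_eq_iff_eq]; exact hx.symm
        rw [hinvx]
      · intro x _; exact hσσ x
      · intro x _; exact hσf x
    exact (Nat.not_even_iff_odd.mpr hodd) heven
  · -- cycles of length k ≠ 1
    rw [cycleCount, if_neg hk1] at hodd
    have hcount : Multiset.count k π.cycleType
        = (π.cycleFactorsFinset.filter fun c => k = c.support.card).card := by
      rw [Equiv.Perm.cycleType_def, Multiset.count_map]
      rfl
    rw [hcount] at hodd
    have hconj_inv : ∀ c : Equiv.Perm (Fin n), (σ * c * σ)⁻¹ = σ * c⁻¹ * σ := by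
      intro c
      rw [mul_inv_rev, mul_inv_rev, hσi, mul_assoc]
    set Φ : Equiv.Perm (Fin n) → Equiv.Perm (Fin n) := fun c => σ * c⁻¹ * σ with hΦ
    have hsupΦ : ∀ c : Equiv.Perm (Fin n),
        (Φ c).support = c.support.map σ.toEmbedding := by
      intro c
      have : Φ c = σ * c⁻¹ * σ⁻¹ := by rw [hΦ, hσi]
      rw [this, Equiv.Perm.support_conj, Equiv.Perm.support_inv]
    have hmemΦ : ∀ c ∈ π.cycleFactorsFinset, Φ c ∈ π.cycleFactorsFinset := by
      intro c hc
      rw [Equiv.Perm.mem_cycleFactorsFinset_iff] at hc ⊢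
      obtain ⟨hcyc, hagree⟩ := hc
      constructor
      · have : Φ c = σ * c⁻¹ * σ⁻¹ := by rw [hΦ, hσi]
        rw [this]
        exact hcyc.inv.conj
      · intro x hx
        rw [hsupΦ, Finset.mem_map] at hx
        obtain ⟨y, hy, rfl⟩ := hx
        have hy' : c⁻¹ y ∈ c.support := by
          rwa [Equiv.Perm.apply_mem_support (f := c) (x := c⁻¹ y) |>.symm, (show c (c⁻¹ y) = y from Equiv.apply_symm_apply c y)]
        have hπinv : π⁻¹ y = c⁻¹ y := by
          have h3 := hagree (c⁻¹ y) hy'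
          rw [(show c (c⁻¹ y) = y from Equiv.apply_symm_apply c y)] at h3
          rw [Equiv.Perm.inv_eq_iff_eq]; exact h3
        show σ (c⁻¹ (σ (σ.toEmbedding y))) = π (σ.toEmbedding y)
        simp only [Equiv.coe_toEmbedding]
        rw [hσσ, hpt, hπinv]
    have heven : Even (π.cycleFactorsFinset.filter fun c => k = c.support.card).card := by
      apply even_card_of_fpf_invol Φ
      · -- maps the filter set into itself
        intro c hc
        rw [Finset.mem_filter] at hc ⊢
        refine ⟨hmemΦ c hc.1, ?_⟩
        rw [hsupΦ, Finset.card_map]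
        exact hc.2
      · -- involution
        intro c _
        show σ * (σ * c⁻¹ * σ)⁻¹ * σ = c
        have h2 := hconj_inv c⁻¹
        rw [inv_inv] at h2
        rw [h2]
        calc σ * (σ * c * σ) * σ = σ * σ * c * (σ * σ) := by group
          _ = c := by rw [hσ2, one_mul, mul_one]
      · -- no fixed cycle
        intro c hc hfix
        rw [Finset.mem_filter] at hc
        obtain ⟨hcmem, _⟩ := hc
        have hcyc := (Equiv.Perm.mem_cycleFactorsFinset_iff.mp hcmem).1
        have hagree := (Equiv.Perm.mem_cycleFactorsFinset_iff.mp hcmem).2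
        -- from Φ c = c deduce σ * c * σ = c⁻¹
        have hconjc : σ * c * σ⁻¹ = c⁻¹ := by
          have hfix' : σ * c⁻¹ * σ = c := hfix
          have h4 : (σ * c * σ)⁻¹ = c := by rw [hconj_inv c]; exact hfix'
          have h5 : σ * c * σ = c⁻¹ := by rw [← inv_inv (σ * c * σ), h4]
          rw [hσi]; exact h5
        -- σ stabilizes the support of c
        have hsupstab : ∀ x ∈ c.support, σ x ∈ c.support := by
          intro x hx
          have h1 : (σ * c * σ⁻¹).support = c.support.map σ.toEmbedding :=
            Equiv.Perm.support_conj
          rw [hconjc, Equiv.Perm.support_inv] at h1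
          rw [h1, Finset.mem_map]
          exact ⟨x, hx, rfl⟩
        -- pick a point in the support
        obtain ⟨x, hx⟩ := hcyc.nonempty_support
        have hσx : σ x ∈ c.support := hsupstab x hx
        obtain ⟨a, ha⟩ := hcyc.exists_pow_eq (Equiv.Perm.mem_support.mp hx)
          (Equiv.Perm.mem_support.mp hσx)
        -- σ ∘ c^i = (c^i)⁻¹ ∘ σ
        have hpow : ∀ i : ℕ, σ * c ^ i * σ⁻¹ = (c ^ i)⁻¹ := by
          intro i
          have h5 : (σ * c * σ⁻¹) ^ i = σ * c ^ i * σ⁻¹ := by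
            induction i with
            | zero => simp
            | succ i ih =>
              rw [pow_succ, pow_succ, ih, hσi]
              calc σ * c ^ i * σ * (σ * c * σ) = σ * c ^ i * (σ * σ) * c * σ := by group
                _ = σ * (c ^ i * c) * σ := by rw [hσ2]; group
          rw [← h5, hconjc, inv_pow]
        have hswap : ∀ (i : ℕ) (y : Fin n), σ ((c ^ i) y) = (c ^ i)⁻¹ (σ y) := by
          intro i y
          have h1 : (σ * c ^ i * σ⁻¹) (σ y) = (c ^ i)⁻¹ (σ y) := by rw [hpow]
          simp only [Equiv.Perm.mul_apply] at h1
          rw [hσi, hσσ] at h1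
          exact h1
        rcases Nat.even_or_odd a with ⟨b, hb⟩ | ⟨b, hb⟩
        · -- a = 2b : σ fixes c^b x
          apply hσf ((c ^ b) x)
          rw [hswap b x, ← ha, hb]
          rw [pow_add, Equiv.Perm.mul_apply, (show (c ^ b)⁻¹ ((c ^ b) ((c ^ b) x)) = (c ^ b) x from Equiv.symm_apply_apply (c ^ b) _)]
        · -- a = 2b + 1 : τ fixes c^(b+1) x
          apply hτf ((c ^ (b + 1)) x)
          have hτeq : τ = π * σ := by
            rw [hπ, mul_assoc, hσ2, mul_one]
          have h1 : σ ((c ^ (b + 1)) x) = (c ^ b) x := by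
            rw [hswap (b + 1) x, ← ha, hb]
            have h7 : (2 : ℕ) * b + 1 = (b + 1) + b := by ring
            have h8 : (c ^ ((b + 1) + b)) x = (c ^ (b + 1)) ((c ^ b) x) := by
              rw [pow_add]; rfl
            rw [h7, h8, (show (c ^ (b + 1))⁻¹ ((c ^ (b + 1)) ((c ^ b) x)) = (c ^ b) x from Equiv.symm_apply_apply (c ^ (b + 1)) _)]
          have hcb : (c ^ b) x ∈ c.support := Equiv.Perm.pow_apply_mem_support.mpr hx
          rw [hτeq]
          simp only [Equiv.Perm.mul_apply]
          rw [h1, ← hagree _ hcb, ← Equiv.Perm.mul_apply, ← pow_succ']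
    exact (Nat.not_even_iff_odd.mpr hodd) heven
end

section
/- For each n ≥ 1, the number of pairs (σ, τ) of fixed-point-free involutions of [2n] such that τ ∘ σ has exactly 2·c_k cycles of length k for each k equals the number of permutations of [2n] with exactly c_k cycles of length 2k for each k and no cycles of odd length. -/
open Equiv

open Equiv.Perm Finset

theorem Equiv.Perm.apply_inv_self {β : Type*} (f : Perm β) (x : β) : f (f⁻¹ x) = x :=
  f.apply_symm_apply x

theorem Equiv.Perm.inv_apply_self {β : Type*} (f : Perm β) (x : β) : f⁻¹ (f x) = x :=
  f.symm_apply_apply x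

variable {α : Type*} [Fintype α] [DecidableEq α]

/-- period of a point -/
def per (g : Perm α) (x : α) : ℕ := if g x = x then 1 else (g.cycleOf x).support.card

lemma per_pos (g : Perm α) (x : α) : 0 < per g x := by
  unfold per
  split
  · norm_num
  · have := Equiv.Perm.two_le_card_support_cycleOf_iff (f := g) (x := x) |>.2 ‹_›
    omega

lemma zpow_per_dvd (g : Perm α) (x : α) (i : ℤ) : (g ^ i) x = x ↔ (per g x : ℤ) ∣ i := by
  unfold per
  split
  · simp only [Nat.cast_one, isUnit_one, IsUnit.dvd, iff_true]
    exact zpow_apply_eq_self_of_apply_eq_self ‹_› i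
  · have hx : x ∈ (g.cycleOf x).support :=
      mem_support_cycleOf_iff.2 ⟨SameCycle.refl _ _, mem_support.2 ‹_›⟩
    exact (g.isCycleOn_support_cycleOf x).zpow_apply_eq hx

lemma pow_per_dvd (g : Perm α) (x : α) (i : ℕ) : (g ^ i) x = x ↔ per g x ∣ i := by
  rw [← zpow_natCast, zpow_per_dvd, Int.natCast_dvd_natCast]

lemma per_eq_one_iff (g : Perm α) (x : α) : per g x = 1 ↔ g x = x := by
  constructor
  · intro h
    have := (pow_per_dvd g x 1).2 (by simp [h])
    simpa using this
  · intro h; simp [per, h]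

lemma per_eq_of (g : Perm α) (x : α) (d : ℕ) (h : ∀ i : ℕ, (g ^ i) x = x ↔ d ∣ i) :
    per g x = d := by
  refine Nat.dvd_antisymm ?_ ?_
  · exact (pow_per_dvd g x d).1 ((h d).2 dvd_rfl)
  · exact (h (per g x)).1 ((pow_per_dvd g x (per g x)).2 dvd_rfl)

lemma count_mul_eq_card (g : Perm α) {k : ℕ} (hk : 2 ≤ k) :
    (Multiset.count k g.cycleType) * k = (univ.filter fun x => per g x = k).card := by
  classical
  have hset : (univ.filter fun x => per g x = k) =
      (g.cycleFactorsFinset.filter fun c => c.support.card = k).biUnion fun c => c.support := by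
    ext x
    simp only [mem_filter, mem_univ, true_and, mem_biUnion]
    constructor
    · intro hx
      have hfix : g x ≠ x := by
        intro h; rw [per, if_pos h] at hx; omega
      refine ⟨g.cycleOf x, ?_, ?_⟩
      · refine ⟨cycleOf_mem_cycleFactorsFinset_iff.2 (mem_support.2 hfix), ?_⟩
        rwa [per, if_neg hfix] at hx
      · exact mem_support_cycleOf_iff.2 ⟨SameCycle.refl _ _, mem_support.2 hfix⟩
    · rintro ⟨c, hc, hxc⟩
      obtain ⟨hc1, hc2⟩ := hc
      have hcx : c = g.cycleOf x := cycle_is_cycleOf hxc hc1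
      have hfix : g x ≠ x := by
        have h1 := (mem_cycleFactorsFinset_iff.1 hc1).2 x hxc
        have hcxne : c x ≠ x := mem_support.1 hxc
        rwa [h1] at hcxne
      rw [per, if_neg hfix, ← hcx]; exact hc2
  rw [hset]
  rw [Finset.card_biUnion]
  · have : ∀ c ∈ g.cycleFactorsFinset.filter fun c => c.support.card = k,
        c.support.card = k := fun c hc => (mem_filter.1 hc).2
    rw [Finset.sum_congr rfl this, Finset.sum_const, smul_eq_mul]
    congr 1
    rw [cycleType_def, Multiset.count_eq_card_filter_eq]
    rw [Multiset.filter_map, Multiset.card_map, Finset.card]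
    congr 1
    simp only [Finset.filter_val]
    congr 1
    ext c
    simp [eq_comm, Function.comp]
  · intro c1 h1 c2 h2 hne
    have := g.cycleFactorsFinset_pairwise_disjoint (mem_filter.1 h1).1 (mem_filter.1 h2).1 hne
    exact Equiv.Perm.Disjoint.disjoint_support this
variable {α : Type*} [Fintype α] [DecidableEq α]

section FDir

variable [LinearOrder α]

/-- the orbit of `x` under `g` as a finset -/
def orb (g : Perm α) (x : α) : Finset α := univ.filter fun y => g.SameCycle y x

lemma mem_orb {g : Perm α} {x y : α} : y ∈ orb g x ↔ g.SameCycle y x := by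
  simp [orb]

lemma orb_nonempty (g : Perm α) (x : α) : (orb g x).Nonempty :=
  ⟨x, mem_orb.2 (SameCycle.refl _ _)⟩

lemma orb_eq_of_sameCycle {g : Perm α} {x y : α} (h : g.SameCycle y x) :
    orb g y = orb g x := by
  ext z; simp only [mem_orb]
  exact ⟨fun hz => hz.trans h, fun hz => hz.trans h.symm⟩

/-- min of the orbit -/
def omin (g : Perm α) (x : α) : α := (orb g x).min' (orb_nonempty g x)

lemma omin_eq_of_sameCycle {g : Perm α} {x y : α} (h : g.SameCycle y x) :
    omin g y = omin g x := by
  unfold omin; congr 1; exact orb_eq_of_sameCycle h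

lemma sameCycle_omin (g : Perm α) (x : α) : g.SameCycle (omin g x) x :=
  mem_orb.1 ((orb g x).min'_mem _)

/-- `x` is in the "good half" of its orbit -/
def Egood (π : Perm α) (x : α) : Prop := (π ^ 2).SameCycle (omin π x) x

instance (π : Perm α) (x : α) : Decidable (Egood π x) := by unfold Egood; infer_instance

end FDir

section FDir2

variable [LinearOrder α]

set_option linter.unusedSectionVars false

lemma sameCycle_iff_pow {g : Perm α} {x y : α} :
    g.SameCycle x y ↔ ∃ i : ℕ, (g ^ i) x = y := by
  constructor
  · intro h
    obtain ⟨i, _, hi⟩ := h.exists_pow_eq'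
    exact ⟨i, hi⟩
  · rintro ⟨i, rfl⟩
    exact ⟨i, by rw [zpow_natCast]⟩

lemma sq_pow_apply (π : Perm α) (i : ℕ) (x : α) : ((π ^ 2) ^ i) x = (π ^ (2 * i)) x := by
  rw [← pow_mul]

lemma not_sameCycle_sq_apply {π : Perm α} {x : α} (hev : 2 ∣ per π x) :
    ¬ (π ^ 2).SameCycle x (π x) := by
  rintro ⟨i, hi⟩
  have h2 : ((π ^ 2 : Perm α) ^ i) = π ^ (2 * i) := by
    rw [← zpow_natCast π 2, ← zpow_mul]
    norm_num
  rw [h2] at hi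
  have hfix : (π ^ (-1 + 2 * i)) x = x := by
    rw [zpow_add]
    simp only [Perm.mul_apply, hi]
    simp
  rw [zpow_per_dvd] at hfix
  have h2d : (2:ℤ) ∣ (per π x : ℤ) := by exact_mod_cast hev
  have := dvd_trans h2d hfix
  omega

lemma sameCycle_sq_or {π : Perm α} {x y : α} (h : π.SameCycle y x) :
    (π ^ 2).SameCycle y x ∨ (π ^ 2).SameCycle y (π x) := by
  obtain ⟨i, hi⟩ := sameCycle_iff_pow.1 h.symm
  rcases Nat.even_or_odd i with ⟨j, hj⟩ | ⟨j, hj⟩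
  · left
    refine SameCycle.symm ⟨(j : ℤ), ?_⟩
    rw [zpow_natCast, sq_pow_apply, ← hi, hj]; ring_nf
  · right
    refine SameCycle.symm ?_
    have : (π ^ (2 * j)) (π x) = y := by
      rw [← hi, hj, pow_succ, Perm.mul_apply]
    exact ⟨(j : ℤ), by rw [zpow_natCast, sq_pow_apply, this]⟩

lemma egood_iff_not_apply {π : Perm α} {x : α} (hev : 2 ∣ per π x) :
    Egood π x ↔ ¬ Egood π (π x) := by
  have hmin : omin π (π x) = omin π x :=
    omin_eq_of_sameCycle (sameCycle_apply_left.2 (SameCycle.refl _ _))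
  unfold Egood
  rw [hmin]
  have hm := sameCycle_omin π x
  rcases sameCycle_sq_or hm with h | h
  · simp only [h, true_iff]
    intro h2
    exact not_sameCycle_sq_apply hev (h.symm.trans h2)
  · constructor
    · intro h2 _
      exact not_sameCycle_sq_apply hev (h2.symm.trans h)
    · intro h2
      exact absurd h (by simpa using h2)

lemma per_apply (g : Perm α) (x : α) : per g (g x) = per g x := by
  rcases eq_or_ne (g x) x with h | h
  · rw [h]
  · have h1 : g (g x) ≠ g x := fun hc => h (g.injective hc)
    rw [per, if_neg h1, per, if_neg h, cycleOf_self_apply]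

lemma per_inv_apply (g : Perm α) (x : α) : per g (g⁻¹ x) = per g x := by
  have h := per_apply g (g⁻¹ x)
  rw [Equiv.Perm.apply_inv_self] at h
  exact h.symm

lemma egood_inv_iff_not {π : Perm α} {x : α} (hev : 2 ∣ per π x) :
    Egood π (π⁻¹ x) ↔ ¬ Egood π x := by
  have hev' : 2 ∣ per π (π⁻¹ x) := by rwa [per_inv_apply]
  have := egood_iff_not_apply hev'
  rw [Equiv.Perm.apply_inv_self] at this
  constructor
  · intro h; exact (this.1 h)
  · intro h
    by_contra hc
    rw [this] at hc
    exact hc h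

lemma egood_sq_apply {π : Perm α} {x : α} : Egood π ((π ^ 2) x) ↔ Egood π x := by
  unfold Egood
  have hsc : π.SameCycle ((π ^ 2) x) x := by
    refine ⟨-2, ?_⟩
    rw [← zpow_natCast π 2, ← Perm.mul_apply, ← zpow_add]
    norm_num
  rw [omin_eq_of_sameCycle hsc]
  exact sameCycle_apply_right

lemma egood_sq_inv_apply {π : Perm α} {x : α} : Egood π ((π ^ 2)⁻¹ x) ↔ Egood π x := by
  have h := egood_sq_apply (π := π) (x := (π ^ 2)⁻¹ x)
  rw [Equiv.Perm.apply_inv_self] at h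
  exact h.symm

/-- the first involution attached to `π` -/
def fsig (π : Perm α) (x : α) : α := if Egood π x then π x else π⁻¹ x

/-- the second involution attached to `π` -/
def ftau (π : Perm α) (x : α) : α := if Egood π x then π⁻¹ x else π x

lemma fsig_invol {π : Perm α} (hev : ∀ x, 2 ∣ per π x) :
    Function.Involutive (fsig π) := by
  intro x
  unfold fsig
  by_cases h : Egood π x
  · rw [if_pos h, if_neg ((egood_iff_not_apply (hev x)).1 h), Equiv.Perm.inv_apply_self]
  · rw [if_neg h, if_pos ((egood_inv_iff_not (hev x)).2 h), Equiv.Perm.apply_inv_self]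

lemma ftau_invol {π : Perm α} (hev : ∀ x, 2 ∣ per π x) :
    Function.Involutive (ftau π) := by
  intro x
  unfold ftau
  by_cases h : Egood π x
  · have h2 : ¬ Egood π (π⁻¹ x) := fun hc => ((egood_inv_iff_not (hev x)).1 hc) h
    rw [if_pos h, if_neg h2, Equiv.Perm.apply_inv_self]
  · have h2 : Egood π (π x) := by
      by_contra hc
      exact h ((egood_iff_not_apply (hev x)).2 hc)
    rw [if_neg h, if_pos h2, Equiv.Perm.inv_apply_self]

lemma apply_ne_self_of_even {π : Perm α} {x : α} (hev : 2 ∣ per π x) : π x ≠ x := by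
  intro h
  have h1 := (per_eq_one_iff π x).2 h
  omega

lemma fsig_ne {π : Perm α} (hev : ∀ x, 2 ∣ per π x) (x : α) : fsig π x ≠ x := by
  unfold fsig
  have h1 := apply_ne_self_of_even (hev x)
  split
  · exact h1
  · intro h; exact h1 (by conv_lhs => rw [← h, Equiv.Perm.apply_inv_self])

lemma ftau_ne {π : Perm α} (hev : ∀ x, 2 ∣ per π x) (x : α) : ftau π x ≠ x := by
  unfold ftau
  have h1 := apply_ne_self_of_even (hev x)
  split
  · intro h; exact h1 (by conv_lhs => rw [← h, Equiv.Perm.apply_inv_self])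
  · exact h1


lemma sq_zpow (π : Perm α) (b : ℤ) : ((π ^ 2 : Perm α) ^ b) = π ^ (2 * b) := by
  rw [← zpow_natCast π 2, ← zpow_mul]
  norm_num

lemma inv_pow_fix_iff (g : Perm α) (i : ℕ) (x : α) : (g⁻¹ ^ i) x = x ↔ (g ^ i) x = x := by
  rw [inv_pow]
  constructor
  · intro h
    conv_lhs => rw [← h, Equiv.Perm.apply_inv_self]
  · intro h
    conv_lhs => rw [← h, Equiv.Perm.inv_apply_self]

section Rho

variable {π ρ : Perm α} (hev : ∀ x, 2 ∣ per π x)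
  (hρ : ∀ x, ρ x = if Egood π x then (π ^ 2) x else (π ^ 2)⁻¹ x)

include hρ

lemma rho_pow (i : ℕ) (x : α) :
    (ρ ^ i) x = if Egood π x then ((π ^ 2) ^ i) x else ((π ^ 2)⁻¹ ^ i) x := by
  induction i generalizing x with
  | zero => simp
  | succ i ih =>
    rw [pow_succ, Perm.mul_apply, hρ x]
    by_cases h : Egood π x
    · rw [if_pos h, if_pos h, ih ((π ^ 2) x), if_pos (egood_sq_apply.2 h),
        pow_succ (π ^ 2) i]
      rfl
    · rw [if_neg h, if_neg h, ih ((π ^ 2)⁻¹ x), if_neg (fun hc => h (egood_sq_inv_apply.1 hc)),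
        pow_succ (π ^ 2)⁻¹ i]
      rfl

lemma rho_inv (x : α) : ρ⁻¹ x = if Egood π x then (π ^ 2)⁻¹ x else (π ^ 2) x := by
  rw [Perm.inv_eq_iff_eq]
  by_cases h : Egood π x
  · rw [if_pos h, hρ, if_pos (egood_sq_inv_apply.2 h), Equiv.Perm.apply_inv_self]
  · rw [if_neg h, hρ, if_neg (fun hc => h (egood_sq_apply.1 hc)), Equiv.Perm.inv_apply_self]

lemma rho_inv_pow (i : ℕ) (x : α) :
    (ρ⁻¹ ^ i) x = if Egood π x then ((π ^ 2)⁻¹ ^ i) x else ((π ^ 2) ^ i) x := by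
  induction i generalizing x with
  | zero => simp
  | succ i ih =>
    rw [pow_succ, Perm.mul_apply, rho_inv hρ]
    by_cases h : Egood π x
    · rw [if_pos h, if_pos h, ih ((π ^ 2)⁻¹ x), if_pos (egood_sq_inv_apply.2 h),
        pow_succ (π ^ 2)⁻¹ i]
      rfl
    · rw [if_neg h, if_neg h, ih ((π ^ 2) x), if_neg (fun hc => h (egood_sq_apply.1 hc)),
        pow_succ (π ^ 2) i]
      rfl

lemma sameCycle_rho_iff {x y : α} : ρ.SameCycle y x ↔ (π ^ 2).SameCycle y x := by
  constructor
  · intro h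
    obtain ⟨i, hi⟩ := sameCycle_iff_pow.1 h.symm
    rw [rho_pow hρ] at hi
    by_cases hx : Egood π x
    · rw [if_pos hx] at hi
      exact (SameCycle.symm ⟨i, by rw [zpow_natCast, hi]⟩)
    · rw [if_neg hx] at hi
      refine SameCycle.symm ⟨-i, ?_⟩
      rw [zpow_neg, zpow_natCast, ← inv_pow, hi]
  · intro h
    obtain ⟨i, hi⟩ := sameCycle_iff_pow.1 h.symm
    by_cases hx : Egood π x
    · refine SameCycle.symm ⟨i, ?_⟩
      rw [zpow_natCast, rho_pow hρ, if_pos hx, hi]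
    · refine SameCycle.symm (SameCycle.of_inv ⟨i, ?_⟩)
      rw [zpow_natCast, rho_inv_pow hρ, if_neg hx, hi]


include hev

lemma per_rho (x : α) : 2 * per ρ x = per π x := by
  obtain ⟨d, hd⟩ := hev x
  have : per ρ x = d := by
    refine per_eq_of ρ x d fun i => ?_
    rw [rho_pow hρ]
    by_cases h : Egood π x
    · rw [if_pos h, sq_pow_apply, pow_per_dvd, hd]
      exact Nat.mul_dvd_mul_iff_left (by norm_num : 0 < 2)
    · rw [if_neg h, inv_pow_fix_iff, sq_pow_apply, pow_per_dvd, hd]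
      exact Nat.mul_dvd_mul_iff_left (by norm_num : 0 < 2)
  omega

end Rho

lemma orb_eq_union {π : Perm α} (x : α) :
    orb π x = orb (π ^ 2) x ∪ orb (π ^ 2) (π x) := by
  ext y
  simp only [mem_orb, Finset.mem_union]
  constructor
  · exact sameCycle_sq_or
  · rintro (⟨b, hb⟩ | ⟨b, hb⟩)
    · rw [sq_zpow] at hb
      exact ⟨2 * b, hb⟩
    · rw [sq_zpow] at hb
      refine ⟨2 * b - 1, ?_⟩
      have : (π ^ (2 * b - 1)) y = (π⁻¹) ((π ^ (2 * b)) y) := by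
        rw [← Perm.mul_apply, ← zpow_neg_one, ← zpow_add]
        congr 1
        ring
      rw [this, hb, Equiv.Perm.inv_apply_self]


section GDir

variable {σ τ : Perm α}

/-- combined orbit of `x` under the group generated by two involutions -/
def orbC (σ τ : Perm α) (x : α) : Finset α := orb (τ * σ) x ∪ orb (τ * σ) (σ x)

lemma mem_orbC_self (σ τ : Perm α) (x : α) : x ∈ orbC σ τ x :=
  Finset.mem_union_left _ (mem_orb.2 (SameCycle.refl _ _))

/-- the minimum of the combined orbit -/
def cmin (σ τ : Perm α) (x : α) : α := (orbC σ τ x).min' ⟨x, mem_orbC_self σ τ x⟩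

/-- `x` is in the "good half" of its combined orbit -/
def Fgood (σ τ : Perm α) (x : α) : Prop := (τ * σ).SameCycle (cmin σ τ x) x

instance (σ τ : Perm α) (x : α) : Decidable (Fgood σ τ x) := by unfold Fgood; infer_instance

section withInv

variable (hσ : ∀ x, σ (σ x) = x) (hτ : ∀ x, τ (τ x) = x)

include hσ hτ

lemma conj_zpow_apply (b : ℤ) (y : α) :
    σ (((τ * σ) ^ b) y) = ((τ * σ) ^ (-b)) (σ y) := by
  have hσ1 : σ * σ = 1 := Equiv.ext fun x => hσ x
  have hτ1 : τ * τ = 1 := Equiv.ext fun x => hτ x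
  have hσi : σ⁻¹ = σ := (inv_eq_of_mul_eq_one_right hσ1).symm ▸ rfl
  have hτi : τ⁻¹ = τ := (inv_eq_of_mul_eq_one_right hτ1).symm ▸ rfl
  have hconj : σ * (τ * σ) * σ⁻¹ = (τ * σ)⁻¹ := by
    rw [mul_inv_rev, hσi, hτi]
    calc σ * (τ * σ) * σ = σ * τ * (σ * σ) := by group
    _ = σ * τ := by rw [hσ1, mul_one]
  have h1 : σ * ((τ * σ) ^ b) * σ⁻¹ = (τ * σ) ^ (-b) := by
    have h2 := map_zpow (MulAut.conj σ) (τ * σ) b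
    simp only [MulAut.conj_apply] at h2
    rw [h2, hconj, inv_zpow, zpow_neg]
  have h3 : σ * ((τ * σ) ^ b) = ((τ * σ) ^ (-b)) * σ := by
    rw [← h1, mul_assoc, hσi, hσ1, mul_one]
  calc σ (((τ * σ) ^ b) y) = (σ * ((τ * σ) ^ b)) y := rfl
  _ = (((τ * σ) ^ (-b)) * σ) y := by rw [h3]
  _ = ((τ * σ) ^ (-b)) (σ y) := rfl

lemma tau_eq_rho_sig (x : α) : τ x = (τ * σ) (σ x) := by
  rw [Perm.mul_apply, hσ]

lemma sig_sameCycle {x y : α} (h : (τ * σ).SameCycle y x) :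
    (τ * σ).SameCycle (σ y) (σ x) := by
  obtain ⟨j, hj⟩ := h
  exact ⟨-j, by rw [← conj_zpow_apply hσ hτ, hj]⟩

lemma orbC_eq_of_mem {x z : α} (h : z ∈ orbC σ τ x) : orbC σ τ z = orbC σ τ x := by
  rcases Finset.mem_union.1 h with h1 | h1
  · rw [mem_orb] at h1
    unfold orbC
    rw [orb_eq_of_sameCycle h1, orb_eq_of_sameCycle (sig_sameCycle hσ hτ h1)]
  · rw [mem_orb] at h1
    unfold orbC
    have h2 : (τ * σ).SameCycle (σ z) x := by
      have := sig_sameCycle hσ hτ h1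
      rwa [hσ] at this
    rw [orb_eq_of_sameCycle h1, orb_eq_of_sameCycle h2, Finset.union_comm]

lemma cmin_eq_of_mem {x z : α} (h : z ∈ orbC σ τ x) : cmin σ τ z = cmin σ τ x := by
  unfold cmin; congr 1; exact orbC_eq_of_mem hσ hτ h

lemma sig_mem_orbC (x : α) : σ x ∈ orbC σ τ x :=
  Finset.mem_union_right _ (mem_orb.2 (SameCycle.refl _ _))

lemma rho_mem_orbC (x : α) : (τ * σ) x ∈ orbC σ τ x :=
  Finset.mem_union_left _ (mem_orb.2 ⟨-1, by simp⟩)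

lemma rho_inv_mem_orbC (x : α) : (τ * σ)⁻¹ x ∈ orbC σ τ x :=
  Finset.mem_union_left _ (mem_orb.2 ⟨1, by simp⟩)

lemma tau_mem_orbC (x : α) : τ x ∈ orbC σ τ x := by
  rw [tau_eq_rho_sig hσ hτ]
  exact Finset.mem_union_right _ (mem_orb.2 ⟨-1, by simp⟩)

lemma fgood_rho_iff (x : α) : Fgood σ τ ((τ * σ) x) ↔ Fgood σ τ x := by
  unfold Fgood
  rw [cmin_eq_of_mem hσ hτ (rho_mem_orbC hσ hτ x)]
  exact sameCycle_apply_right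

lemma fgood_rho_inv_iff (x : α) : Fgood σ τ ((τ * σ)⁻¹ x) ↔ Fgood σ τ x := by
  have h := fgood_rho_iff hσ hτ ((τ * σ)⁻¹ x)
  rw [Equiv.Perm.apply_inv_self] at h
  exact h.symm

end withInv

section withFpf

variable (hσ : ∀ x, σ (σ x) = x) (hτ : ∀ x, τ (τ x) = x)
  (hσf : ∀ x, σ x ≠ x) (hτf : ∀ x, τ x ≠ x)

include hσ hτ hσf hτf

lemma not_sameCycle_sig (x : α) : ¬ (τ * σ).SameCycle x (σ x) := by
  rintro ⟨a, ha⟩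
  rcases Int.even_or_odd a with ⟨t, ht⟩ | ⟨t, ht⟩
  · refine hσf (((τ * σ) ^ t) x) ?_
    rw [conj_zpow_apply hσ hτ, ← ha, ← Perm.mul_apply, ← zpow_add]
    congr 2
    omega
  · refine hτf (((τ * σ) ^ (t + 1)) x) ?_
    have hy : σ (((τ * σ) ^ (t + 1)) x) = ((τ * σ) ^ t) x := by
      rw [conj_zpow_apply hσ hτ, ← ha, ← Perm.mul_apply, ← zpow_add]
      congr 2
      omega
    rw [tau_eq_rho_sig hσ hτ, hy, ← Perm.mul_apply, ← zpow_one_add]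
    congr 2
    omega

lemma fgood_sig_iff (x : α) : Fgood σ τ (σ x) ↔ ¬ Fgood σ τ x := by
  have hmin : cmin σ τ (σ x) = cmin σ τ x := cmin_eq_of_mem hσ hτ (sig_mem_orbC hσ hτ x)
  unfold Fgood
  rw [hmin]
  constructor
  · intro h1 h2
    exact not_sameCycle_sig hσ hτ hσf hτf x (h2.symm.trans h1)
  · intro h1
    have hm : cmin σ τ x ∈ orbC σ τ x := (orbC σ τ x).min'_mem _
    rcases Finset.mem_union.1 hm with h2 | h2
    · exact absurd (mem_orb.1 h2) h1
    · exact mem_orb.1 h2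

lemma fgood_tau_iff (x : α) : Fgood σ τ (τ x) ↔ ¬ Fgood σ τ x := by
  rw [tau_eq_rho_sig hσ hτ, fgood_rho_iff hσ hτ, fgood_sig_iff hσ hτ hσf hτf]

end withFpf

section PiCon

variable (hσ : ∀ x, σ (σ x) = x) (hτ : ∀ x, τ (τ x) = x)
  (hσf : ∀ x, σ x ≠ x) (hτf : ∀ x, τ x ≠ x)
  {π : Perm α} (hπ : ∀ x, π x = if Fgood σ τ x then σ x else τ x)

include hσ hτ hσf hτf hπ

lemma pi_inv_apply (x : α) : π⁻¹ x = if Fgood σ τ x then τ x else σ x := by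
  rw [Perm.inv_eq_iff_eq]
  by_cases h : Fgood σ τ x
  · rw [if_pos h, hπ, if_neg (fun hc => (fgood_tau_iff hσ hτ hσf hτf x).1 hc h), hτ]
  · rw [if_neg h, hπ, if_pos ((fgood_sig_iff hσ hτ hσf hτf x).2 h), hσ]

lemma pi_sq (x : α) : (π ^ 2) x = if Fgood σ τ x then (τ * σ) x else (τ * σ)⁻¹ x := by
  rw [pow_two, Perm.mul_apply, hπ x]
  by_cases h : Fgood σ τ x
  · rw [if_pos h, if_pos h, hπ (σ x), if_neg (fun hc => (fgood_sig_iff hσ hτ hσf hτf x).1 hc h),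
      Perm.mul_apply]
  · rw [if_neg h, if_neg h, hπ (τ x), if_pos ((fgood_tau_iff hσ hτ hσf hτf x).2 h),
      eq_comm, Perm.inv_eq_iff_eq, Perm.mul_apply, hσ, hτ]

lemma fgood_rho_pow_iff (i : ℕ) (x : α) :
    Fgood σ τ (((τ * σ) ^ i) x) ↔ Fgood σ τ x := by
  induction i with
  | zero => simp
  | succ i ih =>
    rw [pow_succ', Perm.mul_apply, fgood_rho_iff hσ hτ, ih]

lemma fgood_rho_inv_pow_iff (i : ℕ) (x : α) :
    Fgood σ τ (((τ * σ)⁻¹ ^ i) x) ↔ Fgood σ τ x := by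
  induction i with
  | zero => simp
  | succ i ih =>
    rw [pow_succ', Perm.mul_apply, fgood_rho_inv_iff hσ hτ, ih]

lemma pi_even_pow (i : ℕ) (x : α) :
    (π ^ (2 * i)) x = if Fgood σ τ x then ((τ * σ) ^ i) x else ((τ * σ)⁻¹ ^ i) x := by
  induction i generalizing x with
  | zero => simp
  | succ i ih =>
    have h2 : 2 * (i + 1) = 2 * i + 2 := by ring
    rw [h2, pow_add, Perm.mul_apply, pi_sq hσ hτ hσf hτf hπ x]
    by_cases h : Fgood σ τ x
    · rw [if_pos h, if_pos h, ih, if_pos ((fgood_rho_iff hσ hτ x).2 h), pow_succ (τ * σ) i]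
      rfl
    · rw [if_neg h, if_neg h, ih, if_neg (fun hc => h ((fgood_rho_inv_iff hσ hτ x).1 hc)),
        pow_succ (τ * σ)⁻¹ i]
      rfl

lemma pi_odd_pow (i : ℕ) (x : α) :
    (π ^ (2 * i + 1)) x = if Fgood σ τ x then σ (((τ * σ) ^ i) x)
      else τ (((τ * σ)⁻¹ ^ i) x) := by
  rw [pow_succ', Perm.mul_apply, pi_even_pow hσ hτ hσf hτf hπ]
  by_cases h : Fgood σ τ x
  · rw [if_pos h, if_pos h, hπ, if_pos ((fgood_rho_pow_iff hσ hτ hσf hτf hπ i x).2 h)]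
  · rw [if_neg h, if_neg h, hπ, if_neg (fun hc => h ((fgood_rho_inv_pow_iff hσ hτ hσf hτf hπ i x).1 hc))]


lemma pi_odd_ne (i : ℕ) (x : α) : (π ^ (2 * i + 1)) x ≠ x := by
  rw [pi_odd_pow hσ hτ hσf hτf hπ]
  by_cases h : Fgood σ τ x
  · rw [if_pos h]
    intro hc
    refine not_sameCycle_sig hσ hτ hσf hτf x (SameCycle.symm ⟨-(i:ℤ), ?_⟩)
    rw [← zpow_natCast (τ * σ) i, conj_zpow_apply hσ hτ] at hc
    exact hc
  · rw [if_neg h]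
    intro hc
    refine not_sameCycle_sig hσ hτ hσf hτf x (SameCycle.symm ⟨1 + (i:ℤ), ?_⟩)
    rw [tau_eq_rho_sig hσ hτ, inv_pow, ← zpow_natCast (τ * σ) i, ← zpow_neg,
      conj_zpow_apply hσ hτ, neg_neg, ← Perm.mul_apply, ← zpow_one_add] at hc
    exact hc

lemma pi_per (x : α) : per π x = 2 * per (τ * σ) x := by
  refine per_eq_of _ _ _ fun j => ?_
  rcases Nat.even_or_odd j with ⟨i, hi⟩ | ⟨i, hi⟩
  · rw [show j = 2 * i by omega, pi_even_pow hσ hτ hσf hτf hπ]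
    by_cases h : Fgood σ τ x
    · rw [if_pos h, pow_per_dvd]
      exact (Nat.mul_dvd_mul_iff_left (by norm_num : 0 < 2)).symm
    · rw [if_neg h, inv_pow_fix_iff, pow_per_dvd]
      exact (Nat.mul_dvd_mul_iff_left (by norm_num : 0 < 2)).symm
  · rw [show j = 2 * i + 1 by omega]
    constructor
    · intro hc
      exact absurd hc (pi_odd_ne hσ hτ hσf hτf hπ i x)
    · intro hdvd
      exfalso
      have := dvd_trans (dvd_mul_right 2 (per (τ * σ) x)) hdvd
      omega

lemma sameCycle_pi_of_rho_base (w : α) : π.SameCycle ((τ * σ) w) w := by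
  by_cases h : Fgood σ τ w
  · refine ⟨-2, ?_⟩
    have h1 : (τ * σ) w = (π ^ 2) w := by rw [pi_sq hσ hτ hσf hτf hπ, if_pos h]
    rw [h1, ← zpow_natCast π 2, ← Perm.mul_apply, ← zpow_add]
    norm_num
  · refine ⟨2, ?_⟩
    have h2 : ¬ Fgood σ τ ((τ * σ) w) := fun hc => h ((fgood_rho_iff hσ hτ w).1 hc)
    have h1 : (π ^ 2) ((τ * σ) w) = (τ * σ)⁻¹ ((τ * σ) w) := by
      rw [pi_sq hσ hτ hσf hτf hπ, if_neg h2]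
    rw [show ((2:ℤ)) = ((2:ℕ):ℤ) by norm_num, zpow_natCast, h1, Equiv.Perm.inv_apply_self]

lemma sameCycle_pi_of_rho_pow (i : ℕ) (w : α) : π.SameCycle (((τ * σ) ^ i) w) w := by
  induction i generalizing w with
  | zero => simpa using SameCycle.refl π w
  | succ i ih =>
    rw [pow_succ, Perm.mul_apply]
    exact (ih ((τ * σ) w)).trans (sameCycle_pi_of_rho_base hσ hτ hσf hτf hπ w)

lemma sameCycle_pi_of_rho {y w : α} (h : (τ * σ).SameCycle y w) : π.SameCycle y w := by
  obtain ⟨i, hi⟩ := sameCycle_iff_pow.1 h.symm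
  rw [← hi]
  exact sameCycle_pi_of_rho_pow hσ hτ hσf hτf hπ i w

lemma sameCycle_pi_sig (x : α) : π.SameCycle (σ x) x := by
  by_cases h : Fgood σ τ x
  · refine ⟨-1, ?_⟩
    rw [zpow_neg_one, Perm.inv_eq_iff_eq, hπ, if_pos h]
  · refine ⟨1, ?_⟩
    rw [zpow_one, hπ (σ x), if_pos ((fgood_sig_iff hσ hτ hσf hτf x).2 h), hσ]

lemma orb_pi_eq (x : α) : orb π x = orbC σ τ x := by
  ext y
  rw [mem_orb]
  constructor
  · intro hsc
    obtain ⟨i, hi⟩ := sameCycle_iff_pow.1 hsc.symm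
    rcases Nat.even_or_odd i with ⟨i', hi'⟩ | ⟨i', hi'⟩
    · rw [show i = 2 * i' by omega, pi_even_pow hσ hτ hσf hτf hπ] at hi
      refine Finset.mem_union_left _ (mem_orb.2 ?_)
      by_cases h : Fgood σ τ x
      · rw [if_pos h] at hi
        refine ⟨-(i':ℤ), ?_⟩
        rw [← hi, zpow_neg, zpow_natCast, Equiv.Perm.inv_apply_self]
      · rw [if_neg h] at hi
        refine ⟨(i':ℤ), ?_⟩
        rw [← hi, zpow_natCast, inv_pow, Equiv.Perm.apply_inv_self]
    · rw [show i = 2 * i' + 1 by omega, pi_odd_pow hσ hτ hσf hτf hπ] at hi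
      refine Finset.mem_union_right _ (mem_orb.2 ?_)
      by_cases h : Fgood σ τ x
      · rw [if_pos h] at hi
        rw [← zpow_natCast (τ * σ) i', conj_zpow_apply hσ hτ] at hi
        refine ⟨(i':ℤ), ?_⟩
        rw [← hi, ← Perm.mul_apply, ← zpow_add]
        norm_num
      · rw [if_neg h] at hi
        rw [tau_eq_rho_sig hσ hτ, inv_pow, ← zpow_natCast (τ * σ) i', ← zpow_neg,
          conj_zpow_apply hσ hτ, neg_neg, ← Perm.mul_apply, ← zpow_one_add] at hi
        refine ⟨-(1 + (i':ℤ)), ?_⟩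
        rw [← hi, ← Perm.mul_apply, ← zpow_add,
          show (-(1 + (i':ℤ)) + (1 + (i':ℤ))) = 0 by ring, zpow_zero, Perm.one_apply]
  · intro hy
    rcases Finset.mem_union.1 hy with h1 | h1
    · exact sameCycle_pi_of_rho hσ hτ hσf hτf hπ (mem_orb.1 h1)
    · exact (sameCycle_pi_of_rho hσ hτ hσf hτf hπ (mem_orb.1 h1)).trans
        (sameCycle_pi_sig hσ hτ hσf hτf hπ x)

lemma sameCycle_pi_sq_iff {y x : α} :
    (π ^ 2).SameCycle y x ↔ (τ * σ).SameCycle y x := by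
  constructor
  · intro h
    obtain ⟨i, hi⟩ := sameCycle_iff_pow.1 h.symm
    rw [sq_pow_apply, pi_even_pow hσ hτ hσf hτf hπ] at hi
    by_cases hx : Fgood σ τ x
    · rw [if_pos hx] at hi
      refine ⟨-(i:ℤ), ?_⟩
      rw [← hi, zpow_neg, zpow_natCast, Equiv.Perm.inv_apply_self]
    · rw [if_neg hx] at hi
      refine ⟨(i:ℤ), ?_⟩
      rw [← hi, zpow_natCast, inv_pow, Equiv.Perm.apply_inv_self]
  · intro h
    by_cases hx : Fgood σ τ x
    · obtain ⟨i, hi⟩ := sameCycle_iff_pow.1 h.symm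
      refine SameCycle.symm ⟨(i:ℤ), ?_⟩
      rw [zpow_natCast, sq_pow_apply, pi_even_pow hσ hτ hσf hτf hπ, if_pos hx, hi]
    · obtain ⟨i, hi⟩ := sameCycle_iff_pow.1 (sameCycle_inv.2 h).symm
      refine SameCycle.symm ⟨(i:ℤ), ?_⟩
      rw [zpow_natCast, sq_pow_apply, pi_even_pow hσ hτ hσf hτf hπ, if_neg hx, hi]

lemma egood_pi_iff (x : α) : Egood π x ↔ Fgood σ τ x := by
  have hmin : omin π x = cmin σ τ x := by
    unfold omin cmin
    congr 1
    exact orb_pi_eq hσ hτ hσf hτf hπ x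
  unfold Egood
  rw [hmin, sameCycle_pi_sq_iff hσ hτ hσf hτf hπ]
  rfl

lemma fsig_pi_eq (x : α) : fsig π x = σ x := by
  unfold fsig
  by_cases h : Fgood σ τ x
  · rw [if_pos ((egood_pi_iff hσ hτ hσf hτf hπ x).2 h), hπ, if_pos h]
  · rw [if_neg (fun hc => h ((egood_pi_iff hσ hτ hσf hτf hπ x).1 hc)),
      pi_inv_apply hσ hτ hσf hτf hπ, if_neg h]

lemma ftau_pi_eq (x : α) : ftau π x = τ x := by
  unfold ftau
  by_cases h : Fgood σ τ x
  · rw [if_pos ((egood_pi_iff hσ hτ hσf hτf hπ x).2 h),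
      pi_inv_apply hσ hτ hσf hτf hπ, if_pos h]
  · rw [if_neg (fun hc => h ((egood_pi_iff hσ hτ hσf hτf hπ x).1 hc)), hπ, if_neg h]

end PiCon

end GDir

end FDir2

section Assembly

variable [LinearOrder α]

set_option linter.unusedSectionVars false

/-- the rho identity for the pair of involutions built from `π` -/
lemma ftau_fsig (π : Perm α) (hev : ∀ x, 2 ∣ per π x) (x : α) :
    ftau π (fsig π x) = if Egood π x then (π ^ 2) x else (π ^ 2)⁻¹ x := by
  unfold fsig ftau
  by_cases h : Egood π x
  · rw [if_pos h, if_pos h, if_neg ((egood_iff_not_apply (hev x)).1 h), pow_two,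
      Perm.mul_apply]
  · rw [if_neg h, if_neg h, if_pos ((egood_inv_iff_not (hev x)).2 h), pow_two, mul_inv_rev,
      Perm.mul_apply]

lemma sq_apply_inv (π : Perm α) (x : α) : (π ^ 2) (π⁻¹ x) = π x := by
  rw [pow_two, Perm.mul_apply, Equiv.Perm.apply_inv_self]

/-- the Fgood set of the constructed pair agrees with Egood -/
lemma fgood_of_pair (π : Perm α) (hev : ∀ x, 2 ∣ per π x)
    {σ' τ' : Perm α} (hσ' : ∀ x, σ' x = fsig π x) (hτ' : ∀ x, τ' x = ftau π x) (x : α) :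
    Fgood σ' τ' x ↔ Egood π x := by
  have hρ : ∀ y, (τ' * σ') y = if Egood π y then (π ^ 2) y else (π ^ 2)⁻¹ y := by
    intro y
    rw [Perm.mul_apply, hσ', hτ', ftau_fsig π hev]
  have horb : ∀ z, orb (τ' * σ') z = orb (π ^ 2) z := by
    intro z
    ext y
    rw [mem_orb, mem_orb]
    exact sameCycle_rho_iff hρ
  have horbC : orbC σ' τ' x = orb π x := by
    unfold orbC
    rw [horb, horb, hσ']
    have : orb (π ^ 2) (fsig π x) = orb (π ^ 2) (π x) := by
      unfold fsig
      split
      · rfl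
      · exact orb_eq_of_sameCycle ⟨1, by rw [zpow_one, sq_apply_inv]⟩
    rw [this, ← orb_eq_union]
  have hmin : cmin σ' τ' x = omin π x := by
    unfold cmin omin
    congr 1
  unfold Fgood Egood
  rw [hmin, sameCycle_rho_iff hρ]

end Assembly

section Assembly2

variable [LinearOrder α]

set_option linter.unusedSectionVars false

/-- the permutation built from a pair of fixed-point-free involutions -/
def mkPi (σ τ : Perm α) (hσ : ∀ x, σ (σ x) = x) (hτ : ∀ x, τ (τ x) = x)
    (hσf : ∀ x, σ x ≠ x) (hτf : ∀ x, τ x ≠ x) : Perm α where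
  toFun x := if Fgood σ τ x then σ x else τ x
  invFun x := if Fgood σ τ x then τ x else σ x
  left_inv := by
    intro x
    dsimp only
    by_cases h : Fgood σ τ x
    · rw [if_pos h, if_neg (fun hc => (fgood_sig_iff hσ hτ hσf hτf x).1 hc h), hσ]
    · rw [if_neg h, if_pos ((fgood_tau_iff hσ hτ hσf hτf x).2 h), hτ]
  right_inv := by
    intro x
    dsimp only
    by_cases h : Fgood σ τ x
    · rw [if_pos h, if_neg (fun hc => (fgood_tau_iff hσ hτ hσf hτf x).1 hc h), hτ]
    · rw [if_neg h, if_pos ((fgood_sig_iff hσ hτ hσf hτf x).2 h), hσ]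

lemma mkPi_apply (σ τ : Perm α) (hσ : ∀ x, σ (σ x) = x) (hτ : ∀ x, τ (τ x) = x)
    (hσf : ∀ x, σ x ≠ x) (hτf : ∀ x, τ x ≠ x) (x : α) :
    mkPi σ τ hσ hτ hσf hτf x = if Fgood σ τ x then σ x else τ x := rfl

lemma invol_apply {σ : Perm α} (h : σ * σ = 1) : ∀ x, σ (σ x) = x := fun x => by
  have h1 := Equiv.ext_iff.1 h x
  rwa [Perm.mul_apply, Perm.one_apply] at h1

end Assembly2


lemma cycleCount_mul_eq {m : ℕ} (g : Perm (Fin m)) {k : ℕ} (hk : 1 ≤ k) :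
    cycleCount g k * k = (Finset.univ.filter fun x => per g x = k).card := by
  rcases eq_or_lt_of_le hk with h1 | h2
  · obtain rfl : k = 1 := h1.symm
    unfold cycleCount
    rw [if_pos rfl, mul_one]
    congr 1
    refine Finset.filter_congr fun x _ => ?_
    exact (per_eq_one_iff g x).symm
  · unfold cycleCount
    rw [if_neg (by omega)]
    exact count_mul_eq_card g h2

lemma count_transfer {m : ℕ} (g h : Perm (Fin m)) (a b : ℕ) (ha : 1 ≤ a) (hb : 1 ≤ b)
    (hrel : ∀ x, per g x = a ↔ per h x = b) :
    cycleCount g a * a = cycleCount h b * b := by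
  rw [cycleCount_mul_eq g ha, cycleCount_mul_eq h hb]
  exact congrArg Finset.card (Finset.filter_congr fun x _ => hrel x)

lemma even_per_of_no_odd {m : ℕ} (π : Perm (Fin m))
    (hodd : ∀ k, Odd k → cycleCount π k = 0) : ∀ x, 2 ∣ per π x := by
  intro x
  by_contra hctr
  have hoddm : Odd (per π x) := Nat.odd_iff.2 (by omega)
  have h0 := hodd _ hoddm
  have h1 := cycleCount_mul_eq π (per_pos π x)
  rw [h0, zero_mul] at h1
  have h2 : x ∈ Finset.univ.filter fun y => per π y = per π x :=
    Finset.mem_filter.2 ⟨Finset.mem_univ x, rfl⟩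
  have := Finset.card_pos.2 ⟨x, h2⟩
  omega

lemma cycleCount_zero_of_odd {m : ℕ} (π : Perm (Fin m)) (hev : ∀ x, 2 ∣ per π x)
    {k : ℕ} (hk : Odd k) : cycleCount π k = 0 := by
  have hk1 : 1 ≤ k := hk.pos
  have h1 := cycleCount_mul_eq π hk1
  have h2 : (Finset.univ.filter fun y => per π y = k) = ∅ := by
    refine Finset.filter_false_of_mem fun x _ => ?_
    intro hc
    obtain ⟨d, hd⟩ := hev x
    rw [hc] at hd
    have := Nat.odd_iff.1 hk
    omega
  rw [h2] at h1
  simp only [Finset.card_empty] at h1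
  have hk0 : k ≠ 0 := by omega
  rcases Nat.mul_eq_zero.1 h1 with h | h
  · exact h
  · omega

lemma mkPi_mem {m : ℕ} (σ τ : Perm (Fin m)) (hσ : ∀ x, σ (σ x) = x) (hτ : ∀ x, τ (τ x) = x)
    (hσf : ∀ x, σ x ≠ x) (hτf : ∀ x, τ x ≠ x) (c : ℕ → ℕ)
    (hcnt : ∀ k, 1 ≤ k → cycleCount (τ * σ) k = 2 * c k) :
    (∀ k, 1 ≤ k → cycleCount (mkPi σ τ hσ hτ hσf hτf) (2 * k) = c k) ∧
    (∀ k, Odd k → cycleCount (mkPi σ τ hσ hτ hσf hτf) k = 0) := by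
  have hπ : ∀ x, (mkPi σ τ hσ hτ hσf hτf) x = if Fgood σ τ x then σ x else τ x := fun _ => rfl
  have hper : ∀ x, per (mkPi σ τ hσ hτ hσf hτf) x = 2 * per (τ * σ) x :=
    pi_per hσ hτ hσf hτf hπ
  have hev : ∀ x, 2 ∣ per (mkPi σ τ hσ hτ hσf hτf) x := fun x => ⟨_, hper x⟩
  constructor
  · intro k hk
    have h2k : 1 ≤ 2 * k := by omega
    have ht := count_transfer (mkPi σ τ hσ hτ hσf hτf) (τ * σ) (2 * k) k h2k hk
      (fun x => by have := hper x; omega)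
    rw [hcnt k hk] at ht
    have h3 : cycleCount (mkPi σ τ hσ hτ hσf hτf) (2 * k) * (2 * k) = c k * (2 * k) := by
      rw [ht]; ring
    exact Nat.eq_of_mul_eq_mul_right (by omega) h3
  · intro k hk
    exact cycleCount_zero_of_odd _ hev hk


/-- The number of pairs `(σ, τ)` of fixed-point-free involutions of `[2n]` such that `τ ∘ σ`
has exactly `2·c_k` cycles of length `k` for each `k ≥ 1` equals the number of permutations
of `[2n]` with exactly `c_k` cycles of length `2k` for each `k ≥ 1` and no odd cycles. -/
theorem fpf_involution_pairs_eq_even_cycle_permutations (n : ℕ) (hn : 1 ≤ n) (c : ℕ → ℕ) :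
    Nat.card {p : Equiv.Perm (Fin (2 * n)) × Equiv.Perm (Fin (2 * n)) //
      (p.1 * p.1 = 1 ∧ ∀ i, p.1 i ≠ i) ∧ (p.2 * p.2 = 1 ∧ ∀ i, p.2 i ≠ i) ∧
      ∀ k, 1 ≤ k → cycleCount (p.2 * p.1) k = 2 * c k} =
    Nat.card {π : Equiv.Perm (Fin (2 * n)) //
      (∀ k, 1 ≤ k → cycleCount π (2 * k) = c k) ∧
      (∀ k, Odd k → cycleCount π k = 0)} := by
  refine Nat.card_eq_of_bijective
    (fun q => ⟨mkPi q.1.1 q.1.2 (invol_apply q.2.1.1) (invol_apply q.2.2.1.1)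
        q.2.1.2 q.2.2.1.2,
      mkPi_mem q.1.1 q.1.2 (invol_apply q.2.1.1) (invol_apply q.2.2.1.1)
        q.2.1.2 q.2.2.1.2 c q.2.2.2⟩) ⟨?_, ?_⟩
  · -- injective
    rintro ⟨⟨σ1, τ1⟩, ⟨hi1, hf1⟩, ⟨hi1', hf1'⟩, hc1⟩ ⟨⟨σ2, τ2⟩, ⟨hi2, hf2⟩, ⟨hi2', hf2'⟩, hc2⟩ heq
    have hval := congrArg Subtype.val heq
    simp only at hval
    have hπ1 : ∀ x, (mkPi σ1 τ1 (invol_apply hi1) (invol_apply hi1') hf1 hf1') x =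
        if Fgood σ1 τ1 x then σ1 x else τ1 x := fun _ => rfl
    have hπ2 : ∀ x, (mkPi σ1 τ1 (invol_apply hi1) (invol_apply hi1') hf1 hf1') x =
        if Fgood σ2 τ2 x then σ2 x else τ2 x := fun x => by rw [hval]; rfl
    have hσeq : σ1 = σ2 := by
      refine Equiv.ext fun x => ?_
      rw [← fsig_pi_eq (invol_apply hi1) (invol_apply hi1') hf1 hf1' hπ1 x,
        fsig_pi_eq (invol_apply hi2) (invol_apply hi2') hf2 hf2' hπ2 x]
    have hτeq : τ1 = τ2 := by
      refine Equiv.ext fun x => ?_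
      rw [← ftau_pi_eq (invol_apply hi1) (invol_apply hi1') hf1 hf1' hπ1 x,
        ftau_pi_eq (invol_apply hi2) (invol_apply hi2') hf2 hf2' hπ2 x]
    refine Subtype.ext ?_
    simp only
    rw [hσeq, hτeq]
  · -- surjective
    rintro ⟨π, hB1, hB2⟩
    have hev := even_per_of_no_odd π hB2
    have hσinv : Function.Involutive (fsig π) := fsig_invol hev
    have hτinv : Function.Involutive (ftau π) := ftau_invol hev
    set σ : Perm (Fin (2 * n)) := hσinv.toPerm (fsig π) with hσdef
    set τ : Perm (Fin (2 * n)) := hτinv.toPerm (ftau π) with hτdef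
    have hσapp : ∀ x, σ x = fsig π x := fun x =>
      congrFun (Function.Involutive.coe_toPerm hσinv) x
    have hτapp : ∀ x, τ x = ftau π x := fun x =>
      congrFun (Function.Involutive.coe_toPerm hτinv) x
    have hσ1 : σ * σ = 1 := Equiv.ext fun x => by
      rw [Perm.mul_apply, hσapp, hσapp, hσinv (x := x), Perm.one_apply]
    have hτ1 : τ * τ = 1 := Equiv.ext fun x => by
      rw [Perm.mul_apply, hτapp, hτapp, hτinv (x := x), Perm.one_apply]
    have hσf : ∀ x, σ x ≠ x := fun x => by rw [hσapp]; exact fsig_ne hev x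
    have hτf : ∀ x, τ x ≠ x := fun x => by rw [hτapp]; exact ftau_ne hev x
    have hρ : ∀ y, (τ * σ) y = if Egood π y then (π ^ 2) y else (π ^ 2)⁻¹ y := fun y => by
      rw [Perm.mul_apply, hσapp, hτapp, ftau_fsig π hev]
    have hcnt : ∀ k, 1 ≤ k → cycleCount (τ * σ) k = 2 * c k := by
      intro k hk
      have ht := count_transfer (τ * σ) π k (2 * k) hk (by omega)
        (fun x => by have := per_rho hev hρ x; omega)
      rw [hB1 k hk] at ht
      have h3 : cycleCount (τ * σ) k * k = (2 * c k) * k := by rw [ht]; ring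
      exact Nat.eq_of_mul_eq_mul_right (by omega) h3
    refine ⟨⟨(σ, τ), ⟨hσ1, hσf⟩, ⟨hτ1, hτf⟩, hcnt⟩, ?_⟩
    refine Subtype.ext ?_
    simp only
    refine Equiv.ext fun x => ?_
    rw [mkPi_apply]
    have hF := fgood_of_pair π hev hσapp hτapp x
    by_cases h : Egood π x
    · rw [if_pos (hF.2 h), hσapp]
      unfold fsig
      rw [if_pos h]
    · rw [if_neg (fun hc => h (hF.1 hc)), hτapp]
      unfold ftau
      rw [if_neg h]
end

section
/- Let σ and τ be involutions of [n] and consider the superposition graph σ ∪ τ. Each connected component of σ ∪ τ that is a path on k vertices corresponds to exactly one cycle of length k in the permutation τ ∘ σ, and each connected component that is a cycle on 2k vertices corresponds to exactly two cycles of length k in τ ∘ σ. In particular, if σ ∪ τ has p path components and q cycle components, then τ ∘ σ has exactly p + 2q cycles. -/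
open Equiv

/-- A component of the superposition is a cycle iff none of its vertices is fixed by
either involution; otherwise it is a path. -/
def IsCycleComponent {α : Type*} (σ τ : Equiv.Perm α) (C : (superGraph σ τ).ConnectedComponent) :
    Prop :=
  ∀ x, (superGraph σ τ).connectedComponentMk x = C → σ x ≠ x ∧ τ x ≠ x

/-- The number of cycles of a permutation, counting fixed points as 1-cycles. -/
def numCycles {n : ℕ} (π : Equiv.Perm (Fin n)) : ℕ :=
  π.cycleFactorsFinset.card + (Finset.univ.filter fun x => π x = x).card

lemma invol_apply_s10 {α : Type*} {σ : Equiv.Perm α} (hσ : σ * σ = 1) (x : α) : σ (σ x) = x := by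
  have := congrArg (fun p : Equiv.Perm α => p x) hσ
  simpa using this

set_option linter.unusedSectionVars false

section
variable {n : ℕ} {σ τ : Equiv.Perm (Fin n)} (hσ : σ * σ = 1) (hτ : τ * τ = 1)

include hσ hτ

lemma superGraph_adj (x y : Fin n) :
    (superGraph σ τ).Adj x y ↔ x ≠ y ∧ (σ x = y ∨ τ x = y) := by
  simp only [superGraph, SimpleGraph.fromRel_adj]
  constructor
  · rintro ⟨h, (h2 | h2) | (h2 | h2)⟩
    · exact ⟨h, Or.inl h2⟩
    · exact ⟨h, Or.inr h2⟩
    · exact ⟨h, Or.inl (by rw [← h2, invol_apply_s10 hσ])⟩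
    · exact ⟨h, Or.inr (by rw [← h2, invol_apply_s10 hτ])⟩
  · rintro ⟨h, h2⟩
    exact ⟨h, Or.inl h2⟩

lemma mk_sigma (x : Fin n) :
    (superGraph σ τ).connectedComponentMk (σ x) = (superGraph σ τ).connectedComponentMk x := by
  by_cases h : σ x = x
  · rw [h]
  · exact SimpleGraph.ConnectedComponent.connectedComponentMk_eq_of_adj
      ((superGraph_adj hσ hτ x (σ x)).2 ⟨fun he => h he.symm, Or.inl rfl⟩).symm

lemma mk_tau (x : Fin n) :
    (superGraph σ τ).connectedComponentMk (τ x) = (superGraph σ τ).connectedComponentMk x := by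
  by_cases h : τ x = x
  · rw [h]
  · exact SimpleGraph.ConnectedComponent.connectedComponentMk_eq_of_adj
      ((superGraph_adj hσ hτ x (τ x)).2 ⟨fun he => h he.symm, Or.inr rfl⟩).symm

lemma mk_zpow (k : ℤ) (x : Fin n) :
    (superGraph σ τ).connectedComponentMk (((τ * σ) ^ k) x)
      = (superGraph σ τ).connectedComponentMk x := by
  have h1 : ∀ y : Fin n, (superGraph σ τ).connectedComponentMk ((τ * σ) y)
      = (superGraph σ τ).connectedComponentMk y := by
    intro y
    rw [Equiv.Perm.mul_apply, mk_tau hσ hτ, mk_sigma hσ hτ]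
  have h2 : ∀ y : Fin n, (superGraph σ τ).connectedComponentMk ((τ * σ)⁻¹ y)
      = (superGraph σ τ).connectedComponentMk y := by
    intro y
    conv_rhs => rw [← (show (τ * σ) ((τ * σ)⁻¹ y) = y from Equiv.apply_symm_apply (τ * σ) y), h1]
  induction k using Int.induction_on with
  | zero => simp
  | succ i ih => rw [add_comm, zpow_add, zpow_one, Equiv.Perm.mul_apply, h1, ih]
  | pred i ih => rw [sub_eq_add_neg, add_comm, zpow_add, zpow_neg_one, Equiv.Perm.mul_apply, h2, ih]

lemma sigma_conj : σ * (τ * σ) * σ⁻¹ = (τ * σ)⁻¹ := by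
  have h1 : σ⁻¹ = σ := inv_eq_of_mul_eq_one_right hσ
  have h2 : τ⁻¹ = τ := inv_eq_of_mul_eq_one_right hτ
  rw [mul_inv_rev, h1, h2, mul_assoc, mul_assoc, hσ, mul_one]

lemma tau_conj : τ * (τ * σ) * τ⁻¹ = (τ * σ)⁻¹ := by
  have h1 : σ⁻¹ = σ := inv_eq_of_mul_eq_one_right hσ
  have h2 : τ⁻¹ = τ := inv_eq_of_mul_eq_one_right hτ
  rw [mul_inv_rev, h1, h2, ← mul_assoc, hτ, one_mul]

lemma sigma_zpow (k : ℤ) : σ * (τ * σ) ^ k = (τ * σ) ^ (-k) * σ := by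
  have h1 : σ⁻¹ = σ := inv_eq_of_mul_eq_one_right hσ
  have h := @conj_zpow (Perm (Fin n)) _ k σ (τ * σ)
  rw [sigma_conj hσ hτ, inv_zpow, ← zpow_neg] at h
  rw [h, mul_assoc, h1, hσ, mul_one]

lemma tau_zpow (k : ℤ) : τ * (τ * σ) ^ k = (τ * σ) ^ (-k) * τ := by
  have h2 : τ⁻¹ = τ := inv_eq_of_mul_eq_one_right hτ
  have h := @conj_zpow (Perm (Fin n)) _ k τ (τ * σ)
  rw [tau_conj hσ hτ, inv_zpow, ← zpow_neg] at h
  rw [h, mul_assoc, h2, hτ, mul_one]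

lemma sigma_apply_zpow (k : ℤ) (x : Fin n) :
    σ (((τ * σ) ^ k) x) = ((τ * σ) ^ (-k)) (σ x) := by
  have := congrArg (fun p : Perm (Fin n) => p x) (sigma_zpow hσ hτ k)
  simpa using this

lemma tau_apply_zpow (k : ℤ) (x : Fin n) :
    τ (((τ * σ) ^ k) x) = ((τ * σ) ^ (-k)) (τ x) := by
  have := congrArg (fun p : Perm (Fin n) => p x) (tau_zpow hσ hτ k)
  simpa using this

lemma tau_eq (x : Fin n) : τ x = (τ * σ) (σ x) := by
  rw [Equiv.Perm.mul_apply, invol_apply_s10 hσ]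

lemma sigma_tau_eq (x : Fin n) : σ (τ x) = (τ * σ)⁻¹ x := by
  have h1 : σ⁻¹ = σ := inv_eq_of_mul_eq_one_right hσ
  have h2 : τ⁻¹ = τ := inv_eq_of_mul_eq_one_right hτ
  rw [mul_inv_rev, h1, h2, Equiv.Perm.mul_apply]

lemma sameCycle_mk {x y : Fin n} (h : (τ * σ).SameCycle x y) :
    (superGraph σ τ).connectedComponentMk x = (superGraph σ τ).connectedComponentMk y := by
  obtain ⟨k, hk⟩ := h
  rw [← hk, mk_zpow hσ hτ]

lemma reach_imp {x y : Fin n} (h : (superGraph σ τ).Reachable x y) :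
    (τ * σ).SameCycle x y ∨ (τ * σ).SameCycle (σ x) y := by
  obtain ⟨w⟩ := h
  induction w with
  | nil => exact Or.inl (Equiv.Perm.SameCycle.refl _ _)
  | @cons x z y h p ih =>
    obtain ⟨hne, hz | hz⟩ := (superGraph_adj hσ hτ x z).1 h
    · subst hz
      rcases ih with h1 | h1
      · exact Or.inr h1
      · rw [invol_apply_s10 hσ] at h1
        exact Or.inl h1
    · subst hz
      rcases ih with h1 | h1
      · have : (τ * σ).SameCycle (σ x) (τ x) := ⟨1, by rw [zpow_one, ← tau_eq hσ hτ]⟩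
        exact Or.inr (this.trans h1)
      · have : (τ * σ).SameCycle x (σ (τ x)) := ⟨-1, by rw [zpow_neg, zpow_one, ← sigma_tau_eq hσ hτ]⟩
        exact Or.inl (this.trans h1)

lemma sc_conj {x y : Fin n} (h : (τ * σ).SameCycle x y) : (τ * σ).SameCycle (σ x) (σ y) := by
  obtain ⟨k, hk⟩ := h
  exact ⟨-k, by rw [← hk, ← sigma_apply_zpow hσ hτ]⟩


lemma zpow_apply_zpow (f : Perm (Fin n)) (a b : ℤ) (x : Fin n) :
    (f ^ a) ((f ^ b) x) = (f ^ (a + b)) x := by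
  rw [← Equiv.Perm.mul_apply, ← zpow_add]

lemma path_sameCycle {C : (superGraph σ τ).ConnectedComponent} (hC : ¬ IsCycleComponent σ τ C) :
    ∀ x y, (superGraph σ τ).connectedComponentMk x = C →
      (superGraph σ τ).connectedComponentMk y = C → (τ * σ).SameCycle x y := by
  unfold IsCycleComponent at hC
  push_neg at hC
  obtain ⟨z, hz, hfix⟩ := hC
  have key : ∀ x, (superGraph σ τ).connectedComponentMk x = C → (τ * σ).SameCycle z x := by
    intro x hx
    have hr : (superGraph σ τ).Reachable z x :=
      (SimpleGraph.ConnectedComponent.eq).1 (hz.trans hx.symm)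
    rcases reach_imp hσ hτ hr with h | h
    · exact h
    · by_cases hs : σ z = z
      · rwa [hs] at h
      · have ht := hfix hs
        have h2 : (τ * σ).SameCycle z (σ z) :=
          ⟨-1, by rw [zpow_neg_one, ← sigma_tau_eq hσ hτ, ht]⟩
        exact h2.trans h
  intro x y hx hy
  exact (key x hx).symm.trans (key y hy)

lemma cycle_not_sameCycle {C : (superGraph σ τ).ConnectedComponent}
    (hC : IsCycleComponent σ τ C) {x : Fin n}
    (hx : (superGraph σ τ).connectedComponentMk x = C) :
    ¬ (τ * σ).SameCycle x (σ x) := by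
  rintro ⟨k, hk⟩
  rcases Int.even_or_odd k with ⟨j, hj⟩ | ⟨j, hj⟩
  · have hy : (superGraph σ τ).connectedComponentMk (((τ * σ) ^ j) x) = C := by
      rw [mk_zpow hσ hτ]; exact hx
    apply (hC _ hy).1
    calc σ (((τ * σ) ^ j) x) = ((τ * σ) ^ (-j)) (σ x) := sigma_apply_zpow hσ hτ j x
    _ = ((τ * σ) ^ (-j)) (((τ * σ) ^ k) x) := by rw [hk]
    _ = ((τ * σ) ^ (-j + k)) x := zpow_apply_zpow hσ hτ _ _ _ _
    _ = ((τ * σ) ^ j) x := by rw [show -j + k = j by omega]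
  · have hy : (superGraph σ τ).connectedComponentMk (((τ * σ) ^ (j + 1)) x) = C := by
      rw [mk_zpow hσ hτ]; exact hx
    apply (hC _ hy).2
    have h5 : ((τ * σ) ^ (1 + k : ℤ)) x = (τ * σ) (((τ * σ) ^ k) x) := by
      rw [zpow_add, zpow_one, Equiv.Perm.mul_apply]
    calc τ (((τ * σ) ^ (j + 1)) x) = ((τ * σ) ^ (-(j + 1))) (τ x) := tau_apply_zpow hσ hτ _ x
    _ = ((τ * σ) ^ (-(j + 1))) ((τ * σ) (σ x)) := by rw [tau_eq hσ hτ]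
    _ = ((τ * σ) ^ (-(j + 1))) ((τ * σ) (((τ * σ) ^ k) x)) := by rw [hk]
    _ = ((τ * σ) ^ (-(j + 1))) (((τ * σ) ^ (1 + k : ℤ)) x) := by rw [h5]
    _ = ((τ * σ) ^ (-(j + 1) + (1 + k))) x := zpow_apply_zpow hσ hτ _ _ _ _
    _ = ((τ * σ) ^ (j + 1)) x := by rw [show -(j + 1) + (1 + k) = j + 1 by omega]

lemma sc_set_eq (x : Fin n) :
    σ '' {y | (τ * σ).SameCycle x y} = {y | (τ * σ).SameCycle (σ x) y} := by
  ext z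
  simp only [Set.mem_image, Set.mem_setOf_eq]
  constructor
  · rintro ⟨w, hw, rfl⟩; exact sc_conj hσ hτ hw
  · intro hz
    refine ⟨σ z, ?_, invol_apply_s10 hσ z⟩
    have := sc_conj hσ hτ hz
    rwa [invol_apply_s10 hσ] at this

lemma comp_set_eq {C : (superGraph σ τ).ConnectedComponent} {x : Fin n}
    (hx : (superGraph σ τ).connectedComponentMk x = C) :
    {y | (superGraph σ τ).connectedComponentMk y = C} =
      {y | (τ * σ).SameCycle x y} ∪ {y | (τ * σ).SameCycle (σ x) y} := by
  ext y
  simp only [Set.mem_setOf_eq, Set.mem_union]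
  constructor
  · intro hy
    exact reach_imp hσ hτ ((SimpleGraph.ConnectedComponent.eq).1 (hx.trans hy.symm))
  · rintro (h | h)
    · exact (sameCycle_mk hσ hτ h).symm.trans hx
    · exact (sameCycle_mk hσ hτ h).symm.trans ((mk_sigma hσ hτ x).trans hx)

lemma half_card {C : (superGraph σ τ).ConnectedComponent} (hC : IsCycleComponent σ τ C)
    {x : Fin n} (hx : (superGraph σ τ).connectedComponentMk x = C) :
    Set.ncard {y | (τ * σ).SameCycle x y} =
      Set.ncard {y | (superGraph σ τ).connectedComponentMk y = C} / 2 := by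
  have hdisj : Disjoint {y | (τ * σ).SameCycle x y} {y | (τ * σ).SameCycle (σ x) y} := by
    rw [Set.disjoint_left]
    intro y hyA hyB
    exact cycle_not_sameCycle hσ hτ hC hx (hyA.trans hyB.symm)
  have hcard : Set.ncard {y | (τ * σ).SameCycle x y}
      = Set.ncard {y | (τ * σ).SameCycle (σ x) y} := by
    rw [← sc_set_eq hσ hτ x]
    exact (Set.ncard_image_of_injective _ σ.injective).symm
  rw [comp_set_eq hσ hτ hx, Set.ncard_union_eq hdisj (Set.toFinite _) (Set.toFinite _), ← hcard]
  omega

end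

def scSetoid {n : ℕ} (π : Equiv.Perm (Fin n)) : Setoid (Fin n) :=
  ⟨π.SameCycle, ⟨fun x => Equiv.Perm.SameCycle.refl π x, fun h => h.symm, fun h h' => h.trans h'⟩⟩

lemma card_quot_eq_numCycles {n : ℕ} (π : Equiv.Perm (Fin n)) :
    Nat.card (Quotient (scSetoid π)) = numCycles π := by
  classical
  have e : Quotient (scSetoid π) ≃ (↥π.cycleFactorsFinset ⊕ {x : Fin n // π x = x}) := by
    refine Equiv.ofBijective (Quotient.lift (fun x => if h : π x = x then Sum.inr ⟨x, h⟩ else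
      Sum.inl ⟨π.cycleOf x, Equiv.Perm.cycleOf_mem_cycleFactorsFinset_iff.2
        (Equiv.Perm.mem_support.2 h)⟩) ?_) ⟨?_, ?_⟩
    · intro a b hab
      have hab' : π.SameCycle a b := hab
      by_cases ha : π a = a
      · have hba : b = a := by
          obtain ⟨k, hk⟩ := hab'
          rw [← hk, Equiv.Perm.zpow_apply_eq_self_of_apply_eq_self ha]
        subst hba; rfl
      · by_cases hb : π b = b
        · exfalso
          have hba : a = b := by
            obtain ⟨k, hk⟩ := hab'.symm
            rw [← hk, Equiv.Perm.zpow_apply_eq_self_of_apply_eq_self hb]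
          exact ha (hba ▸ hb)
        · simp only [dif_neg ha, dif_neg hb]
          exact congrArg Sum.inl (Subtype.ext hab'.cycleOf_eq)
    · intro q1 q2
      refine Quotient.inductionOn₂ q1 q2 ?_
      intro a b h
      simp only [Quotient.lift_mk] at h
      by_cases ha : π a = a <;> by_cases hb : π b = b <;>
        simp only [dif_pos, dif_neg, ha, hb] at h
      · have hab2 : a = b := by simpa using h
        rw [hab2]
      · exact absurd h (by simp)
      · exact absurd h (by simp)
      · apply Quotient.sound
        have hc : π.cycleOf a = π.cycleOf b := by
          injection h with h'; exact congrArg Subtype.val h'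
        by_contra hnsc
        have h1 : π.cycleOf a b = b := Equiv.Perm.cycleOf_apply_of_not_sameCycle hnsc
        rw [hc, Equiv.Perm.cycleOf_apply_self] at h1
        exact hb h1
    · rintro (⟨c, hc⟩ | ⟨x, hx⟩)
      · obtain ⟨w, hw, -⟩ := (Equiv.Perm.mem_cycleFactorsFinset_iff.1 hc).1
        have hws : w ∈ c.support := Equiv.Perm.mem_support.2 hw
        have hcw : c = π.cycleOf w := Equiv.Perm.cycle_is_cycleOf hws hc
        have hπw : π w ≠ w := by
          have h2 := (Equiv.Perm.mem_cycleFactorsFinset_iff.1 hc).2 w hws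
          rw [← h2]; exact hw
        refine ⟨⟦w⟧, ?_⟩
        simp only [Quotient.lift_mk, dif_neg hπw]
        exact congrArg Sum.inl (Subtype.ext hcw.symm)
      · exact ⟨⟦x⟧, by simp only [Quotient.lift_mk, dif_pos hx]⟩
  rw [Nat.card_congr e, Nat.card_sum, numCycles]
  congr 1
  · rw [Nat.card_eq_fintype_card, Fintype.card_coe]
  · rw [Nat.card_eq_fintype_card]
    simp [Fintype.card_subtype]


/-- Each path component of `σ ∪ τ` on `k` vertices yields a single `k`-cycle of `τ ∘ σ`,
each cycle component on `2k` vertices yields two `k`-cycles, and if there are `p` path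
components and `q` cycle components then `τ ∘ σ` has `p + 2q` cycles. -/
theorem superposition_components_vs_cycles (n : ℕ) (σ τ : Equiv.Perm (Fin n))
    (hσ : σ * σ = 1) (hτ : τ * τ = 1) :
    (∀ C : (superGraph σ τ).ConnectedComponent, ¬ IsCycleComponent σ τ C →
      (∀ x y, (superGraph σ τ).connectedComponentMk x = C →
        (superGraph σ τ).connectedComponentMk y = C → (τ * σ).SameCycle x y) ∧
      (∀ x y, (superGraph σ τ).connectedComponentMk x = C → (τ * σ).SameCycle x y →
        (superGraph σ τ).connectedComponentMk y = C)) ∧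
    (∀ C : (superGraph σ τ).ConnectedComponent, IsCycleComponent σ τ C →
      ∃ a b : Fin n, (superGraph σ τ).connectedComponentMk a = C ∧
        (superGraph σ τ).connectedComponentMk b = C ∧
        ¬ (τ * σ).SameCycle a b ∧
        (∀ x, (superGraph σ τ).connectedComponentMk x = C →
          (τ * σ).SameCycle a x ∨ (τ * σ).SameCycle b x) ∧
        (∀ x y, (superGraph σ τ).connectedComponentMk x = C → (τ * σ).SameCycle x y →
          (superGraph σ τ).connectedComponentMk y = C) ∧
        Set.ncard {x | (τ * σ).SameCycle a x} =
          Set.ncard {x | (superGraph σ τ).connectedComponentMk x = C} / 2 ∧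
        Set.ncard {x | (τ * σ).SameCycle b x} =
          Set.ncard {x | (superGraph σ τ).connectedComponentMk x = C} / 2) ∧
    numCycles (τ * σ) =
      Nat.card {C : (superGraph σ τ).ConnectedComponent // ¬ IsCycleComponent σ τ C} +
      2 * Nat.card {C : (superGraph σ τ).ConnectedComponent // IsCycleComponent σ τ C} := by
  classical
  refine ⟨?_, ?_, ?_⟩
  · intro C hC
    exact ⟨path_sameCycle hσ hτ hC,
      fun x y hx hsc => (sameCycle_mk hσ hτ hsc).symm.trans hx⟩
  · intro C hC
    obtain ⟨x, hx⟩ : ∃ v, (superGraph σ τ).connectedComponentMk v = C := Quot.exists_rep C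
    refine ⟨x, σ x, hx, (mk_sigma hσ hτ x).trans hx, cycle_not_sameCycle hσ hτ hC hx,
      ?_, fun u v hu hsc => (sameCycle_mk hσ hτ hsc).symm.trans hu,
      half_card hσ hτ hC hx, half_card hσ hτ hC ((mk_sigma hσ hτ x).trans hx)⟩
    intro z hz
    have hz' : z ∈ {y | (superGraph σ τ).connectedComponentMk y = C} := hz
    rw [comp_set_eq hσ hτ hx] at hz'
    exact hz'
  · have hfinC : Finite (superGraph σ τ).ConnectedComponent := Quot.finite _
    have instC : Fintype (superGraph σ τ).ConnectedComponent := Fintype.ofFinite _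
    have instQ : Fintype (Quotient (scSetoid (τ * σ))) := Fintype.ofFinite _
    set Q := Quotient (scSetoid (τ * σ)) with hQdef
    let g : Q → (superGraph σ τ).ConnectedComponent :=
      Quotient.lift (fun x => (superGraph σ τ).connectedComponentMk x)
        (fun a b h => sameCycle_mk hσ hτ h)
    have hsig : Nat.card Q = ∑ C : (superGraph σ τ).ConnectedComponent,
        Nat.card {q : Q // g q = C} := by
      rw [← Nat.card_congr (Equiv.sigmaFiberEquiv g), Nat.card_eq_fintype_card,
        Fintype.card_sigma]
      simp [Nat.card_eq_fintype_card]
    have hfib1 : ∀ C, ¬ IsCycleComponent σ τ C → Nat.card {q : Q // g q = C} = 1 := by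
      intro C hC
      obtain ⟨v, hv⟩ : ∃ v, (superGraph σ τ).connectedComponentMk v = C := Quot.exists_rep C
      refine Nat.card_eq_one_iff_exists.2 ⟨⟨⟦v⟧, hv⟩, ?_⟩
      rintro ⟨q, hq⟩
      obtain ⟨w, rfl⟩ := Quotient.exists_rep q
      have hw : (superGraph σ τ).connectedComponentMk w = C := hq
      exact Subtype.ext (Quotient.sound (path_sameCycle hσ hτ hC w v hw hv))
    have hfib2 : ∀ C, IsCycleComponent σ τ C → Nat.card {q : Q // g q = C} = 2 := by
      intro C hC
      obtain ⟨v, hv⟩ : ∃ v, (superGraph σ τ).connectedComponentMk v = C := Quot.exists_rep C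
      refine Nat.card_eq_two_iff.2 ⟨⟨⟦v⟧, hv⟩, ⟨⟦σ v⟧, (mk_sigma hσ hτ v).trans hv⟩, ?_, ?_⟩
      · intro he
        have : (⟦v⟧ : Q) = ⟦σ v⟧ := congrArg Subtype.val he
        exact cycle_not_sameCycle hσ hτ hC hv (Quotient.exact this)
      · apply Set.eq_univ_iff_forall.2
        rintro ⟨q, hq⟩
        obtain ⟨w, rfl⟩ := Quotient.exists_rep q
        have hw : (superGraph σ τ).connectedComponentMk w = C := hq
        have hw' : w ∈ {y | (superGraph σ τ).connectedComponentMk y = C} := hw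
        rw [comp_set_eq hσ hτ hv] at hw'
        rcases hw' with h | h
        · exact Set.mem_insert_iff.2 (Or.inl (Subtype.ext (Quotient.sound h.symm)))
        · exact Set.mem_insert_iff.2 (Or.inr (Set.mem_singleton_iff.2
            (Subtype.ext (Quotient.sound h.symm))))
    have hsum : Nat.card Q =
        2 * (Finset.univ.filter fun C => IsCycleComponent σ τ C).card +
        (Finset.univ.filter fun C => ¬ IsCycleComponent σ τ C).card := by
      rw [hsig]
      have : ∀ C ∈ (Finset.univ : Finset (superGraph σ τ).ConnectedComponent),
          Nat.card {q : Q // g q = C} = if IsCycleComponent σ τ C then 2 else 1 := by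
        intro C _
        split_ifs with h
        · exact hfib2 C h
        · exact hfib1 C h
      rw [Finset.sum_congr rfl this, Finset.sum_ite, Finset.sum_const, Finset.sum_const,
        smul_eq_mul, smul_eq_mul, mul_one, mul_comm]
    have hcard1 : Nat.card {C : (superGraph σ τ).ConnectedComponent // ¬ IsCycleComponent σ τ C}
        = (Finset.univ.filter fun C => ¬ IsCycleComponent σ τ C).card := by
      rw [Nat.card_eq_fintype_card, Fintype.card_subtype]
    have hcard2 : Nat.card {C : (superGraph σ τ).ConnectedComponent // IsCycleComponent σ τ C}
        = (Finset.univ.filter fun C => IsCycleComponent σ τ C).card := by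
      rw [Nat.card_eq_fintype_card, Fintype.card_subtype]
    rw [← card_quot_eq_numCycles (τ * σ), hcard1, hcard2, ← hQdef, hsum]
    omega
end

section
/- The expected number of cycles of the composition of two independent uniformly random fixed-point-free involutions of [2n] equals 2·H_{2n} − H_n, where H_m is the m-th harmonic number. -/
open Equiv

/-- The fixed-point-free involutions of `[m]`. -/
noncomputable def fpfInvolutions (m : ℕ) : Finset (Equiv.Perm (Fin m)) :=
  letI := Classical.decEq (Equiv.Perm (Fin m))
  Finset.univ.filter fun σ => σ * σ = 1 ∧ ∀ i, σ i ≠ i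

/-- The `m`-th harmonicNum number `H_m = Σ_{j=1}^m 1/j`. -/
def harmonicNum (m : ℕ) : ℚ := ∑ j ∈ Finset.Icc 1 m, (1 : ℚ) / j

namespace FpfAux

open Equiv.Perm Finset

/-- `(2k-1)!!`. -/
def df : ℕ → ℕ
  | 0 => 1
  | k + 1 => (2 * k + 1) * df k

lemma df_pos (k : ℕ) : 0 < df k := by
  induction k with
  | zero => simp [df]
  | succ k ih => simp [df]; positivity

/-- Involutions that are fixed-point-free on `s` and identity off `s`. -/
noncomputable def Inv (M : ℕ) (s : Finset (Fin M)) : Finset (Perm (Fin M)) :=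
  letI := Classical.decEq (Perm (Fin M))
  Finset.univ.filter fun σ => σ * σ = 1 ∧ (∀ x ∈ s, σ x ≠ x) ∧ (∀ x ∉ s, σ x = x)

variable {M : ℕ}

lemma mem_Inv {s : Finset (Fin M)} {σ : Perm (Fin M)} :
    σ ∈ Inv M s ↔ σ * σ = 1 ∧ (∀ x ∈ s, σ x ≠ x) ∧ (∀ x ∉ s, σ x = x) := by
  simp [Inv]

lemma inv_apply_apply {σ : Perm (Fin M)} (h : σ * σ = 1) (x : Fin M) : σ (σ x) = x := by
  have := congrArg (fun p : Perm (Fin M) => p x) h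
  simpa [Perm.mul_apply] using this

lemma mem_of_mem_Inv {s : Finset (Fin M)} {σ : Perm (Fin M)} (h : σ ∈ Inv M s)
    {x : Fin M} (hx : x ∈ s) : σ x ∈ s := by
  rw [mem_Inv] at h
  by_contra hxs
  have := h.2.2 _ hxs
  have h2 := inv_apply_apply h.1 x
  rw [this] at h2
  exact h.2.1 x hx (by rw [h2] at this; exact this)

/-- Insertion of a fixed point into a cycle yields a cycle. -/
lemma isCycle_mul_swap {α : Type*} [Fintype α] [DecidableEq α] {c : Perm α}
    (hc : c.IsCycle) {i j : α} (hi : c i = i) (hj : c j ≠ j) (hij : i ≠ j) :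
    (c * Equiv.swap i j).IsCycle := by
  set c' := c * Equiv.swap i j with hc'def
  have hc'j : c' j = i := by
    simp [hc'def, Perm.mul_apply, Equiv.swap_apply_right, hi]
  have hc'i : c' i = c j := by
    simp [hc'def, Perm.mul_apply, Equiv.swap_apply_left]
  have hc'other : ∀ x, x ≠ i → x ≠ j → c' x = c x := fun x h1 h2 => by
    simp [hc'def, Perm.mul_apply, Equiv.swap_apply_of_ne_of_ne h1 h2]
  have hpow_i : ∀ m : ℕ, (c ^ m) i = i := by
    intro m
    induction m with
    | zero => simp
    | succ m ih => rw [pow_succ, Perm.mul_apply, hi, ih]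
  have aux : ∀ n : ℕ, ∀ y, (c ^ n) j = y → y ≠ i → y ≠ j → Perm.SameCycle c' j y := by
    intro n
    induction n using Nat.strong_induction_on with
    | _ n IH =>
      intro y hny hyi hyj
      by_cases hmid : ∃ m, 1 ≤ m ∧ m < n ∧ (c ^ m) j = j
      · obtain ⟨m, hm1, hmn, hmj⟩ := hmid
        have h2 : (c ^ (n - m)) j = y := by
          have h3 : (c ^ (n - m + m)) j = y := by
            rw [Nat.sub_add_cancel hmn.le]; exact hny
          rwa [pow_add, Perm.mul_apply, hmj] at h3
        exact IH (n - m) (by omega) y h2 hyi hyj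
      · push_neg at hmid
        have hn1 : 1 ≤ n := by
          rcases Nat.eq_zero_or_pos n with h | h
          · exfalso; apply hyj; rw [← hny, h]; simp
          · exact h
        have claim : ∀ m' : ℕ, m' + 1 ≤ n → (c' ^ (m' + 2)) j = (c ^ (m' + 1)) j := by
          intro m'
          induction m' with
          | zero =>
            intro _
            have : (c' ^ 2) j = c j := by
              rw [pow_two, Perm.mul_apply, hc'j, hc'i]
            simpa using this
          | succ m' ih =>
            intro hle
            have ih' := ih (by omega)
            have hne_i : (c ^ (m' + 1)) j ≠ i := by
              intro h
              have := (c ^ (m' + 1)).injective (h.trans (hpow_i (m' + 1)).symm)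
              exact hij this.symm
            have hne_j : (c ^ (m' + 1)) j ≠ j := hmid (m' + 1) (by omega) (by omega)
            have : (c' ^ (m' + 1 + 2)) j = c' ((c' ^ (m' + 2)) j) := by
              rw [← Perm.mul_apply, ← pow_succ']
            rw [this, ih', hc'other _ hne_i hne_j, ← Perm.mul_apply, ← pow_succ']
        refine ⟨((n + 1 : ℕ) : ℤ), ?_⟩
        rw [zpow_natCast]
        have := claim (n - 1) (by omega)
        have hn' : n - 1 + 2 = n + 1 := by omega
        have hn'' : n - 1 + 1 = n := by omega
        rw [hn', hn''] at this
        rw [this, hny]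
  refine ⟨j, by rw [hc'j]; exact hij, ?_⟩
  intro y hy
  by_cases hyj : y = j
  · subst hyj; exact Perm.SameCycle.refl _ _
  by_cases hyi : y = i
  · subst hyi
    exact ⟨(1 : ℤ), by simpa using hc'j⟩
  · have hcy : c y ≠ y := by
      rw [← hc'other y hyi hyj]; exact hy
    have hsc : Perm.SameCycle c j y := hc.sameCycle hj hcy
    obtain ⟨n, _, hn⟩ := hsc.exists_pow_eq'
    exact aux n y hn hyi hyj

lemma numCycles_mul_swap (π : Perm (Fin M)) {i j : Fin M} (hi : π i = i) (hij : j ≠ i) :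
    numCycles (π * Equiv.swap i j) + 1 = numCycles π := by
  classical
  have hπj_ne_i : π j ≠ i := fun h => hij (π.injective (h.trans hi.symm))
  have hvi : (π * Equiv.swap i j) i = π j := by simp [Perm.mul_apply]
  have hvj : (π * Equiv.swap i j) j = i := by simp [Perm.mul_apply, hi]
  have hvo : ∀ x, x ≠ i → x ≠ j → (π * Equiv.swap i j) x = π x := fun x h1 h2 => by
    simp [Perm.mul_apply, Equiv.swap_apply_of_ne_of_ne h1 h2]
  by_cases hj : π j = j
  · -- disjoint case : i and j both fixed by π
    have hdisj : π.Disjoint (Equiv.swap i j) := by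
      intro x
      by_cases h1 : x = i
      · left; rw [h1, hi]
      by_cases h2 : x = j
      · left; rw [h2, hj]
      · right; exact Equiv.swap_apply_of_ne_of_ne h1 h2
    have hswapcyc : (Equiv.swap i j).IsCycle := Equiv.Perm.isCycle_swap hij.symm
    have hfac : (π * Equiv.swap i j).cycleFactorsFinset
        = π.cycleFactorsFinset ∪ {Equiv.swap i j} := by
      rw [hdisj.cycleFactorsFinset_mul_eq_union, hswapcyc.cycleFactorsFinset_eq_singleton]
    have hnotmem : Equiv.swap i j ∉ π.cycleFactorsFinset := by
      have := hdisj.disjoint_cycleFactorsFinset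
      rw [hswapcyc.cycleFactorsFinset_eq_singleton] at this
      exact Finset.disjoint_right.mp this (Finset.mem_singleton_self _)
    have hfc : (π * Equiv.swap i j).cycleFactorsFinset.card
        = π.cycleFactorsFinset.card + 1 := by
      rw [hfac, Finset.union_comm, ← Finset.insert_eq,
        Finset.card_insert_of_notMem hnotmem]
    have hfix : (Finset.univ.filter fun x => π x = x)
        = insert i (insert j (Finset.univ.filter fun x => (π * Equiv.swap i j) x = x)) := by
      ext x
      simp only [Finset.mem_filter, Finset.mem_univ, true_and, Finset.mem_insert]
      constructor
      · intro hx
        by_cases h1 : x = i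
        · exact Or.inl h1
        by_cases h2 : x = j
        · exact Or.inr (Or.inl h2)
        · exact Or.inr (Or.inr (by rw [hvo x h1 h2]; exact hx))
      · rintro (rfl | rfl | hx)
        · exact hi
        · exact hj
        · by_cases h1 : x = i
          · subst h1; exact hi
          by_cases h2 : x = j
          · subst h2; exact hj
          · rw [← hvo x h1 h2]; exact hx
    have hjnot : j ∉ (Finset.univ.filter fun x => (π * Equiv.swap i j) x = x) := by
      simp only [Finset.mem_filter, Finset.mem_univ, true_and]
      rw [hvj]; exact hij.symm
    have hinot : i ∉ insert j (Finset.univ.filter fun x => (π * Equiv.swap i j) x = x) := by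
      simp only [Finset.mem_insert, Finset.mem_filter, Finset.mem_univ, true_and]
      push_neg
      exact ⟨hij.symm, by rw [hvi]; exact hπj_ne_i.symm ∘ Eq.symm⟩
    have hfixc : (Finset.univ.filter fun x => π x = x).card
        = (Finset.univ.filter fun x => (π * Equiv.swap i j) x = x).card + 2 := by
      rw [hfix, Finset.card_insert_of_notMem hinot, Finset.card_insert_of_notMem hjnot]
    unfold numCycles
    omega
  · -- j is moved by π : insert i into the cycle of j
    set c := π.cycleOf j with hcdef
    have hc_mem : c ∈ π.cycleFactorsFinset :=
      Equiv.Perm.cycleOf_mem_cycleFactorsFinset_iff.mpr (Equiv.Perm.mem_support.mpr hj)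
    have hcyc : c.IsCycle := (Equiv.Perm.mem_cycleFactorsFinset_iff.mp hc_mem).1
    have hcj : c j = π j := Equiv.Perm.cycleOf_apply_self π j
    have hcjj : c j ≠ j := by rw [hcj]; exact hj
    have hci : c i = i := by
      by_contra h
      have : i ∈ c.support := Equiv.Perm.mem_support.mpr h
      have := Equiv.Perm.mem_cycleFactorsFinset_support_le hc_mem this
      rw [Equiv.Perm.mem_support] at this
      exact this hi
    set d := π * c⁻¹ with hddef
    have hdc : d.Disjoint c := Equiv.Perm.disjoint_mul_inv_of_mem_cycleFactorsFinset hc_mem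
    have hπeq : d * c = π := by rw [hddef]; group
    have hdi : d i = i := by
      have hci' : c⁻¹ i = i := by rw [Equiv.Perm.inv_eq_iff_eq]; exact hci.symm
      rw [hddef, Perm.mul_apply, hci', hi]
    have hdj : d j = j := by
      rcases hdc j with h | h
      · exact h
      · exact absurd h hcjj
    set c' := c * Equiv.swap i j with hc'def
    have hcyc' : c'.IsCycle := isCycle_mul_swap hcyc hci hcjj hij.symm
    have hdc' : d.Disjoint c' := by
      intro x
      by_cases h1 : x = i
      · left; rw [h1]; exact hdi
      by_cases h2 : x = j
      · left; rw [h2]; exact hdj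
      rcases hdc x with h | h
      · exact Or.inl h
      · right
        rw [hc'def, Perm.mul_apply, Equiv.swap_apply_of_ne_of_ne h1 h2, h]
    have hprod : π * Equiv.swap i j = d * c' := by rw [hc'def, ← mul_assoc, hπeq]
    have hfac1 : π.cycleFactorsFinset = d.cycleFactorsFinset ∪ {c} := by
      rw [← hπeq, hdc.cycleFactorsFinset_mul_eq_union, hcyc.cycleFactorsFinset_eq_singleton]
    have hfac2 : (π * Equiv.swap i j).cycleFactorsFinset = d.cycleFactorsFinset ∪ {c'} := by
      rw [hprod, hdc'.cycleFactorsFinset_mul_eq_union, hcyc'.cycleFactorsFinset_eq_singleton]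
    have hnm1 : c ∉ d.cycleFactorsFinset := by
      have := hdc.disjoint_cycleFactorsFinset
      rw [hcyc.cycleFactorsFinset_eq_singleton] at this
      exact Finset.disjoint_right.mp this (Finset.mem_singleton_self _)
    have hnm2 : c' ∉ d.cycleFactorsFinset := by
      have := hdc'.disjoint_cycleFactorsFinset
      rw [hcyc'.cycleFactorsFinset_eq_singleton] at this
      exact Finset.disjoint_right.mp this (Finset.mem_singleton_self _)
    have hfc : (π * Equiv.swap i j).cycleFactorsFinset.card = π.cycleFactorsFinset.card := by
      rw [hfac1, hfac2, Finset.union_comm, ← Finset.insert_eq,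
        Finset.card_insert_of_notMem hnm2, Finset.union_comm, ← Finset.insert_eq,
        Finset.card_insert_of_notMem hnm1]
    have hfix : (Finset.univ.filter fun x => π x = x)
        = insert i (Finset.univ.filter fun x => (π * Equiv.swap i j) x = x) := by
      ext x
      simp only [Finset.mem_filter, Finset.mem_univ, true_and, Finset.mem_insert]
      constructor
      · intro hx
        by_cases h1 : x = i
        · exact Or.inl h1
        · have h2 : x ≠ j := fun h => hj (h ▸ hx)
          exact Or.inr (by rw [hvo x h1 h2]; exact hx)
      · rintro (rfl | hx)
        · exact hi
        · by_cases h1 : x = i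
          · subst h1; exact hi
          by_cases h2 : x = j
          · exfalso; subst h2; rw [hvj] at hx; exact hij hx.symm
          · rw [← hvo x h1 h2]; exact hx
    have hinot : i ∉ (Finset.univ.filter fun x => (π * Equiv.swap i j) x = x) := by
      simp only [Finset.mem_filter, Finset.mem_univ, true_and]
      rw [hvi]; exact hπj_ne_i
    have hfixc : (Finset.univ.filter fun x => π x = x).card
        = (Finset.univ.filter fun x => (π * Equiv.swap i j) x = x).card + 1 := by
      rw [hfix, Finset.card_insert_of_notMem hinot]
    unfold numCycles
    omega

lemma numCycles_swap_mul (π : Perm (Fin M)) {i j : Fin M} (hi : π i = i) (hij : j ≠ i) :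
    numCycles (Equiv.swap i j * π) + 1 = numCycles π := by
  have h : Equiv.swap i j * π = π * Equiv.swap (π⁻¹ i) (π⁻¹ j) := by
    have := mul_swap_eq_swap_mul π (π⁻¹ i) (π⁻¹ j)
    simp only [(show ∀ x, π (π⁻¹ x) = x from fun x => (Equiv.eq_symm_apply π).mp rfl)] at this
    rw [this]
  have hi' : π (π⁻¹ i) = π⁻¹ i := by
    rw [(show ∀ x, π (π⁻¹ x) = x from fun x => (Equiv.eq_symm_apply π).mp rfl)]
    rw [← hi, (show ∀ x, π⁻¹ (π x) = x from fun x => Equiv.Perm.inv_eq_iff_eq.mpr rfl), hi]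
  have hij' : π⁻¹ j ≠ π⁻¹ i := fun hh => hij (by simpa using congrArg π hh)
  rw [h]
  exact numCycles_mul_swap π hi' hij'

lemma swap_conj_self {σ : Perm (Fin M)} {u v : Fin M} (hu : σ u = u) (hv : σ v = v) :
    Equiv.swap u v * σ * Equiv.swap u v = σ := by
  have h := Equiv.swap_apply_apply σ u v
  rw [hu, hv] at h
  calc Equiv.swap u v * σ * Equiv.swap u v
      = (σ * Equiv.swap u v * σ⁻¹) * σ * Equiv.swap u v := by rw [← h]
    _ = σ * (Equiv.swap u v * Equiv.swap u v) := by group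
    _ = σ := by rw [Equiv.swap_mul_self, mul_one]

lemma fixes_of_mem_Inv_left {s : Finset (Fin M)} {σ' : Perm (Fin M)} {x₀ a : Fin M}
    (hσ : σ' ∈ Inv M ((s.erase x₀).erase a)) : σ' x₀ = x₀ := by
  rw [mem_Inv] at hσ
  apply hσ.2.2
  simp

lemma fixes_of_mem_Inv_right {s : Finset (Fin M)} {σ' : Perm (Fin M)} {x₀ a : Fin M}
    (hσ : σ' ∈ Inv M ((s.erase x₀).erase a)) : σ' a = a := by
  rw [mem_Inv] at hσ
  apply hσ.2.2
  simp [Finset.mem_erase]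

/-- The contraction bijection membership, forward direction. -/
lemma mul_swap_mem_Inv_erase {s : Finset (Fin M)} {σ : Perm (Fin M)} {x₀ a : Fin M}
    (hσ : σ ∈ Inv M s) (hx₀ : x₀ ∈ s) (ha : σ x₀ = a) :
    σ * Equiv.swap x₀ a ∈ Inv M ((s.erase x₀).erase a) := by
  have has : a ∈ s := ha ▸ mem_of_mem_Inv hσ hx₀
  rw [mem_Inv] at hσ
  obtain ⟨h1, h2, h3⟩ := hσ
  have hax : a ≠ x₀ := ha ▸ h2 x₀ hx₀
  have hσa : σ a = x₀ := by rw [← ha, inv_apply_apply h1]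
  have hinv : σ⁻¹ = σ := inv_eq_of_mul_eq_one_right h1
  have hconj : σ * Equiv.swap x₀ a * σ = Equiv.swap x₀ a := by
    have h := Equiv.swap_apply_apply σ x₀ a
    rw [ha, hσa, hinv] at h
    rw [← h, Equiv.swap_comm]
  have hvx₀ : (σ * Equiv.swap x₀ a) x₀ = x₀ := by
    rw [Perm.mul_apply, Equiv.swap_apply_left, hσa]
  have hva : (σ * Equiv.swap x₀ a) a = a := by
    rw [Perm.mul_apply, Equiv.swap_apply_right, ha]
  have hvo : ∀ x, x ≠ x₀ → x ≠ a → (σ * Equiv.swap x₀ a) x = σ x := fun x hh1 hh2 => by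
    rw [Perm.mul_apply, Equiv.swap_apply_of_ne_of_ne hh1 hh2]
  rw [mem_Inv]
  refine ⟨?_, ?_, ?_⟩
  · calc σ * Equiv.swap x₀ a * (σ * Equiv.swap x₀ a)
        = (σ * Equiv.swap x₀ a * σ) * Equiv.swap x₀ a := by group
      _ = Equiv.swap x₀ a * Equiv.swap x₀ a := by rw [hconj]
      _ = 1 := Equiv.swap_mul_self _ _
  · intro x hx
    rw [Finset.mem_erase, Finset.mem_erase] at hx
    obtain ⟨hxa, hxx₀, hxs⟩ := hx
    rw [hvo x hxx₀ hxa]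
    exact h2 x hxs
  · intro x hx
    by_cases hh1 : x = x₀
    · rw [hh1]; exact hvx₀
    by_cases hh2 : x = a
    · rw [hh2]; exact hva
    · rw [hvo x hh1 hh2]
      apply h3
      intro hxs
      exact hx (by rw [Finset.mem_erase, Finset.mem_erase]; exact ⟨hh2, hh1, hxs⟩)

/-- The contraction bijection membership, backward direction. -/
lemma mul_swap_mem_Inv_of_erase {s : Finset (Fin M)} {σ' : Perm (Fin M)} {x₀ a : Fin M}
    (hσ : σ' ∈ Inv M ((s.erase x₀).erase a)) (hx₀ : x₀ ∈ s) (ha : a ∈ s) (hne : a ≠ x₀) :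
    σ' * Equiv.swap x₀ a ∈ Inv M s ∧ (σ' * Equiv.swap x₀ a) x₀ = a := by
  have hfx : σ' x₀ = x₀ := fixes_of_mem_Inv_left hσ
  have hfa : σ' a = a := fixes_of_mem_Inv_right hσ
  rw [mem_Inv] at hσ
  obtain ⟨h1, h2, h3⟩ := hσ
  have hvx₀ : (σ' * Equiv.swap x₀ a) x₀ = a := by
    rw [Perm.mul_apply, Equiv.swap_apply_left, hfa]
  have hva : (σ' * Equiv.swap x₀ a) a = x₀ := by
    rw [Perm.mul_apply, Equiv.swap_apply_right, hfx]
  have hvo : ∀ x, x ≠ x₀ → x ≠ a → (σ' * Equiv.swap x₀ a) x = σ' x := fun x hh1 hh2 => by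
    rw [Perm.mul_apply, Equiv.swap_apply_of_ne_of_ne hh1 hh2]
  refine ⟨?_, hvx₀⟩
  rw [mem_Inv]
  refine ⟨?_, ?_, ?_⟩
  · calc σ' * Equiv.swap x₀ a * (σ' * Equiv.swap x₀ a)
        = σ' * (Equiv.swap x₀ a * σ' * Equiv.swap x₀ a) := by group
      _ = σ' * σ' := by rw [swap_conj_self hfx hfa]
      _ = 1 := h1
  · intro x hx
    by_cases hh1 : x = x₀
    · rw [hh1, hvx₀]; exact hne
    by_cases hh2 : x = a
    · rw [hh2, hva]; exact fun h => hne h.symm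
    · rw [hvo x hh1 hh2]
      exact h2 x (by rw [Finset.mem_erase, Finset.mem_erase]; exact ⟨hh2, hh1, hx⟩)
  · intro x hx
    have hh1 : x ≠ x₀ := fun h => hx (h ▸ hx₀)
    have hh2 : x ≠ a := fun h => hx (h ▸ ha)
    rw [hvo x hh1 hh2]
    apply h3
    rw [Finset.mem_erase, Finset.mem_erase]
    tauto

/-- Fiber bijection: involutions matching `x₀` to `a`. -/
lemma fiber_sum {R : Type*} [AddCommMonoid R] {s : Finset (Fin M)} {x₀ a : Fin M}
    (hx₀ : x₀ ∈ s) (ha : a ∈ s) (hne : a ≠ x₀) (G : Perm (Fin M) → R) :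
    ∑ τ ∈ (Inv M s).filter (fun τ => τ x₀ = a), G τ =
      ∑ τ' ∈ Inv M ((s.erase x₀).erase a), G (τ' * Equiv.swap x₀ a) := by
  refine Finset.sum_nbij' (fun τ => τ * Equiv.swap x₀ a) (fun τ' => τ' * Equiv.swap x₀ a)
    ?_ ?_ ?_ ?_ ?_
  · intro τ hτ
    rw [Finset.mem_filter] at hτ
    exact mul_swap_mem_Inv_erase hτ.1 hx₀ hτ.2
  · intro τ' hτ'
    rw [Finset.mem_filter]
    exact ⟨(mul_swap_mem_Inv_of_erase hτ' hx₀ ha hne).1,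
      (mul_swap_mem_Inv_of_erase hτ' hx₀ ha hne).2⟩
  · intro τ _; exact mul_swap_mul_self _ _ _
  · intro τ' _; exact mul_swap_mul_self _ _ _
  · intro τ _; rw [mul_swap_mul_self]

/-- Decomposition of a sum over involutions according to the partner of `x₀`. -/
lemma sum_Inv_decomp {R : Type*} [AddCommMonoid R] {s : Finset (Fin M)} {x₀ : Fin M}
    (hx₀ : x₀ ∈ s) (F : Perm (Fin M) → R) :
    ∑ σ ∈ Inv M s, F σ =
      ∑ a ∈ s.erase x₀, ∑ σ' ∈ Inv M ((s.erase x₀).erase a), F (σ' * Equiv.swap x₀ a) := by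
  classical
  have hmaps : ∀ σ ∈ Inv M s, σ x₀ ∈ s.erase x₀ := by
    intro σ hσ
    have h1 := mem_of_mem_Inv hσ hx₀
    rw [mem_Inv] at hσ
    rw [Finset.mem_erase]
    exact ⟨hσ.2.1 x₀ hx₀, h1⟩
  rw [← Finset.sum_fiberwise_of_maps_to hmaps F]
  refine Finset.sum_congr rfl fun a hha => ?_
  rw [Finset.mem_erase] at hha
  exact fiber_sum hx₀ hha.2 hha.1 F

lemma conj_swap_mem_Inv {s : Finset (Fin M)} {σ : Perm (Fin M)} (hσ : σ ∈ Inv M s)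
    {u v : Fin M} (hu : u ∈ s) (hv : v ∈ s) :
    Equiv.swap u v * σ * Equiv.swap u v ∈ Inv M s := by
  rw [mem_Inv] at hσ ⊢
  obtain ⟨h1, h2, h3⟩ := hσ
  have hval : ∀ x, (Equiv.swap u v * σ * Equiv.swap u v) x
      = Equiv.swap u v (σ (Equiv.swap u v x)) := fun x => by simp [Perm.mul_apply]
  refine ⟨?_, ?_, ?_⟩
  · calc Equiv.swap u v * σ * Equiv.swap u v * (Equiv.swap u v * σ * Equiv.swap u v)
        = Equiv.swap u v * σ * (Equiv.swap u v * Equiv.swap u v) * (σ * Equiv.swap u v) := by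
          group
      _ = Equiv.swap u v * σ * (σ * Equiv.swap u v) := by rw [Equiv.swap_mul_self, mul_one]
      _ = Equiv.swap u v * (σ * σ) * Equiv.swap u v := by group
      _ = Equiv.swap u v * Equiv.swap u v := by rw [h1, mul_one]
      _ = 1 := Equiv.swap_mul_self _ _
  · intro x hx
    have hρx : Equiv.swap u v x ∈ s := by
      by_cases h : x = u
      · rw [h, Equiv.swap_apply_left]; exact hv
      by_cases h' : x = v
      · rw [h', Equiv.swap_apply_right]; exact hu
      · rw [Equiv.swap_apply_of_ne_of_ne h h']; exact hx
    rw [hval]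
    intro heq
    apply h2 _ hρx
    apply (Equiv.swap u v).injective
    rw [heq.trans (Equiv.swap_apply_self u v x).symm]
  · intro x hx
    have h' : x ≠ u := fun h => hx (h ▸ hu)
    have h'' : x ≠ v := fun h => hx (h ▸ hv)
    rw [hval, Equiv.swap_apply_of_ne_of_ne h' h'', h3 x hx,
      Equiv.swap_apply_of_ne_of_ne h' h'']

lemma swap_conj_conj (u v : Fin M) (σ : Perm (Fin M)) :
    Equiv.swap u v * (Equiv.swap u v * σ * Equiv.swap u v) * Equiv.swap u v = σ := by
  calc Equiv.swap u v * (Equiv.swap u v * σ * Equiv.swap u v) * Equiv.swap u v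
      = (Equiv.swap u v * Equiv.swap u v) * σ * (Equiv.swap u v * Equiv.swap u v) := by group
    _ = σ := by rw [Equiv.swap_mul_self, one_mul, mul_one]

/-- Fiber bijection for `τ x₀ = b` with `b ≠ a`. -/
lemma fiber_sum₂ {R : Type*} [AddCommMonoid R] {s : Finset (Fin M)} {x₀ a b : Fin M}
    (hx₀ : x₀ ∈ s) (ha : a ∈ s) (hb : b ∈ s) (hax : a ≠ x₀) (hbx : b ≠ x₀) (hba : b ≠ a)
    (G : Perm (Fin M) → R) :
    ∑ τ ∈ (Inv M s).filter (fun τ => τ x₀ = b), G τ =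
      ∑ τ' ∈ Inv M ((s.erase x₀).erase a),
        G (Equiv.swap x₀ (τ' b) * (τ' * Equiv.swap x₀ a) * Equiv.swap x₀ (τ' b)) := by
  have hb'' : b ∈ (s.erase x₀).erase a := by
    rw [Finset.mem_erase, Finset.mem_erase]; exact ⟨hba, hbx, hb⟩
  -- basic facts about elements of the fiber
  have fwd : ∀ τ, τ ∈ (Inv M s).filter (fun τ => τ x₀ = b) →
      τ a ≠ x₀ ∧ τ a ≠ a ∧ τ a ≠ b ∧ τ a ∈ s ∧ (τ b = x₀) := by
    intro τ hτ
    rw [Finset.mem_filter] at hτ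
    obtain ⟨hτI, hτx₀⟩ := hτ
    have hmem := mem_of_mem_Inv hτI ha
    have h1 := (mem_Inv.mp hτI).1
    have h2 := (mem_Inv.mp hτI).2.1
    have hτb : τ b = x₀ := by rw [← hτx₀, inv_apply_apply h1]
    refine ⟨?_, h2 a ha, ?_, hmem, hτb⟩
    · intro h
      have h5 : τ (τ a) = a := inv_apply_apply h1 a
      rw [h] at h5
      exact hba (hτx₀.symm.trans h5)
    · intro h
      exact hax (τ.injective (h.trans hτx₀.symm))
  have swap_val : ∀ (u v : Fin M) (σ : Perm (Fin M)) (x : Fin M),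
      (Equiv.swap u v * σ * Equiv.swap u v) x = Equiv.swap u v (σ (Equiv.swap u v x)) := by
    intros; simp [Perm.mul_apply]
  -- forward membership
  have hi : ∀ τ ∈ (Inv M s).filter (fun τ => τ x₀ = b),
      Equiv.swap x₀ (τ a) * τ * Equiv.swap x₀ (τ a) * Equiv.swap x₀ a
        ∈ Inv M ((s.erase x₀).erase a) := by
    intro τ hτ
    obtain ⟨hax₀, haa, hab, has, hτb⟩ := fwd τ hτ
    rw [Finset.mem_filter] at hτ
    have hμ : Equiv.swap x₀ (τ a) * τ * Equiv.swap x₀ (τ a) ∈ Inv M s :=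
      conj_swap_mem_Inv hτ.1 hx₀ has
    have hμx₀ : (Equiv.swap x₀ (τ a) * τ * Equiv.swap x₀ (τ a)) x₀ = a := by
      rw [swap_val, Equiv.swap_apply_left, inv_apply_apply (mem_Inv.mp hτ.1).1,
        Equiv.swap_apply_of_ne_of_ne hax (fun h => haa h.symm)]
    exact mul_swap_mem_Inv_erase hμ hx₀ hμx₀
  -- value of the forward image at b
  have fwd_b : ∀ τ ∈ (Inv M s).filter (fun τ => τ x₀ = b),
      (Equiv.swap x₀ (τ a) * τ * Equiv.swap x₀ (τ a) * Equiv.swap x₀ a) b = τ a := by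
    intro τ hτ
    obtain ⟨hax₀, haa, hab, has, hτb⟩ := fwd τ hτ
    rw [Perm.mul_apply, Equiv.swap_apply_of_ne_of_ne hbx hba, swap_val,
      Equiv.swap_apply_of_ne_of_ne hbx (fun h => hab h.symm), hτb, Equiv.swap_apply_left]
  -- left inverse
  have hleft : ∀ τ ∈ (Inv M s).filter (fun τ => τ x₀ = b),
      Equiv.swap x₀ ((Equiv.swap x₀ (τ a) * τ * Equiv.swap x₀ (τ a) * Equiv.swap x₀ a) b) *
        ((Equiv.swap x₀ (τ a) * τ * Equiv.swap x₀ (τ a) * Equiv.swap x₀ a) * Equiv.swap x₀ a) *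
        Equiv.swap x₀ ((Equiv.swap x₀ (τ a) * τ * Equiv.swap x₀ (τ a) * Equiv.swap x₀ a) b)
        = τ := by
    intro τ hτ
    rw [fwd_b τ hτ, mul_swap_mul_self]
    exact swap_conj_conj _ _ τ
  -- backward facts
  have hj : ∀ τ' ∈ Inv M ((s.erase x₀).erase a),
      (Equiv.swap x₀ (τ' b) * (τ' * Equiv.swap x₀ a) * Equiv.swap x₀ (τ' b))
        ∈ (Inv M s).filter (fun τ => τ x₀ = b) := by
    intro τ' hτ'
    have hc's'' : τ' b ∈ (s.erase x₀).erase a := mem_of_mem_Inv hτ' hb''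
    rw [Finset.mem_erase, Finset.mem_erase] at hc's''
    obtain ⟨hc'a, hc'x₀, hc's⟩ := hc's''
    have hc'b : τ' b ≠ b := (mem_Inv.mp hτ').2.1 b hb''
    obtain ⟨htwI, htwx0⟩ := mul_swap_mem_Inv_of_erase hτ' hx₀ ha hax
    rw [Finset.mem_filter]
    refine ⟨conj_swap_mem_Inv htwI hx₀ hc's, ?_⟩
    rw [swap_val, Equiv.swap_apply_left, Perm.mul_apply,
      Equiv.swap_apply_of_ne_of_ne hc'x₀ hc'a,
      inv_apply_apply (mem_Inv.mp hτ').1 b,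
      Equiv.swap_apply_of_ne_of_ne hbx (fun h => hc'b h.symm)]
  -- value of backward image at a
  have bwd_a : ∀ τ' ∈ Inv M ((s.erase x₀).erase a),
      (Equiv.swap x₀ (τ' b) * (τ' * Equiv.swap x₀ a) * Equiv.swap x₀ (τ' b)) a = τ' b := by
    intro τ' hτ'
    have hc's'' : τ' b ∈ (s.erase x₀).erase a := mem_of_mem_Inv hτ' hb''
    rw [Finset.mem_erase, Finset.mem_erase] at hc's''
    obtain ⟨hc'a, hc'x₀, hc's⟩ := hc's''
    rw [swap_val, Equiv.swap_apply_of_ne_of_ne hax (fun h => hc'a h.symm), Perm.mul_apply,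
      Equiv.swap_apply_right, fixes_of_mem_Inv_left hτ', Equiv.swap_apply_left]
  have hright : ∀ τ' ∈ Inv M ((s.erase x₀).erase a),
      Equiv.swap x₀ ((Equiv.swap x₀ (τ' b) * (τ' * Equiv.swap x₀ a) * Equiv.swap x₀ (τ' b)) a) *
        (Equiv.swap x₀ (τ' b) * (τ' * Equiv.swap x₀ a) * Equiv.swap x₀ (τ' b)) *
        Equiv.swap x₀ ((Equiv.swap x₀ (τ' b) * (τ' * Equiv.swap x₀ a) * Equiv.swap x₀ (τ' b)) a) *
        Equiv.swap x₀ a = τ' := by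
    intro τ' hτ'
    rw [bwd_a τ' hτ', swap_conj_conj, mul_swap_mul_self]
  refine Finset.sum_nbij'
    (fun τ => Equiv.swap x₀ (τ a) * τ * Equiv.swap x₀ (τ a) * Equiv.swap x₀ a)
    (fun τ' => Equiv.swap x₀ (τ' b) * (τ' * Equiv.swap x₀ a) * Equiv.swap x₀ (τ' b))
    hi hj hleft hright ?_
  intro τ hτ
  rw [hleft τ hτ]

lemma prod_case1 {s : Finset (Fin M)} {x₀ a : Fin M} {σ' τ' : Perm (Fin M)}
    (hσ' : σ' ∈ Inv M ((s.erase x₀).erase a)) :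
    (τ' * Equiv.swap x₀ a) * (σ' * Equiv.swap x₀ a) = τ' * σ' := by
  have h1 := fixes_of_mem_Inv_left hσ'
  have h2 := fixes_of_mem_Inv_right hσ'
  calc (τ' * Equiv.swap x₀ a) * (σ' * Equiv.swap x₀ a)
      = τ' * (Equiv.swap x₀ a * σ' * Equiv.swap x₀ a) := by group
    _ = τ' * σ' := by rw [swap_conj_self h1 h2]

lemma nc_case2 {s : Finset (Fin M)} {x₀ a b : Fin M} {σ' τ' : Perm (Fin M)}
    (hσ' : σ' ∈ Inv M ((s.erase x₀).erase a)) (hτ' : τ' ∈ Inv M ((s.erase x₀).erase a))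
    (hx₀ : x₀ ∈ s) (ha : a ∈ s) (hax : a ≠ x₀) (hb : b ∈ (s.erase x₀).erase a) :
    numCycles ((Equiv.swap x₀ (τ' b) * (τ' * Equiv.swap x₀ a) * Equiv.swap x₀ (τ' b)) *
      (σ' * Equiv.swap x₀ a)) + 2 = numCycles (τ' * σ') := by
  have hcmem : τ' b ∈ (s.erase x₀).erase a := mem_of_mem_Inv hτ' hb
  have hc := hcmem
  rw [Finset.mem_erase, Finset.mem_erase] at hc
  obtain ⟨hca, hcx₀, hcs⟩ := hc
  have humem : σ' (τ' b) ∈ (s.erase x₀).erase a := mem_of_mem_Inv hσ' hcmem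
  have hu := humem
  rw [Finset.mem_erase, Finset.mem_erase] at hu
  obtain ⟨hua, hux₀, hus⟩ := hu
  obtain ⟨hσI, hσx₀⟩ := mul_swap_mem_Inv_of_erase hσ' hx₀ ha hax
  have hσ1 : (σ' * Equiv.swap x₀ a) * (σ' * Equiv.swap x₀ a) = 1 := (mem_Inv.mp hσI).1
  -- σ a = x₀ and σ u = c where c = τ' b, u = σ' c
  have hva : (σ' * Equiv.swap x₀ a) a = x₀ := by
    rw [Perm.mul_apply, Equiv.swap_apply_right, fixes_of_mem_Inv_left hσ']
  have hvu : (σ' * Equiv.swap x₀ a) (σ' (τ' b)) = τ' b := by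
    rw [Perm.mul_apply, Equiv.swap_apply_of_ne_of_ne hux₀ hua,
      inv_apply_apply (mem_Inv.mp hσ').1]
  have hσinv : (σ' * Equiv.swap x₀ a)⁻¹ = σ' * Equiv.swap x₀ a :=
    inv_eq_of_mul_eq_one_right hσ1
  have hkey : Equiv.swap x₀ (τ' b) * (σ' * Equiv.swap x₀ a)
      = (σ' * Equiv.swap x₀ a) * Equiv.swap a (σ' (τ' b)) := by
    have h := Equiv.swap_apply_apply (σ' * Equiv.swap x₀ a) a (σ' (τ' b))
    rw [hva, hvu, hσinv] at h
    calc Equiv.swap x₀ (τ' b) * (σ' * Equiv.swap x₀ a)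
        = (σ' * Equiv.swap x₀ a) * Equiv.swap a (σ' (τ' b)) *
            ((σ' * Equiv.swap x₀ a) * (σ' * Equiv.swap x₀ a)) := by rw [h]; group
      _ = (σ' * Equiv.swap x₀ a) * Equiv.swap a (σ' (τ' b)) := by rw [hσ1, mul_one]
  have hperm : (Equiv.swap x₀ (τ' b) * (τ' * Equiv.swap x₀ a) * Equiv.swap x₀ (τ' b)) *
      (σ' * Equiv.swap x₀ a)
      = Equiv.swap x₀ (τ' b) * ((τ' * σ') * Equiv.swap a (σ' (τ' b))) := by
    calc (Equiv.swap x₀ (τ' b) * (τ' * Equiv.swap x₀ a) * Equiv.swap x₀ (τ' b)) *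
        (σ' * Equiv.swap x₀ a)
        = Equiv.swap x₀ (τ' b) * (τ' * Equiv.swap x₀ a) *
            (Equiv.swap x₀ (τ' b) * (σ' * Equiv.swap x₀ a)) := by group
      _ = Equiv.swap x₀ (τ' b) * (τ' * Equiv.swap x₀ a) *
            ((σ' * Equiv.swap x₀ a) * Equiv.swap a (σ' (τ' b))) := by rw [hkey]
      _ = Equiv.swap x₀ (τ' b) * ((τ' * (Equiv.swap x₀ a * σ' * Equiv.swap x₀ a)) *
            Equiv.swap a (σ' (τ' b))) := by group
      _ = Equiv.swap x₀ (τ' b) * ((τ' * σ') * Equiv.swap a (σ' (τ' b))) := by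
            rw [swap_conj_self (fixes_of_mem_Inv_left hσ') (fixes_of_mem_Inv_right hσ')]
  rw [hperm]
  have hπx₀ : (τ' * σ') x₀ = x₀ := by
    rw [Perm.mul_apply, fixes_of_mem_Inv_left hσ', fixes_of_mem_Inv_left hτ']
  have hπa : (τ' * σ') a = a := by
    rw [Perm.mul_apply, fixes_of_mem_Inv_right hσ', fixes_of_mem_Inv_right hτ']
  have s1 : numCycles ((τ' * σ') * Equiv.swap a (σ' (τ' b))) + 1 = numCycles (τ' * σ') :=
    numCycles_mul_swap _ hπa hua
  have hmid : ((τ' * σ') * Equiv.swap a (σ' (τ' b))) x₀ = x₀ := by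
    rw [Perm.mul_apply, Equiv.swap_apply_of_ne_of_ne (fun h => hax h.symm)
      (fun h => hux₀ h.symm), hπx₀]
  have s2 : numCycles (Equiv.swap x₀ (τ' b) * ((τ' * σ') * Equiv.swap a (σ' (τ' b)))) + 1
      = numCycles ((τ' * σ') * Equiv.swap a (σ' (τ' b))) :=
    numCycles_swap_mul _ hmid hcx₀
  omega

lemma numCycles_one : numCycles (1 : Perm (Fin M)) = M := by
  unfold numCycles
  rw [Equiv.Perm.cycleFactorsFinset_one]
  simp

lemma Inv_empty : Inv M ∅ = {1} := by
  ext σ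
  rw [mem_Inv, Finset.mem_singleton]
  constructor
  · rintro ⟨h1, h2, h3⟩
    ext x
    exact congrArg Fin.val (h3 x (Finset.notMem_empty x))
  · rintro rfl
    exact ⟨one_mul 1, fun x hx => absurd hx (Finset.notMem_empty x),
      fun x _ => rfl⟩

lemma harmonicNum_zero : harmonicNum 0 = 0 := by simp [harmonicNum]

lemma harmonicNum_succ (m : ℕ) : harmonicNum (m + 1) = harmonicNum m + 1 / (m + 1 : ℚ) := by
  unfold harmonicNum
  rw [Finset.sum_Icc_succ_top (by omega : 1 ≤ m + 1)]
  push_cast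
  ring

lemma sum_fiber_split {R : Type*} [AddCommMonoid R] {s : Finset (Fin M)} {x₀ : Fin M}
    (hx₀ : x₀ ∈ s) (G : Perm (Fin M) → R) :
    ∑ τ ∈ Inv M s, G τ =
      ∑ b ∈ s.erase x₀, ∑ τ ∈ (Inv M s).filter (fun τ => τ x₀ = b), G τ := by
  classical
  have hmaps : ∀ τ ∈ Inv M s, τ x₀ ∈ s.erase x₀ := by
    intro τ hτ
    have h1 := mem_of_mem_Inv hτ hx₀
    rw [mem_Inv] at hτ
    rw [Finset.mem_erase]
    exact ⟨hτ.2.1 x₀ hx₀, h1⟩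
  exact (Finset.sum_fiberwise_of_maps_to hmaps G).symm

lemma main_ind (M : ℕ) : ∀ (k : ℕ) (s : Finset (Fin M)), s.card = 2 * k →
    (Inv M s).card = df k ∧
    ∑ σ ∈ Inv M s, ∑ τ ∈ Inv M s, (numCycles (τ * σ) : ℚ) =
      (df k : ℚ) ^ 2 * (2 * harmonicNum (2 * k) - harmonicNum k + ((M : ℚ) - 2 * k)) := by
  intro k
  induction k with
  | zero =>
    intro s hs
    have hse : s = ∅ := Finset.card_eq_zero.mp (by omega)
    subst hse
    rw [Inv_empty]
    refine ⟨by simp [df], ?_⟩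
    rw [Finset.sum_singleton, Finset.sum_singleton, mul_one, numCycles_one]
    simp [harmonicNum_zero, df]
  | succ k IH =>
    intro s hs
    obtain ⟨x₀, hx₀⟩ := Finset.card_pos.mp (by omega : 0 < s.card)
    have hersc : (s.erase x₀).card = 2 * k + 1 := by
      rw [Finset.card_erase_of_mem hx₀, hs]; omega
    have hcard_a : ∀ a ∈ s.erase x₀, ((s.erase x₀).erase a).card = 2 * k := by
      intro a ha
      rw [Finset.card_erase_of_mem ha, hersc]
      omega
    have hcard : (Inv M s).card = df (k + 1) := by
      have h0 := sum_Inv_decomp (M := M) hx₀ (fun _ => (1 : ℕ))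
      simp only [Finset.sum_const, smul_eq_mul, mul_one] at h0
      calc (Inv M s).card
          = ∑ a ∈ s.erase x₀, (Inv M ((s.erase x₀).erase a)).card := h0
        _ = ∑ _a ∈ s.erase x₀, df k :=
            Finset.sum_congr rfl fun a ha => (IH _ (hcard_a a ha)).1
        _ = (2 * k + 1) * df k := by rw [Finset.sum_const, smul_eq_mul, hersc]
        _ = df (k + 1) := rfl
    refine ⟨hcard, ?_⟩
    have hinner : ∀ a ∈ s.erase x₀, ∀ σ' ∈ Inv M ((s.erase x₀).erase a),
        ∑ τ ∈ Inv M s, (numCycles (τ * (σ' * Equiv.swap x₀ a)) : ℚ) =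
          (2 * (k : ℚ) + 1) *
            (∑ τ' ∈ Inv M ((s.erase x₀).erase a), (numCycles (τ' * σ') : ℚ))
            - 4 * (k : ℚ) * (df k : ℚ) := by
      intro a ha σ' hσ'
      have hax : a ≠ x₀ := (Finset.mem_erase.mp ha).1
      have has : a ∈ s := (Finset.mem_erase.mp ha).2
      have hterm1 : ∑ τ ∈ (Inv M s).filter (fun τ => τ x₀ = a),
          (numCycles (τ * (σ' * Equiv.swap x₀ a)) : ℚ)
          = ∑ τ' ∈ Inv M ((s.erase x₀).erase a), (numCycles (τ' * σ') : ℚ) := by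
        rw [fiber_sum hx₀ has hax]
        exact Finset.sum_congr rfl fun τ' _ => by rw [prod_case1 hσ']
      have hterm2 : ∀ b ∈ (s.erase x₀).erase a,
          ∑ τ ∈ (Inv M s).filter (fun τ => τ x₀ = b),
            (numCycles (τ * (σ' * Equiv.swap x₀ a)) : ℚ)
          = (∑ τ' ∈ Inv M ((s.erase x₀).erase a), (numCycles (τ' * σ') : ℚ))
              - 2 * (df k : ℚ) := by
        intro b hb
        have hb' := hb
        rw [Finset.mem_erase, Finset.mem_erase] at hb'
        obtain ⟨hba, hbx, hbs⟩ := hb'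
        rw [fiber_sum₂ hx₀ has hbs hax hbx hba]
        have hsummand : ∀ τ' ∈ Inv M ((s.erase x₀).erase a),
            (numCycles ((Equiv.swap x₀ (τ' b) * (τ' * Equiv.swap x₀ a) *
              Equiv.swap x₀ (τ' b)) * (σ' * Equiv.swap x₀ a)) : ℚ)
            = (numCycles (τ' * σ') : ℚ) - 2 := by
          intro τ' hτ'
          have h := nc_case2 hσ' hτ' hx₀ has hax hb
          have h2 : (numCycles ((Equiv.swap x₀ (τ' b) * (τ' * Equiv.swap x₀ a) *
              Equiv.swap x₀ (τ' b)) * (σ' * Equiv.swap x₀ a)) : ℚ) + 2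
              = (numCycles (τ' * σ') : ℚ) := by exact_mod_cast h
          linarith
        rw [Finset.sum_congr rfl hsummand, Finset.sum_sub_distrib, Finset.sum_const,
          (IH _ (hcard_a a ha)).1, nsmul_eq_mul]
        ring
      calc ∑ τ ∈ Inv M s, (numCycles (τ * (σ' * Equiv.swap x₀ a)) : ℚ)
          = ∑ b ∈ s.erase x₀, ∑ τ ∈ (Inv M s).filter (fun τ => τ x₀ = b),
              (numCycles (τ * (σ' * Equiv.swap x₀ a)) : ℚ) := sum_fiber_split hx₀ _
        _ = (∑ τ ∈ (Inv M s).filter (fun τ => τ x₀ = a),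
              (numCycles (τ * (σ' * Equiv.swap x₀ a)) : ℚ))
            + ∑ b ∈ (s.erase x₀).erase a, ∑ τ ∈ (Inv M s).filter (fun τ => τ x₀ = b),
              (numCycles (τ * (σ' * Equiv.swap x₀ a)) : ℚ) :=
            (Finset.add_sum_erase _ _ ha).symm
        _ = (∑ τ' ∈ Inv M ((s.erase x₀).erase a), (numCycles (τ' * σ') : ℚ))
            + ∑ _b ∈ (s.erase x₀).erase a,
              ((∑ τ' ∈ Inv M ((s.erase x₀).erase a), (numCycles (τ' * σ') : ℚ))
                - 2 * (df k : ℚ)) := by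
            rw [hterm1, Finset.sum_congr rfl hterm2]
        _ = (2 * (k : ℚ) + 1) *
              (∑ τ' ∈ Inv M ((s.erase x₀).erase a), (numCycles (τ' * σ') : ℚ))
              - 4 * (k : ℚ) * (df k : ℚ) := by
            rw [Finset.sum_const, hcard_a a ha, nsmul_eq_mul]
            push_cast
            ring
    have hstep : ∀ a ∈ s.erase x₀,
        ∑ σ' ∈ Inv M ((s.erase x₀).erase a),
          ∑ τ ∈ Inv M s, (numCycles (τ * (σ' * Equiv.swap x₀ a)) : ℚ)
        = (2 * (k : ℚ) + 1) * ((df k : ℚ) ^ 2 *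
            (2 * harmonicNum (2 * k) - harmonicNum k + ((M : ℚ) - 2 * k)))
          - (df k : ℚ) * (4 * (k : ℚ) * (df k : ℚ)) := by
      intro a ha
      rw [Finset.sum_congr rfl (hinner a ha), Finset.sum_sub_distrib, ← Finset.mul_sum,
        (IH _ (hcard_a a ha)).2, Finset.sum_const, (IH _ (hcard_a a ha)).1, nsmul_eq_mul]
    calc ∑ σ ∈ Inv M s, ∑ τ ∈ Inv M s, (numCycles (τ * σ) : ℚ)
        = ∑ a ∈ s.erase x₀, ∑ σ' ∈ Inv M ((s.erase x₀).erase a),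
            ∑ τ ∈ Inv M s, (numCycles (τ * (σ' * Equiv.swap x₀ a)) : ℚ) :=
          sum_Inv_decomp hx₀ _
      _ = ∑ _a ∈ s.erase x₀,
            ((2 * (k : ℚ) + 1) * ((df k : ℚ) ^ 2 *
              (2 * harmonicNum (2 * k) - harmonicNum k + ((M : ℚ) - 2 * k)))
              - (df k : ℚ) * (4 * (k : ℚ) * (df k : ℚ))) :=
          Finset.sum_congr rfl hstep
      _ = (2 * (k : ℚ) + 1) *
            ((2 * (k : ℚ) + 1) * ((df k : ℚ) ^ 2 *
              (2 * harmonicNum (2 * k) - harmonicNum k + ((M : ℚ) - 2 * k)))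
              - (df k : ℚ) * (4 * (k : ℚ) * (df k : ℚ))) := by
          rw [Finset.sum_const, hersc, nsmul_eq_mul]
          push_cast
          ring
      _ = (df (k + 1) : ℚ) ^ 2 * (2 * harmonicNum (2 * (k + 1)) - harmonicNum (k + 1)
            + ((M : ℚ) - 2 * ((k + 1 : ℕ) : ℚ))) := by
          have hdf : (df (k + 1) : ℚ) = (2 * (k : ℚ) + 1) * (df k : ℚ) := by
            have h : df (k + 1) = (2 * k + 1) * df k := rfl
            rw [h]; push_cast; ring
          have h2k : 2 * (k + 1) = (2 * k + 1) + 1 := by ring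
          rw [hdf, h2k, harmonicNum_succ, harmonicNum_succ, harmonicNum_succ]
          have hne1 : (2 * (k : ℚ) + 1) ≠ 0 := by positivity
          have hne2 : ((2 * (k : ℕ) : ℚ) + 1 + 1) ≠ 0 := by positivity
          have hne3 : ((k : ℚ) + 1) ≠ 0 := by positivity
          push_cast
          field_simp
          ring

end FpfAux

/-- The expected number of cycles of the composition of two independent uniformly random
fixed-point-free involutions of `[2n]` is `2·H_{2n} − H_n`. -/
theorem expected_cycles_of_fpf_composition (n : ℕ) (hn : 1 ≤ n) :
    (∑ σ ∈ fpfInvolutions (2 * n), ∑ τ ∈ fpfInvolutions (2 * n),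
        (numCycles (τ * σ) : ℚ)) / ((fpfInvolutions (2 * n)).card ^ 2) =
    2 * harmonicNum (2 * n) - harmonicNum n := by
  have hfpf : fpfInvolutions (2 * n) = FpfAux.Inv (2 * n) Finset.univ := by
    ext σ
    simp only [fpfInvolutions, FpfAux.Inv, Finset.mem_filter, Finset.mem_univ, true_and]
    tauto
  obtain ⟨hc, hsum⟩ := FpfAux.main_ind (2 * n) n Finset.univ (by simp)
  rw [hfpf, hc, hsum]
  have hdf : ((FpfAux.df n : ℚ)) ≠ 0 := by exact_mod_cast (FpfAux.df_pos n).ne'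
  have hz : ((2 * n : ℕ) : ℚ) - 2 * (n : ℚ) = 0 := by push_cast; ring
  rw [hz, add_zero]
  field_simp
end
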